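/- arXiv:1810.07219 — 12 statements merged into one kernel-verified Lean document; each statement's English description precedes it below -/
import Mathlib

section
/- Let T₁,…,Tₙ be pairwise disjoint finite sets with |Tᵢ| = tᵢ. The number P(t₁,…,tₙ) of permutations σ of the union ⋃ᵢ Tᵢ such that σ(a) ∉ Tᵢ for every i and every a ∈ Tᵢ is positive if and only if 2·tₖ ≤ t₁ + t₂ + ⋯ + tₙ holds for every k. -/
/-- Number of generalized derangements of disjoint sets of sizes `t 0, …, t (n-1)`:
permutations of the disjoint union mapping no element into its own set. -/
def gdCount (n : ℕ) (t : Fin n → ℕ) : ℕ :=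
  Fintype.card {σ : Equiv.Perm (Σ i : Fin n, Fin (t i)) // ∀ x, (σ x).1 ≠ x.1}

/-- Number of anagrams without fixed letters of the word with `t i` copies of letter `i`:
letter assignments to positions with the right letter counts and no position keeping
its original letter. -/
def aflCount (n : ℕ) (t : Fin n → ℕ) : ℕ :=
  Fintype.card {w : (Σ i : Fin n, Fin (t i)) → Fin n //
    (∀ j, (Finset.univ.filter fun x => w x = j).card = t j) ∧ ∀ x, w x ≠ x.1}

lemma card_block (n : ℕ) (t : Fin n → ℕ) (k : Fin n) :
    (Finset.univ.filter fun x : Σ i : Fin n, Fin (t i) => x.1 = k).card = t k := by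
  have : (Finset.univ.filter fun x : Σ i : Fin n, Fin (t i) => x.1 = k)
      = Finset.sigma {k} (fun i => Finset.univ) := by
    ext x
    simp [Finset.mem_sigma, eq_comm]
  rw [this, Finset.card_sigma]
  simp

lemma card_nonblock (n : ℕ) (t : Fin n → ℕ) (k : Fin n) :
    (Finset.univ.filter fun x : Σ i : Fin n, Fin (t i) => x.1 ≠ k).card
      = (∑ i, t i) - t k := by
  have h := Finset.card_filter_add_card_filter_not
    (s := (Finset.univ : Finset (Σ i : Fin n, Fin (t i)))) (p := fun x => x.1 = k)
  rw [card_block] at h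
  simp only [ne_eq]
  have hcard : (Finset.univ : Finset (Σ i : Fin n, Fin (t i))).card = ∑ i, t i := by
    simp
  omega

theorem gd_pos_iff (n : ℕ) (t : Fin n → ℕ) :
    0 < gdCount n t ↔ ∀ k, 2 * t k ≤ ∑ i, t i := by
  classical
  constructor
  · intro h k
    rw [gdCount, Fintype.card_pos_iff] at h
    obtain ⟨σ, hσ⟩ := h
    -- the map j ↦ σ ⟨k, j⟩ is injective into the complement of the block k
    have hinj : Function.Injective
        (fun j : Fin (t k) => (⟨σ ⟨k, j⟩, hσ ⟨k, j⟩⟩ :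
          {x : Σ i : Fin n, Fin (t i) // x.1 ≠ k})) := by
      intro a b hab
      have : σ ⟨k, a⟩ = σ ⟨k, b⟩ := congrArg Subtype.val hab
      have := σ.injective this
      exact (Sigma.mk.inj_iff.mp this).2.eq
    have hle := Fintype.card_le_of_injective _ hinj
    rw [Fintype.card_fin, Fintype.card_subtype, card_nonblock] at hle
    have htk : t k ≤ ∑ i, t i := by
      calc t k = ∑ i ∈ {k}, t i := by simp
        _ ≤ ∑ i, t i := Finset.sum_le_sum_of_subset (Finset.subset_univ _)
    omega
  · intro hbal
    set s : (Σ i : Fin n, Fin (t i)) → Finset (Σ i : Fin n, Fin (t i)) :=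
      fun x => Finset.univ.filter fun y => y.1 ≠ x.1 with hs
    have hall : ∀ S : Finset (Σ i : Fin n, Fin (t i)), S.card ≤ (S.biUnion s).card := by
      intro S
      by_cases hmix : ∃ x ∈ S, ∃ y ∈ S, x.1 ≠ y.1
      · obtain ⟨x, hx, y, hy, hxy⟩ := hmix
        have : S.biUnion s = Finset.univ := by
          apply Finset.eq_univ_of_forall
          intro z
          rw [Finset.mem_biUnion]
          by_cases hz : z.1 = x.1
          · exact ⟨y, hy, by simp [hs, hz, hxy]⟩
          · exact ⟨x, hx, by simp [hs, hz]⟩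
        rw [this]
        exact Finset.card_le_univ S
      · push_neg at hmix
        rcases S.eq_empty_or_nonempty with hS | ⟨x₀, hx₀⟩
        · simp [hS]
        · set k := x₀.1 with hk
          have hsub : S ⊆ Finset.univ.filter fun x => x.1 = k := by
            intro y hy
            simp only [Finset.mem_filter, Finset.mem_univ, true_and]
            exact hmix y hy x₀ hx₀
          have h1 : S.card ≤ t k := by
            have := Finset.card_le_card hsub
            rwa [card_block] at this
          have h2 : s x₀ ⊆ S.biUnion s := Finset.subset_biUnion_of_mem s hx₀
          have h3 : (∑ i, t i) - t k ≤ (S.biUnion s).card := by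
            have := Finset.card_le_card h2
            rwa [hs, card_nonblock] at this
          have := hbal k
          omega
    obtain ⟨f, hfinj, hf⟩ := (Finset.all_card_le_biUnion_card_iff_exists_injective s).mp hall
    have hbij : Function.Bijective f := Finite.injective_iff_bijective.mp hfinj
    rw [gdCount, Fintype.card_pos_iff]
    refine ⟨⟨Equiv.ofBijective f hbij, ?_⟩⟩
    intro x
    have := hf x
    simp only [hs, Finset.mem_filter] at this
    exact this.2
end

section
/- For n ≥ 2, the number of generalized derangements P(2,1,1,…,1) (with one set of size 2 and n−2 sets of size 1, for a total of n elements) equals d(n) − 2·d(n−1) − d(n−2), where d(m) denotes the number of derangements of m elements. -/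
open Equiv Function

variable {m : ℕ}

/-- τ fixing none is an optionCongr -/
lemma opt_eq {γ : Type*} (τ : Perm (Option γ)) (h : τ none = none) :
    τ = Equiv.optionCongr (Equiv.removeNone τ) := by
  apply Equiv.ext
  intro x
  cases x with
  | none =>
      show τ none = _
      simp only [Equiv.optionCongr_apply, Option.map_none]
      exact h
  | some y =>
      have hne : τ (some y) ≠ none := fun hc => by
        have := τ.injective (hc.trans h.symm); simp at this
      obtain ⟨z, hz⟩ := Option.ne_none_iff_exists'.mp hne
      have := Equiv.removeNone_some τ ⟨z, hz⟩
      simp [← this]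

def Phi (g : Perm (Option (Fin m))) : Perm (Option (Option (Fin m))) :=
  Equiv.swap none (some none) * g.optionCongr

lemma Phi_injective : Function.Injective (Phi (m := m)) := by
  intro g g' h
  have h2 : g.optionCongr = g'.optionCongr := mul_left_cancel h
  have := congrArg Equiv.removeNone h2
  simpa [Equiv.removeNone_optionCongr] using this

lemma Phi_none (g : Perm (Option (Fin m))) : Phi g none = some none := by
  show (Equiv.swap none (some none)) (g.optionCongr none) = some none
  simp [Equiv.swap_apply_left]

lemma Phi_der (g : Perm (Option (Fin m))) (hg : ∀ y, g y = y → y = none) :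
    ∀ x, Phi g x ≠ x := by
  intro x
  rcases x with _ | (_ | y)
  · show (Equiv.swap none (some none)) (g.optionCongr none) ≠ none
    simp [Equiv.swap_apply_left]
  · show (Equiv.swap none (some none)) (g.optionCongr (some none)) ≠ some none
    rcases hgn : g none with _ | z
    · simp [hgn, Equiv.swap_apply_left]
    · simp only [Equiv.optionCongr_apply, Option.map_some, hgn]
      rw [Equiv.swap_apply_of_ne_of_ne (by simp) (by simp)]
      simp
  · show (Equiv.swap none (some none)) (g.optionCongr (some (some y))) ≠ some (some y)
    rcases hgy : g (some y) with _ | z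
    · simp [hgy, Equiv.swap_apply_left]
    · simp only [Equiv.optionCongr_apply, Option.map_some, hgy]
      rw [Equiv.swap_apply_of_ne_of_ne (by simp) (by simp)]
      simp only [ne_eq, Option.some.injEq]
      intro hc
      exact absurd (hg (some y) (by rw [hgy, hc])) (by simp)

lemma cardA :
    Fintype.card {σ : Perm (Option (Option (Fin m))) //
        (∀ x, σ x ≠ x) ∧ σ none = some none} =
      Fintype.card {g : Perm (Option (Fin m)) // ∀ y, g y = y → y = none} := by
  apply Fintype.card_congr
  symm
  refine Equiv.ofBijective
    (fun g => ⟨Phi g.1, Phi_der g.1 g.2, Phi_none g.1⟩) ⟨?_, ?_⟩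
  · rintro ⟨g, hg⟩ ⟨g', hg'⟩ h
    have : Phi g = Phi g' := congrArg Subtype.val h
    exact Subtype.ext (Phi_injective this)
  · rintro ⟨σ, hder, hval⟩
    set τ := Equiv.swap (none : Option (Option (Fin m))) (some none) * σ with hτ
    have hτn : τ none = none := by
      simp [hτ, hval, Equiv.swap_apply_right]
    set g := Equiv.removeNone τ with hg
    have hτg : τ = g.optionCongr := opt_eq τ hτn
    have hστ : σ = Phi g := by
      rw [Phi, ← hτg, hτ, ← mul_assoc, Equiv.swap_mul_self, one_mul]
    refine ⟨⟨g, ?_⟩, by simp [← hστ]⟩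
    intro y hy
    by_contra hne
    have : σ (some y) = some y := by
      rw [hστ]
      show (Equiv.swap none (some none)) (g.optionCongr (some y)) = some y
      rw [Equiv.optionCongr_apply, Option.map_some, hy,
        Equiv.swap_apply_of_ne_of_ne (by simp) (by simpa using hne)]
    exact hder _ this

lemma cardC :
    Fintype.card {σ : Perm (Option (Option (Fin m))) //
        (∀ x, σ x ≠ x) ∧ σ none = some none ∧ σ (some none) = none} =
      Fintype.card {f : Perm (Fin m) // ∀ x, f x ≠ x} := by
  apply Fintype.card_congr
  symm
  have hb : ∀ f : Perm (Fin m), Phi f.optionCongr (some none) = none := by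
    intro f
    show (Equiv.swap none (some none)) (f.optionCongr.optionCongr (some none)) = none
    simp [Equiv.swap_apply_right]
  have hder : ∀ (f : Perm (Fin m)), (∀ x, f x ≠ x) → ∀ x, Phi f.optionCongr x ≠ x := by
    intro f hf
    apply Phi_der
    intro y hy
    rcases y with _ | z
    · rfl
    · simp only [Equiv.optionCongr_apply, Option.map_some, Option.some.injEq] at hy
      exact absurd hy (hf z)
  refine Equiv.ofBijective
    (fun f => ⟨Phi f.1.optionCongr, hder f.1 f.2, Phi_none _, hb f.1⟩) ⟨?_, ?_⟩
  · rintro ⟨f, hf⟩ ⟨f', hf'⟩ h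
    have h1 : Phi f.optionCongr = Phi f'.optionCongr := congrArg Subtype.val h
    have h2 := Phi_injective h1
    have := congrArg Equiv.removeNone h2
    simpa [Equiv.removeNone_optionCongr] using this
  · rintro ⟨σ, hd, hab, hba⟩
    set τ := Equiv.swap (none : Option (Option (Fin m))) (some none) * σ with hτ
    have hτn : τ none = none := by
      simp [hτ, hab, Equiv.swap_apply_right]
    set g := Equiv.removeNone τ with hg
    have hτg : τ = g.optionCongr := opt_eq τ hτn
    have hgn : g none = none := by
      have h1 : τ (some none) = some none := by
        simp [hτ, hba, Equiv.swap_apply_left]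
      rw [hτg] at h1
      simpa using h1
    set f := Equiv.removeNone g with hf
    have hgf : g = f.optionCongr := opt_eq g hgn
    have hστ : σ = Phi g := by
      rw [Phi, ← hτg, hτ, ← mul_assoc, Equiv.swap_mul_self, one_mul]
    refine ⟨⟨f, ?_⟩, by simp [← hgf, ← hστ]⟩
    intro y hy
    have : σ (some (some y)) = some (some y) := by
      rw [hστ]
      show (Equiv.swap none (some none)) (g.optionCongr (some (some y))) = some (some y)
      rw [Equiv.optionCongr_apply, Option.map_some, hgf]
      simp only [Equiv.optionCongr_apply, Option.map_some, hy]
      rw [Equiv.swap_apply_of_ne_of_ne (by simp) (by simp)]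
    exact hd _ this

lemma cardFix :
    Fintype.card {g : Perm (Option (Fin m)) // ∀ y, g y = y → y = none} =
      numDerangements m + numDerangements (m + 1) := by
  have e1 : {g : Perm (Option (Fin m)) // ∀ y, g y = y → y = none} ≃
      {f : Perm (Option (Fin m)) // fixedPoints f ⊆ {none}} :=
    Equiv.subtypeEquivRight (fun g => by
      constructor
      · intro h y hy
        exact h y hy
      · intro h y hy
        exact h hy)
  have e2 := derangements.atMostOneFixedPointEquivSum_derangements
    (none : Option (Fin m))
  have := Fintype.card_congr (e1.trans e2)
  rw [this, Fintype.card_sum, card_derangements_eq_numDerangements,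
    card_derangements_eq_numDerangements]
  congr 1
  · congr 1
    rw [Fintype.card_compl_set]
    simp
  · congr 1
    simp

lemma card_split {γ : Type*} [Fintype γ] (p q : γ → Prop) [DecidablePred p] [DecidablePred q] :
    Fintype.card {x // p x} =
      Fintype.card {x // p x ∧ q x} + Fintype.card {x // p x ∧ ¬ q x} := by
  simp only [Fintype.card_subtype]
  rw [← Finset.filter_filter, ← Finset.filter_filter]
  exact (Finset.card_filter_add_card_filter_not (s := Finset.univ.filter p)
    (p := q)).symm

lemma card_iff {γ : Type*} [Fintype γ] {p q : γ → Prop} [DecidablePred p] [DecidablePred q]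
    (h : ∀ x, p x ↔ q x) : Fintype.card {x // p x} = Fintype.card {x // q x} :=
  Fintype.card_congr (Equiv.subtypeEquivRight h)

lemma cardB :
    Fintype.card {σ : Perm (Option (Option (Fin m))) //
        (∀ x, σ x ≠ x) ∧ σ (some none) = none} =
      Fintype.card {σ : Perm (Option (Option (Fin m))) //
        (∀ x, σ x ≠ x) ∧ σ none = some none} := by
  apply Fintype.card_congr
  refine Equiv.subtypeEquiv (Equiv.inv (Perm _)) (fun σ => ?_)
  simp only [Equiv.inv_apply]
  constructor
  · rintro ⟨hd, hv⟩
    refine ⟨fun x hx => hd x ?_, ?_⟩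
    · have : σ (σ⁻¹ x) = σ x := congrArg _ hx
      rwa [Equiv.Perm.coe_inv, Equiv.apply_symm_apply, eq_comm] at this
    · rw [Equiv.Perm.inv_eq_iff_eq, hv]
  · rintro ⟨hd, hv⟩
    rw [Equiv.Perm.inv_eq_iff_eq] at hv
    refine ⟨fun x hx => hd x ?_, hv.symm⟩
    have : σ⁻¹ (σ x) = σ⁻¹ x := congrArg _ hx
    rwa [Equiv.Perm.coe_inv, Equiv.symm_apply_apply, eq_comm] at this

lemma cardDall :
    Fintype.card {σ : Perm (Option (Option (Fin m))) // ∀ x, σ x ≠ x} =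
      numDerangements (m + 2) := by
  have h1 : Fintype.card {σ : Perm (Option (Option (Fin m))) // ∀ x, σ x ≠ x} =
      Fintype.card (derangements (Option (Option (Fin m)))) :=
    Fintype.card_congr (Equiv.subtypeEquivRight
      (p := fun σ : Perm (Option (Option (Fin m))) => ∀ x, σ x ≠ x)
      (q := (· ∈ derangements (Option (Option (Fin m))))) (fun σ => Iff.rfl))
  rw [h1, card_derangements_eq_numDerangements]
  congr 1
  simp

lemma cardFinDer :
    Fintype.card {f : Perm (Fin m) // ∀ x, f x ≠ x} = numDerangements m := by
  have h1 : Fintype.card {f : Perm (Fin m) // ∀ x, f x ≠ x} =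
      Fintype.card (derangements (Fin m)) :=
    Fintype.card_congr (Equiv.subtypeEquivRight
      (p := fun f : Perm (Fin m) => ∀ x, f x ≠ x)
      (q := (· ∈ derangements (Fin m))) (fun σ => Iff.rfl))
  rw [h1, card_derangements_eq_numDerangements]
  congr 1
  simp

lemma mainO2 :
    (Fintype.card {σ : Perm (Option (Option (Fin m))) //
        (∀ x, σ x ≠ x) ∧ σ none ≠ some none ∧ σ (some none) ≠ none} : ℤ) =
      numDerangements (m + 2) - 2 * numDerangements (m + 1) - numDerangements m := by
  have s1 := card_split (fun σ : Perm (Option (Option (Fin m))) => ∀ x, σ x ≠ x)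
    (fun σ => σ none = some none)
  have s2 := card_split (fun σ : Perm (Option (Option (Fin m))) =>
      (∀ x, σ x ≠ x) ∧ ¬ σ none = some none)
    (fun σ => σ (some none) = none)
  have s3 := card_split (fun σ : Perm (Option (Option (Fin m))) =>
      (∀ x, σ x ≠ x) ∧ σ (some none) = none)
    (fun σ => σ none = some none)
  have hA : Fintype.card {σ : Perm (Option (Option (Fin m))) //
      (∀ x, σ x ≠ x) ∧ σ none = some none} =
      numDerangements (m + 1) + numDerangements m := by
    rw [cardA.trans cardFix]; omega
  have hB : Fintype.card {σ : Perm (Option (Option (Fin m))) //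
      (∀ x, σ x ≠ x) ∧ σ (some none) = none} =
      numDerangements (m + 1) + numDerangements m := by
    rw [cardB.trans (cardA.trans cardFix)]; omega
  have hC : Fintype.card {σ : Perm (Option (Option (Fin m))) //
      ((∀ x, σ x ≠ x) ∧ σ (some none) = none) ∧ σ none = some none} =
      numDerangements m := by
    rw [card_iff (q := fun σ : Perm (Option (Option (Fin m))) =>
      (∀ x, σ x ≠ x) ∧ σ none = some none ∧ σ (some none) = none)
      (fun σ => ⟨fun ⟨⟨hd, hr⟩, hq⟩ => ⟨hd, hq, hr⟩, fun ⟨hd, hq, hr⟩ => ⟨⟨hd, hr⟩, hq⟩⟩)]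
    rw [cardC, cardFinDer]
  have h2 : Fintype.card {σ : Perm (Option (Option (Fin m))) //
      ((∀ x, σ x ≠ x) ∧ σ (some none) = none) ∧ ¬ σ none = some none} =
      Fintype.card {σ : Perm (Option (Option (Fin m))) //
      ((∀ x, σ x ≠ x) ∧ ¬ σ none = some none) ∧ σ (some none) = none} :=
    card_iff (fun σ => ⟨fun ⟨⟨hd, hr⟩, hq⟩ => ⟨⟨hd, hq⟩, hr⟩, fun ⟨⟨hd, hq⟩, hr⟩ => ⟨⟨hd, hr⟩, hq⟩⟩)
  have htgt : Fintype.card {σ : Perm (Option (Option (Fin m))) //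
      (∀ x, σ x ≠ x) ∧ σ none ≠ some none ∧ σ (some none) ≠ none} =
      Fintype.card {σ : Perm (Option (Option (Fin m))) //
      ((∀ x, σ x ≠ x) ∧ ¬ σ none = some none) ∧ ¬ σ (some none) = none} :=
    card_iff (fun σ => ⟨fun ⟨hd, hq, hr⟩ => ⟨⟨hd, hq⟩, hr⟩, fun ⟨⟨hd, hq⟩, hr⟩ => ⟨hd, hq, hr⟩⟩)
  have hDall := cardDall (m := m)
  rw [htgt]
  omega

def tfun (m : ℕ) : Fin (m + 1) → ℕ := fun i => if i = ⟨0, Nat.succ_pos m⟩ then 2 else 1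

lemma tfun_zero (m : ℕ) : tfun m ⟨0, Nat.succ_pos m⟩ = 2 := if_pos rfl

lemma tfun_succ (m : ℕ) (k : Fin m) : tfun m k.succ = 1 :=
  if_neg (by simp [Fin.ext_iff])

def pifun (m : ℕ) : Option (Option (Fin m)) → Fin (m + 1)
  | none => ⟨0, Nat.succ_pos m⟩
  | some none => ⟨0, Nat.succ_pos m⟩
  | some (some k) => k.succ

def gfun (m : ℕ) : Option (Option (Fin m)) → Σ i : Fin (m + 1), Fin (tfun m i)
  | none => ⟨⟨0, Nat.succ_pos m⟩, Fin.cast (tfun_zero m).symm (0 : Fin 2)⟩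
  | some none => ⟨⟨0, Nat.succ_pos m⟩, Fin.cast (tfun_zero m).symm (1 : Fin 2)⟩
  | some (some k) => ⟨k.succ, Fin.cast (tfun_succ m k).symm (0 : Fin 1)⟩

lemma gfun_fst (m : ℕ) (z : Option (Option (Fin m))) : (gfun m z).1 = pifun m z := by
  rcases z with _ | (_ | k) <;> rfl

lemma gfun_bij (m : ℕ) : Function.Bijective (gfun m) := by
  constructor
  · intro z w h
    have h1 := congrArg Sigma.fst h
    have h2 := congrArg (fun p : Σ i : Fin (m + 1), Fin (tfun m i) => p.2.val) h
    rcases z with _ | (_ | k) <;> rcases w with _ | (_ | l)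
    · rfl
    · exact (Nat.zero_ne_one (h2 : (0:ℕ) = 1)).elim
    · simp [gfun, Fin.ext_iff] at h1
    · exact (Nat.one_ne_zero (h2 : (1:ℕ) = 0)).elim
    · rfl
    · simp [gfun, Fin.ext_iff] at h1
    · simp [gfun, Fin.ext_iff] at h1
    · simp [gfun, Fin.ext_iff] at h1
    · simp only [gfun] at h1
      rw [Fin.succ_injective m h1]
  · rintro ⟨i, j⟩
    rcases i with ⟨iv, hiv⟩
    rcases iv with _ | iv
    · -- i = 0, j : Fin 2 (up to cast)
      have hj : j = Fin.cast (tfun_zero m).symm (Fin.cast (tfun_zero m) j) := by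
        apply Fin.ext; rfl
      have h01 : (Fin.cast (tfun_zero m) j).val = 0 ∨ (Fin.cast (tfun_zero m) j).val = 1 := by
        have := (Fin.cast (tfun_zero m) j).isLt
        omega
      rcases h01 with h0 | h0
      · refine ⟨none, ?_⟩
        rw [hj]
        show (⟨⟨0, _⟩, Fin.cast (tfun_zero m).symm (0 : Fin 2)⟩ :
          Σ i : Fin (m + 1), Fin (tfun m i)) = _
        congr 1
        apply Fin.ext
        exact h0.symm
      · refine ⟨some none, ?_⟩
        rw [hj]
        show (⟨⟨0, _⟩, Fin.cast (tfun_zero m).symm (1 : Fin 2)⟩ :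
          Σ i : Fin (m + 1), Fin (tfun m i)) = _
        congr 1
        apply Fin.ext
        exact h0.symm
    · -- i = iv + 1
      have hk : iv < m := by omega
      refine ⟨some (some ⟨iv, hk⟩), ?_⟩
      have hj : j = Fin.cast (tfun_succ m ⟨iv, hk⟩).symm (0 : Fin 1) := by
        apply Fin.ext
        have h1 : tfun m ⟨iv + 1, hiv⟩ = 1 := tfun_succ m ⟨iv, hk⟩
        have h2 := j.isLt
        simp only [Fin.coe_cast, Fin.val_zero]
        omega
      rw [hj]
      rfl

lemma pi_cond (m : ℕ) (τ : Perm (Option (Option (Fin m)))) :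
    (∀ z, pifun m (τ z) ≠ pifun m z) ↔
      ((∀ z, τ z ≠ z) ∧ τ none ≠ some none ∧ τ (some none) ≠ none) := by
  constructor
  · intro h
    refine ⟨fun z hz => h z (by rw [hz]), fun hc => h none (by rw [hc]; rfl),
      fun hc => h (some none) (by rw [hc]; rfl)⟩
  · rintro ⟨hd, h1, h2⟩ z
    rcases z with _ | (_ | k)
    · rcases hτ : τ none with _ | (_ | l)
      · exact absurd hτ (hd none)
      · exact absurd hτ h1
      · simp [pifun, Fin.ext_iff]
    · rcases hτ : τ (some none) with _ | (_ | l)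
      · exact absurd hτ h2
      · exact absurd hτ (hd (some none))
      · simp [pifun, Fin.ext_iff]
    · rcases hτ : τ (some (some k)) with _ | (_ | l)
      · simp [pifun, Fin.ext_iff]
      · simp [pifun, Fin.ext_iff]
      · simp only [pifun, ne_eq]
        intro hc
        have := Fin.succ_injective m hc
        subst this
        exact hd _ hτ

lemma transport (m : ℕ) :
    gdCount (m + 1) (tfun m) =
      Fintype.card {σ : Perm (Option (Option (Fin m))) //
        (∀ x, σ x ≠ x) ∧ σ none ≠ some none ∧ σ (some none) ≠ none} := by
  set e := Equiv.ofBijective _ (gfun_bij m) with he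
  have eapp : ∀ w, e w = gfun m w := fun w => rfl
  show Fintype.card
      {σ : Perm (Σ i : Fin (m + 1), Fin (tfun m i)) // ∀ x, (σ x).1 ≠ x.1} = _
  apply Fintype.card_congr
  refine (Equiv.subtypeEquiv e.permCongr (fun τ => ?_)).symm
  have key : (∀ x, ((e.permCongr τ) x).1 ≠ x.1) ↔ (∀ z, pifun m (τ z) ≠ pifun m z) := by
    constructor
    · intro h z
      have := h (e z)
      rwa [Equiv.permCongr_apply, e.symm_apply_apply, eapp, eapp, gfun_fst, gfun_fst] at this
    · intro h x
      rw [Equiv.permCongr_apply]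
      have hx : e (e.symm x) = x := e.apply_symm_apply x
      conv_rhs => rw [← hx]
      rw [eapp, eapp, gfun_fst, gfun_fst]
      exact h _
  rw [key, pi_cond]

theorem gd_two_ones (n : ℕ) (hn : 2 ≤ n) :
    (gdCount (n - 1) (fun i => if i = ⟨0, by omega⟩ then 2 else 1) : ℤ) =
      numDerangements n - 2 * numDerangements (n - 1) - numDerangements (n - 2) := by
  obtain ⟨m, rfl⟩ : ∃ m, n = m + 2 := ⟨n - 2, by omega⟩
  show ((gdCount (m + 1) (tfun m) : ℕ) : ℤ) =
      numDerangements (m + 2) - 2 * numDerangements (m + 1) - numDerangements m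
  rw [transport m]
  exact mainO2
end

section
/- If t₁ = t₂ + t₃ + ⋯ + tₙ, then the number of generalized derangements satisfies P(t₁,t₂,…,tₙ) = (t₁!)². -/
section Aux

variable {α : Type*} [Fintype α] [DecidableEq α] (p : α → Prop) [DecidablePred p]

lemma aux_forward (hc : Fintype.card {x // p x} = Fintype.card {x // ¬ p x})
    (σ : Equiv.Perm α) (hσ : ∀ x, p x → ¬ p (σ x)) : ∀ x, ¬ p x → p (σ x) := by
  set F : {x // p x} → {x // ¬ p x} := fun a => ⟨σ a, hσ a a.2⟩ with hF
  have hinj : Function.Injective F := by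
    intro a b hab
    have : σ a = σ b := congrArg Subtype.val hab
    exact Subtype.ext (σ.injective this)
  have hbij : Function.Bijective F := (Fintype.bijective_iff_injective_and_card F).mpr ⟨hinj, hc⟩
  intro x hx
  by_contra hns
  obtain ⟨a, ha⟩ := hbij.surjective ⟨σ x, hns⟩
  have : σ a.1 = σ x := congrArg Subtype.val ha
  have : a.1 = x := σ.injective this
  exact hx (this ▸ a.2)

/-- Permutations swapping `{x // p x}` and `{x // ¬ p x}` correspond to pairs of bijections. -/
def swapEquiv : {σ : Equiv.Perm α // ∀ x, p (σ x) ↔ ¬ p x} ≃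
    ({x // p x} ≃ {x // ¬ p x}) × ({x // ¬ p x} ≃ {x // p x}) where
  toFun σ :=
    have hσ := σ.2
    have hσ' : ∀ x, p (σ.1.symm x) ↔ ¬ p x := by
      intro x
      have := hσ (σ.1.symm x)
      rw [Equiv.apply_symm_apply] at this
      by_cases hx : p x <;> by_cases hy : p (σ.1.symm x) <;> tauto
    ⟨{ toFun := fun a => ⟨σ.1 a, fun hp => (hσ a.1).mp hp a.2⟩
       invFun := fun b => ⟨σ.1.symm b, (hσ' b.1).mpr b.2⟩
       left_inv := fun a => Subtype.ext (σ.1.symm_apply_apply a.1)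
       right_inv := fun b => Subtype.ext (σ.1.apply_symm_apply b.1) },
     { toFun := fun b => ⟨σ.1 b, (hσ b.1).mpr b.2⟩
       invFun := fun a => ⟨σ.1.symm a, fun hp => (hσ' a.1).mp hp a.2⟩
       left_inv := fun b => Subtype.ext (σ.1.symm_apply_apply b.1)
       right_inv := fun a => Subtype.ext (σ.1.apply_symm_apply a.1) }⟩
  invFun fg :=
    ⟨(Equiv.sumCompl p).symm.trans ((Equiv.sumCongr fg.1 fg.2).trans
        ((Equiv.sumComm _ _).trans (Equiv.sumCompl p))), by
      intro x
      by_cases hx : p x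
      · rw [Equiv.trans_apply, Equiv.sumCompl_symm_apply_of_pos (p := p) (a := x) hx]
        simp [hx, (fg.1 ⟨x, hx⟩).2]
      · rw [Equiv.trans_apply, Equiv.sumCompl_symm_apply_of_neg (p := p) (a := x) hx]
        simp [hx, (fg.2 ⟨x, hx⟩).2]⟩
  left_inv σ := by
    apply Subtype.ext
    apply Equiv.ext
    intro x
    by_cases hx : p x
    · rw [Equiv.trans_apply, Equiv.sumCompl_symm_apply_of_pos (p := p) (a := x) hx]; simp
    · rw [Equiv.trans_apply, Equiv.sumCompl_symm_apply_of_neg (p := p) (a := x) hx]; simp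
  right_inv fg := by
    refine Prod.ext ?_ ?_
    · apply Equiv.ext
      intro a
      apply Subtype.ext
      show ((Equiv.sumCompl p).symm.trans _) a.1 = _
      rw [Equiv.trans_apply, Equiv.sumCompl_symm_apply_of_pos (p := p) (a := a.1) a.2]
      simp
    · apply Equiv.ext
      intro b
      apply Subtype.ext
      show ((Equiv.sumCompl p).symm.trans _) b.1 = _
      rw [Equiv.trans_apply, Equiv.sumCompl_symm_apply_of_neg (p := p) (a := b.1) b.2]
      simp

end Aux

theorem gd_half_sum (n : ℕ) (t : Fin (n + 1) → ℕ) (h : t 0 = ∑ i : Fin n, t i.succ) :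
    gdCount (n + 1) t = Nat.factorial (t 0) ^ 2 := by
  classical
  set α := (Σ i : Fin (n + 1), Fin (t i)) with hα
  set p : α → Prop := fun x => x.1 = 0 with hp
  -- card of A
  have eA : {x : α // p x} ≃ Fin (t 0) :=
    { toFun := fun x => Fin.cast (congrArg t x.2) x.1.2
      invFun := fun j => ⟨⟨0, j⟩, rfl⟩
      left_inv := by
        rintro ⟨⟨i, j⟩, hij⟩
        have hi : i = 0 := hij
        subst hi
        rfl
      right_inv := fun j => rfl }
  have hA : Fintype.card {x : α // p x} = t 0 := by
    rw [Fintype.card_congr eA, Fintype.card_fin]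
  have hαcard : Fintype.card α = t 0 + t 0 := by
    simp only [hα, Fintype.card_sigma, Fintype.card_fin]
    rw [Fin.sum_univ_succ, ← h]
  have hB : Fintype.card {x : α // ¬ p x} = t 0 := by
    rw [Fintype.card_subtype_compl, hA, hαcard]
    omega
  have hc : Fintype.card {x : α // p x} = Fintype.card {x : α // ¬ p x} := by rw [hA, hB]
  -- condition equivalence
  have key : ∀ σ : Equiv.Perm α, (∀ x, (σ x).1 ≠ x.1) ↔ (∀ x, p (σ x) ↔ ¬ p x) := by
    intro σ
    constructor
    · intro hcond
      have h1 : ∀ x, p x → ¬ p (σ x) := by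
        intro x hx hsx
        exact hcond x (hsx.trans hx.symm)
      have h2 := aux_forward p hc σ h1
      intro x
      constructor
      · intro hsx
        intro hx
        exact h1 x hx hsx
      · exact h2 x
    · intro hcond x hx
      by_cases hpx : p x
      · exact ((hcond x).mp (hx.trans hpx) hpx)
      · exact hpx (hx.symm.trans ((hcond x).mpr hpx))
  have step1 : gdCount (n + 1) t =
      Fintype.card {σ : Equiv.Perm α // ∀ x, p (σ x) ↔ ¬ p x} := by
    unfold gdCount
    exact Fintype.card_congr (Equiv.subtypeEquivRight key)
  rw [step1, Fintype.card_congr (swapEquiv p), Fintype.card_prod]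
  have e : {x : α // p x} ≃ {x : α // ¬ p x} := Fintype.equivOfCardEq hc
  rw [Fintype.card_equiv e, Fintype.card_equiv e.symm, hA, hB, sq]
end

section
/- If t₁ = t₂ + t₃ + ⋯ + tₙ, then the number of anagrams without fixed letters satisfies P'(t₁,t₂,…,tₙ) = t₁!/(t₂!·t₃!⋯tₙ!), the multinomial coefficient (t₁ choose t₂,t₃,…,tₙ). -/
open Finset

section Fiber

variable {ι : Type*} {β : ι → Type*}

private lemma cast_snd_eq {γ : ι → Type*} {x : Σ i, γ i} {i : ι} (p : x.1 = i) {z : γ i} :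
    cast (congrArg γ p) x.2 = z ↔ x = ⟨i, z⟩ := by
  cases x
  subst p
  simp

private lemma sigma_eta {γ : ι → Type*} {x : Σ i, γ i} {i : ι} (p : x.1 = i) :
    (⟨i, cast (congrArg γ p) x.2⟩ : Σ i, γ i) = x := by
  cases x; subst p; simp

/-- Extract a family of fiberwise equivalences from a first-component-preserving
equivalence of sigma types. -/
def fiberFamily {γ : ι → Type*} (e : (Σ i, γ i) ≃ Σ i, β i) (h : ∀ x, (e x).1 = x.1)
    (i : ι) : γ i ≃ β i where
  toFun a := cast (congrArg β (h ⟨i, a⟩)) (e ⟨i, a⟩).2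
  invFun b := cast (congrArg γ (show (e.symm ⟨i, b⟩).1 = i by
      have h1 := h (e.symm ⟨i, b⟩)
      rw [Equiv.apply_symm_apply] at h1
      exact h1.symm)) (e.symm ⟨i, b⟩).2
  left_inv a := by
    beta_reduce
    have hs : (e.symm ⟨i, cast (congrArg β (h ⟨i, a⟩)) (e ⟨i, a⟩).snd⟩).1 = i := by
      have h1 := h (e.symm ⟨i, cast (congrArg β (h ⟨i, a⟩)) (e ⟨i, a⟩).snd⟩)
      rw [Equiv.apply_symm_apply] at h1
      exact h1.symm
    rw [cast_snd_eq (p := hs), Equiv.symm_apply_eq]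
    exact sigma_eta (h ⟨i, a⟩)
  right_inv b := by
    beta_reduce
    have hs : (e.symm ⟨i, b⟩).1 = i := by
      have h1 := h (e.symm ⟨i, b⟩)
      rw [Equiv.apply_symm_apply] at h1
      exact h1.symm
    rw [cast_snd_eq (p := h _), ← Equiv.eq_symm_apply]
    exact sigma_eta hs

lemma sigmaCongrRight_fiberFamily {γ : ι → Type*} (e : (Σ i, γ i) ≃ Σ i, β i)
    (h : ∀ x, (e x).1 = x.1) :
    Equiv.sigmaCongrRight (fiberFamily e h) = e := by
  apply Equiv.ext
  rintro ⟨i, a⟩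
  exact sigma_eta (h ⟨i, a⟩)

variable {α : Type*} (v : α → ι)

/-- Package a family of fiber equivalences into an equivalence `α ≃ Σ i, β i` lying over `v`. -/
def psiMap (F : ∀ i, {a // v a = i} ≃ β i) :
    {e : α ≃ Σ i, β i // ∀ a, (e a).1 = v a} :=
  ⟨(Equiv.sigmaFiberEquiv v).symm.trans (Equiv.sigmaCongrRight F), fun _ => rfl⟩

lemma psiMap_bijective : Function.Bijective (psiMap v (β := β)) := by
  constructor
  · intro F G hFG
    have hFG' : (Equiv.sigmaFiberEquiv v).symm.trans (Equiv.sigmaCongrRight F) =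
        (Equiv.sigmaFiberEquiv v).symm.trans (Equiv.sigmaCongrRight G) :=
      congrArg Subtype.val hFG
    funext i
    apply Equiv.ext
    rintro ⟨a, rfl⟩
    have := congrArg (fun E : α ≃ Σ i, β i => E a) hFG'
    simpa [psiMap, Equiv.sigmaFiberEquiv, Equiv.sigmaCongrRight] using this
  · rintro ⟨e, he⟩
    set e' : (Σ i, {a // v a = i}) ≃ Σ i, β i := (Equiv.sigmaFiberEquiv v).trans e with he'
    have h' : ∀ x, (e' x).1 = x.1 := by
      rintro ⟨i, a, rfl⟩
      exact he a
    refine ⟨fiberFamily e' h', ?_⟩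
    apply Subtype.ext
    show (Equiv.sigmaFiberEquiv v).symm.trans (Equiv.sigmaCongrRight (fiberFamily e' h')) = e
    rw [sigmaCongrRight_fiberFamily, he', ← Equiv.trans_assoc, Equiv.symm_trans_self,
      Equiv.refl_trans]

lemma card_fiber [Fintype α] [DecidableEq α] [Fintype ι] [DecidableEq ι]
    [∀ i, Fintype (β i)] [∀ i, DecidableEq (β i)] :
    Fintype.card {e : α ≃ Σ i, β i // ∀ a, (e a).1 = v a} =
      ∏ i, Fintype.card ({a // v a = i} ≃ β i) := by
  rw [← Fintype.card_pi, Fintype.card_of_bijective (psiMap_bijective v (β := β))]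

end Fiber
lemma prod_card_equiv {α : Type*} [Fintype α] [DecidableEq α] {n : ℕ} (c : Fin n → ℕ)
    (v : α → Fin n) :
    (∏ j, Fintype.card ({a // v a = j} ≃ Fin (c j))) =
      if (∀ j, (univ.filter fun a => v a = j).card = c j) then ∏ j, (c j).factorial else 0 := by
  by_cases hv : ∀ j, (univ.filter fun a => v a = j).card = c j
  · rw [if_pos hv]
    refine Finset.prod_congr rfl fun j _ => ?_
    have hc : Fintype.card {a // v a = j} = Fintype.card (Fin (c j)) := by
      rw [Fintype.card_subtype, Fintype.card_fin, hv j]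
    rw [Fintype.card_equiv (Fintype.equivOfCardEq hc), Fintype.card_subtype, hv j]
  · rw [if_neg hv]
    push_neg at hv
    obtain ⟨j, hj⟩ := hv
    refine Finset.prod_eq_zero (Finset.mem_univ j) ?_
    rw [Fintype.card_eq_zero_iff]
    constructor
    intro e
    exact hj (by rw [← Fintype.card_subtype (p := fun a => v a = j),
      Fintype.card_congr e, Fintype.card_fin])

lemma card_count {α : Type*} [Fintype α] [DecidableEq α] {n : ℕ} (c : Fin n → ℕ)
    (hα : Fintype.card α = ∑ j, c j) :
    Fintype.card {v : α → Fin n // ∀ j, (univ.filter fun a => v a = j).card = c j} =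
      Nat.multinomial univ c := by
  have key : (∑ j, c j).factorial =
      Fintype.card {v : α → Fin n // ∀ j, (univ.filter fun a => v a = j).card = c j} *
        ∏ j, (c j).factorial := by
    have hev : Fintype.card α = Fintype.card (Σ j : Fin n, Fin (c j)) := by
      simp [hα]
    have h1 : Fintype.card (α ≃ Σ j : Fin n, Fin (c j)) = (∑ j, c j).factorial := by
      rw [Fintype.card_equiv (Fintype.equivOfCardEq hev), hα]
    rw [← h1,
      Fintype.card_congr (Equiv.sigmaFiberEquiv
        (fun (e : α ≃ Σ j : Fin n, Fin (c j)) => (fun a => (e a).1 : α → Fin n))).symm,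
      Fintype.card_sigma]
    have h2 : ∀ v : α → Fin n,
        Fintype.card {e : α ≃ Σ j : Fin n, Fin (c j) // (fun a => (e a).1) = v} =
          if (∀ j, (univ.filter fun a => v a = j).card = c j) then ∏ j, (c j).factorial else 0 := by
      intro v
      rw [Fintype.card_congr (Equiv.subtypeEquivRight
        (fun e : α ≃ Σ j : Fin n, Fin (c j) => funext_iff)),
        card_fiber v (β := fun j => Fin (c j)), prod_card_equiv]
    rw [Finset.sum_congr rfl fun v _ => h2 v, ← Finset.sum_filter, Finset.sum_const,
      smul_eq_mul, Fintype.card_subtype]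
  have hpos : 0 < ∏ j, (c j).factorial := Finset.prod_pos fun j _ => Nat.factorial_pos _
  have hspec := Nat.multinomial_spec univ c
  -- hspec : (∏ i ∈ univ, (c i)!) * multinomial univ c = (∑ i ∈ univ, c i)!
  rw [← hspec, mul_comm] at key
  exact (Nat.eq_of_mul_eq_mul_right hpos key).symm
section Main

variable {n : ℕ} (t : Fin (n + 1) → ℕ)

private lemma sigma_fin_eta (x : Σ i : Fin (n+1), Fin (t i)) (h0 : x.1 = 0) :
    (⟨0, Fin.cast (congrArg t h0) x.2⟩ : Σ i : Fin (n+1), Fin (t i)) = x := by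
  refine (Sigma.ext h0 ?_).symm
  rw [Fin.cast_eq_cast]
  exact (cast_heq _ _).symm

/-- The letter assignment associated to a function on the positions of letter `0`. -/
def wOf (v : Fin (t 0) → Fin n) (x : Σ i : Fin (n+1), Fin (t i)) : Fin (n + 1) :=
  if h0 : x.1 = 0 then (v (Fin.cast (congrArg t h0) x.2)).succ else 0

lemma wOf_zero (v : Fin (t 0) → Fin n) (p : Fin (t 0)) : wOf t v ⟨0, p⟩ = (v p).succ := by
  simp [wOf]

lemma wOf_ne (v : Fin (t 0) → Fin n) (x) (hx : x.1 ≠ 0) : wOf t v x = 0 := dif_neg hx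

lemma card_filter_sigma (P : (Σ i : Fin (n+1), Fin (t i)) → Prop) [DecidablePred P]
    (Q : Fin (t 0) → Prop) [DecidablePred Q]
    (h1 : ∀ x, P x → x.1 = 0) (h2 : ∀ p, P ⟨0, p⟩ ↔ Q p) :
    (univ.filter P).card = (univ.filter Q).card := by
  refine Finset.card_bij'
    (fun x hx => Fin.cast (congrArg t (h1 x (Finset.mem_filter.mp hx).2)) x.2)
    (fun p _ => ⟨0, p⟩) ?_ ?_ ?_ ?_
  · intro x hx
    have hP := (Finset.mem_filter.mp hx).2
    have h0 := h1 x hP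
    rw [Finset.mem_filter]
    refine ⟨Finset.mem_univ _, (h2 _).mp ?_⟩
    rw [sigma_fin_eta t x h0]
    exact hP
  · intro p hp
    rw [Finset.mem_filter] at hp ⊢
    exact ⟨Finset.mem_univ _, (h2 p).mpr hp.2⟩
  · intro x hx
    exact sigma_fin_eta t x (h1 x (Finset.mem_filter.mp hx).2)
  · intro p hp
    rfl

lemma card_fst_ne (h : t 0 = ∑ i : Fin n, t i.succ) :
    (univ.filter fun x : Σ i : Fin (n+1), Fin (t i) => x.1 ≠ 0).card = t 0 := by
  have h0card : (univ.filter fun x : Σ i : Fin (n+1), Fin (t i) => x.1 = 0).card = t 0 := by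
    rw [card_filter_sigma t _ (fun _ => True) (fun x hx => hx) (fun p => by simp)]
    simp
  have htot := Finset.card_filter_add_card_filter_not
      (s := (univ : Finset (Σ i : Fin (n+1), Fin (t i))))
      (p := fun x => x.1 = 0)
  rw [Finset.card_univ, h0card] at htot
  have hcards : Fintype.card (Σ i : Fin (n+1), Fin (t i)) = t 0 + ∑ i : Fin n, t i.succ := by
    simp [Fin.sum_univ_succ]
  rw [hcards, ← h] at htot
  have hne : (univ.filter fun x : Σ i : Fin (n+1), Fin (t i) => ¬ x.1 = 0).card = t 0 := by
    omega
  simpa [ne_eq] using hne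

lemma w_eq_zero_iff (h : t 0 = ∑ i : Fin n, t i.succ)
    (w : (Σ i : Fin (n+1), Fin (t i)) → Fin (n+1))
    (hc : ∀ j, (univ.filter fun x => w x = j).card = t j)
    (hf : ∀ x, w x ≠ x.1) (x : Σ i : Fin (n+1), Fin (t i)) :
    w x = 0 ↔ x.1 ≠ 0 := by
  have hsub : (univ.filter fun x => w x = 0) ⊆
      (univ.filter fun x : Σ i : Fin (n+1), Fin (t i) => x.1 ≠ 0) := by
    intro y hy
    rw [Finset.mem_filter] at hy ⊢
    refine ⟨Finset.mem_univ _, fun h0 => hf y ?_⟩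
    rw [hy.2, h0]
  have heq : (univ.filter fun x => w x = 0) =
      (univ.filter fun x : Σ i : Fin (n+1), Fin (t i) => x.1 ≠ 0) :=
    Finset.eq_of_subset_of_card_le hsub (by rw [card_fst_ne t h, hc 0])
  have := Finset.ext_iff.mp heq x
  simpa [Finset.mem_filter] using this

end Main
section Main2

variable {n : ℕ} (t : Fin (n + 1) → ℕ)

lemma wOf_counts (h : t 0 = ∑ i : Fin n, t i.succ) (v : Fin (t 0) → Fin n)
    (hv : ∀ j : Fin n, (univ.filter fun p => v p = j).card = t j.succ) :
    ∀ j, (univ.filter fun x => wOf t v x = j).card = t j := by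
  intro j
  induction j using Fin.cases with
  | zero =>
    have hiff : ∀ x : Σ i : Fin (n+1), Fin (t i), wOf t v x = 0 ↔ x.1 ≠ 0 := by
      intro x
      by_cases h0 : x.1 = 0
      · rw [← sigma_fin_eta t x h0, wOf_zero]
        simp [Fin.succ_ne_zero]
      · simp [wOf_ne t v x h0, h0]
    rw [Finset.filter_congr (fun x _ => hiff x), card_fst_ne t h]
  | succ i =>
    rw [card_filter_sigma t _ (fun p => v p = i) ?_ ?_, hv i]
    · intro x hx
      by_contra h0
      rw [wOf_ne t v x h0] at hx
      exact Fin.succ_ne_zero i hx.symm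
    · intro p
      rw [wOf_zero]
      exact Fin.succ_inj

lemma wOf_nofix (v : Fin (t 0) → Fin n) : ∀ x, wOf t v x ≠ x.1 := by
  intro x
  by_cases h0 : x.1 = 0
  · rw [← sigma_fin_eta t x h0, wOf_zero]
    exact Fin.succ_ne_zero _
  · rw [wOf_ne t v x h0]
    exact fun e => h0 e.symm

end Main2

theorem afl_half_sum (n : ℕ) (t : Fin (n + 1) → ℕ) (h : t 0 = ∑ i : Fin n, t i.succ) :
    aflCount (n + 1) t = Nat.multinomial Finset.univ (fun i : Fin n => t i.succ) := by
  classical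
  have hα : Fintype.card (Fin (t 0)) = ∑ j : Fin n, t j.succ := by simp [h]
  let Ψ : {v : Fin (t 0) → Fin n // ∀ j, (univ.filter fun p => v p = j).card = t j.succ} →
      {w : (Σ i : Fin (n + 1), Fin (t i)) → Fin (n + 1) //
        (∀ j, (Finset.univ.filter fun x => w x = j).card = t j) ∧ ∀ x, w x ≠ x.1} :=
    fun v => ⟨wOf t v.1, wOf_counts t h v.1 v.2, wOf_nofix t v.1⟩
  have hbij : Function.Bijective Ψ := by
    constructor
    · intro v₁ v₂ hv
      apply Subtype.ext
      funext p
      have h2 := congrArg (fun w => w.1 (⟨0, p⟩ : Σ i : Fin (n + 1), Fin (t i))) hv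
      simp only [Ψ] at h2
      rw [wOf_zero, wOf_zero] at h2
      exact Fin.succ_inj.mp h2
    · rintro ⟨w, hc, hf⟩
      have hz := w_eq_zero_iff t h w hc hf
      have hwp : ∀ p : Fin (t 0), w ⟨0, p⟩ ≠ 0 := by
        intro p hp
        exact (hz ⟨0, p⟩).mp hp rfl
      refine ⟨⟨fun p => (w ⟨0, p⟩).pred (hwp p), fun j => ?_⟩, ?_⟩
      · rw [← card_filter_sigma t (fun x => w x = j.succ) _ ?_ ?_, hc j.succ]
        · intro x hx
          by_contra hx0
          rw [(hz x).mpr hx0] at hx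
          exact Fin.succ_ne_zero j hx.symm
        · intro p
          constructor
          · intro e
            simp [e]
          · intro e
            rw [← e, Fin.succ_pred]
      · apply Subtype.ext
        funext x
        show wOf t (fun p => (w ⟨0, p⟩).pred (hwp p)) x = w x
        by_cases h0 : x.1 = 0
        · rw [← sigma_fin_eta t x h0, wOf_zero, Fin.succ_pred]
        · rw [wOf_ne t _ x h0]
          exact ((hz x).mpr h0).symm
  have e2 := Fintype.card_of_bijective hbij
  have e1 : aflCount (n + 1) t =
      Fintype.card {w : (Σ i : Fin (n + 1), Fin (t i)) → Fin (n + 1) //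
        (∀ j, (Finset.univ.filter fun x => w x = j).card = t j) ∧ ∀ x, w x ≠ x.1} := rfl
  rw [e1, ← e2]
  exact card_count (fun j : Fin n => t j.succ) hα
end

section
/- With f(t₁,t₂,l) = Σ_{l₁=0}^{l} C(t₁,l₁)C(t₂,l₁)l₁!·C(t₁,l−l₁)C(t₂,l−l₁)(l−l₁)!, the number of generalized derangements satisfies P(t₁,t₂,t₃,…,tₙ) = Σ_{l=0}^{t₁+t₂} f(t₁,t₂,l)·P(t₁+t₂−l, t₃,…,tₙ). -/
/-- `f t₁ t₂ l` from the paper. -/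
def fGD (t₁ t₂ l : ℕ) : ℕ :=
  ∑ l₁ ∈ Finset.range (l + 1),
    t₁.choose l₁ * t₂.choose l₁ * Nat.factorial l₁ * t₁.choose (l - l₁) * t₂.choose (l - l₁) * Nat.factorial (l - l₁)

open Finset

set_option linter.unusedSectionVars false
set_option linter.unusedVariables false



section DD
variable {ι : Type} [DecidableEq ι]

/-- colored bijection count -/
def DD {X Y : Type} [Fintype X] [Fintype Y] [DecidableEq X] [DecidableEq Y]
    (kX : X → ι) (kY : Y → ι) : ℕ :=
  Fintype.card {e : X ≃ Y // ∀ x, kY (e x) ≠ kX x}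

lemma DD_congr {X Y X' Y' ι' : Type} [Fintype X] [Fintype Y] [Fintype X'] [Fintype Y']
    [DecidableEq X] [DecidableEq Y] [DecidableEq X'] [DecidableEq Y'] [DecidableEq ι']
    {kX : X → ι} {kY : Y → ι} {kX' : X' → ι'} {kY' : Y' → ι'}
    (u : X ≃ X') (v : Y ≃ Y') (ρ : ι → ι') (hρ : Function.Injective ρ)
    (hu : ∀ x, kX' (u x) = ρ (kX x)) (hv : ∀ y, kY' (v y) = ρ (kY y)) :
    DD kX kY = DD kX' kY' := by
  apply Fintype.card_congr
  refine Equiv.subtypeEquiv (Equiv.equivCongr u v) ?_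
  intro e
  have key : ∀ x', (kY' (v (e (u.symm x'))) ≠ kX' x') ↔ kY (e (u.symm x')) ≠ kX (u.symm x') := by
    intro x'
    have h1 : kX' x' = ρ (kX (u.symm x')) := by rw [← hu, u.apply_symm_apply]
    rw [hv, h1]
    exact hρ.ne_iff
  constructor
  · intro h x'
    exact (key x').mpr (h _)
  · intro h x
    have := (key (u x)).mp (h (u x))
    simpa using this
end DD

section PInj
variable {α β : Type} [Fintype α] [Fintype β] [DecidableEq α] [DecidableEq β]

def pInj (f : α → Option β) : Prop := ∀ x y, (f x).isSome → f x = f y → x = y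

instance pInj.dec : DecidablePred (pInj (α := α) (β := β)) := fun _ => by
  unfold pInj; infer_instance

def suppC (f : α → Option β) : ℕ := (Finset.univ.filter fun x => (f x).isSome).card

lemma suppC_le (f : α → Option β) : suppC f ≤ Fintype.card α := by
  rw [← Finset.card_univ]; exact Finset.card_filter_le _ _

lemma card_none_eq (f : α → Option β) :
    Fintype.card {x // f x = none} = Fintype.card α - suppC f := by
  rw [Fintype.card_subtype]
  have h := Finset.card_filter_add_card_filter_not (s := (Finset.univ : Finset α))
    (p := fun x => (f x).isSome)
  have h2 : (Finset.univ.filter fun x => ¬ (f x).isSome) = Finset.univ.filter fun x => f x = none := by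
    apply Finset.filter_congr; intro x _; simp [Option.not_isSome_iff_eq_none]
  rw [h2] at h
  have := Finset.card_univ (α := α)
  unfold suppC
  omega

lemma suppC_eq_image_card (f : α → Option β) (hf : pInj f) :
    suppC f = (Finset.univ.filter fun y : β => ∃ x, f x = some y).card := by
    refine Finset.card_bij (fun x hx => (f x).get (by simpa using hx)) ?_ ?_ ?_
    · intro x hx
      simp only [Finset.mem_filter, Finset.mem_univ, true_and]
      exact ⟨x, by simp⟩
    · intro x hx y hy hxy
      simp only [Finset.mem_filter, Finset.mem_univ, true_and] at hx hy
      refine hf x y hx ?_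
      have : some ((f x).get hx) = some ((f y).get hy) := congrArg some hxy
      simpa using this
    · intro y hy
      simp only [Finset.mem_filter, Finset.mem_univ, true_and] at hy
      obtain ⟨x, hx⟩ := hy
      exact ⟨x, by simp [hx], by simp [hx]⟩

lemma suppC_le_of_pinj (f : α → Option β) (hf : pInj f) : suppC f ≤ Fintype.card β := by
  rw [suppC_eq_image_card f hf, ← Finset.card_univ]
  exact Finset.card_filter_le _ _

lemma card_not_image (f : α → Option β) (hf : pInj f) :
    Fintype.card {y : β // ∀ x, f x ≠ some y} = Fintype.card β - suppC f := by
  have key := suppC_eq_image_card f hf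
  rw [Fintype.card_subtype]
  have h := Finset.card_filter_add_card_filter_not (s := (Finset.univ : Finset β))
    (p := fun y => ∃ x, f x = some y)
  have h2 : (Finset.univ.filter fun y : β => ¬ ∃ x, f x = some y)
      = Finset.univ.filter fun y : β => ∀ x, f x ≠ some y := by
    apply Finset.filter_congr; intro y _; push_neg; rfl
  rw [h2] at h
  have := Finset.card_univ (α := β)
  omega

/-- Partial injections with support `S` correspond to embeddings of `S`. -/
def pinjEquiv (s : ℕ) (S : Finset α) (hcard : S.card = s) :
    {f : α → Option β // (pInj f ∧ suppC f = s) ∧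
        (Finset.univ.filter fun x => (f x).isSome) = S} ≃ (↥S ↪ β) where
  toFun F := ⟨fun x => (F.1 x.1).get (by
      have hx : (x : α) ∈ Finset.univ.filter fun y => (F.1 y).isSome := by
        rw [F.2.2]; exact x.2
      simpa using hx), by
    intro x y hxy
    have hx : (F.1 x.1).isSome := by
      have : (x : α) ∈ Finset.univ.filter fun y => (F.1 y).isSome := by
        rw [F.2.2]; exact x.2
      simpa using this
    have hy : (F.1 y.1).isSome := by
      have : (y : α) ∈ Finset.univ.filter fun z => (F.1 z).isSome := by
        rw [F.2.2]; exact y.2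
      simpa using this
    apply Subtype.ext
    refine F.2.1.1 x.1 y.1 hx ?_
    have : some ((F.1 x.1).get hx) = some ((F.1 y.1).get hy) := congrArg some hxy
    simpa using this⟩
  invFun g := ⟨fun x => if h : x ∈ S then some (g ⟨x, h⟩) else none, by
    have hsupp : (Finset.univ.filter fun x =>
        (if h : x ∈ S then some (g ⟨x, h⟩) else none).isSome) = S := by
      ext x
      by_cases h : x ∈ S <;> simp [h]
    refine ⟨⟨?_, ?_⟩, hsupp⟩
    · intro x y hx hxy
      beta_reduce at hx hxy
      by_cases hxS : x ∈ S
      · by_cases hyS : y ∈ S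
        · rw [dif_pos hxS, dif_pos hyS] at hxy
          have := g.injective (by
            apply Option.some_injective
            exact hxy)
          exact congrArg Subtype.val this
        · rw [dif_pos hxS, dif_neg hyS] at hxy; simp at hxy
      · rw [dif_neg hxS] at hx; simp at hx
    · rw [suppC, hsupp, hcard]⟩
  left_inv F := by
    apply Subtype.ext
    funext x
    show (if h : x ∈ S then _ else none) = F.1 x
    by_cases h : x ∈ S
    · rw [dif_pos h]
      have hx : (F.1 x).isSome := by
        have : x ∈ Finset.univ.filter fun y => (F.1 y).isSome := by rw [F.2.2]; exact h
        simpa using this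
      exact Option.some_get hx
    · rw [dif_neg h]
      have hx : ¬ (F.1 x).isSome := by
        intro hs
        exact h (by rw [← F.2.2]; simpa using hs)
      symm
      simpa [Option.not_isSome_iff_eq_none] using hx
  right_inv g := by
    ext x
    simp [x.2]

lemma card_pinj (s : ℕ) :
    (Finset.univ.filter fun f : α → Option β => pInj f ∧ suppC f = s).card
      = (Fintype.card α).choose s * ((Fintype.card β).choose s * Nat.factorial s) := by
  rw [Finset.card_eq_sum_card_fiberwise
      (f := fun f : α → Option β => Finset.univ.filter fun x => (f x).isSome)
      (t := Finset.univ.powersetCard s)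
      (by intro f hf
          rw [Finset.mem_coe] at hf ⊢
          simp only [Finset.mem_filter, Finset.mem_univ, true_and] at hf
          rw [Finset.mem_powersetCard]
          exact ⟨Finset.subset_univ _, hf.2⟩)]
  have step : ∀ S ∈ Finset.univ.powersetCard s,
      (((Finset.univ.filter fun f : α → Option β => pInj f ∧ suppC f = s).filter
        fun f => (Finset.univ.filter fun x => (f x).isSome) = S)).card
      = (Fintype.card β).choose s * Nat.factorial s := by
    intro S hS
    rw [Finset.mem_powersetCard] at hS
    rw [Finset.filter_filter, ← Fintype.card_subtype]
    rw [Fintype.card_congr (pinjEquiv s S hS.2), Fintype.card_embedding_eq, Fintype.card_coe,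
      hS.2, Nat.descFactorial_eq_factorial_mul_choose, Nat.mul_comm]
  rw [Finset.sum_congr rfl step, Finset.sum_const, Finset.card_powersetCard, Finset.card_univ,
    smul_eq_mul]

end PInj

section Fiber
variable {A B R ι : Type} [Fintype A] [Fintype B] [Fintype R]
  [DecidableEq A] [DecidableEq B] [DecidableEq R] [DecidableEq ι]

/-- two-set coloring on `(A ⊕ B) ⊕ R` -/
def k2 (c : R → ι) : (A ⊕ B) ⊕ R → Option (Option ι) :=
  Sum.elim (Sum.elim (fun _ => none) (fun _ => some none)) (fun r => some (some (c r)))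

/-- merged coloring on `M ⊕ R` -/
def k1 (c : R → ι) {M : Type} : M ⊕ R → Option ι :=
  Sum.elim (fun _ => none) (fun r => some (c r))

/-- merged coloring on the unmerged type, ignoring the A/B distinction -/
def kk (c : R → ι) : (A ⊕ B) ⊕ R → Option ι :=
  Sum.elim (fun _ => none) (fun r => some (c r))

def toB : (A ⊕ B) ⊕ R → Option B := fun y => match y with
  | .inl (.inr b) => some b
  | _ => none

def toA : (A ⊕ B) ⊕ R → Option A := fun y => match y with
  | .inl (.inl a) => some a
  | _ => none

lemma toB_eq_some {y : (A ⊕ B) ⊕ R} {b : B} : toB y = some b ↔ y = .inl (.inr b) := by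
  rcases y with ((a | b') | r) <;> simp [toB]

lemma toA_eq_some {y : (A ⊕ B) ⊕ R} {a : A} : toA y = some a ↔ y = .inl (.inl a) := by
  rcases y with ((a' | b) | r) <;> simp [toA]

/-- cross data of a permutation -/
def dataF (σ : Equiv.Perm ((A ⊕ B) ⊕ R)) : (A → Option B) × (B → Option A) :=
  (fun x => toB (σ (.inl (.inl x))), fun x => toA (σ (.inl (.inr x))))

lemma pInj_dataF (σ : Equiv.Perm ((A ⊕ B) ⊕ R)) :
    pInj (dataF σ).1 ∧ pInj (dataF σ).2 := by
  constructor
  · intro x y hx hxy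
    obtain ⟨b, hb⟩ := Option.isSome_iff_exists.mp hx
    rw [hb] at hxy
    have h1 : σ (.inl (.inl x)) = .inl (.inr b) := toB_eq_some.mp hb
    have h2 : σ (.inl (.inl y)) = .inl (.inr b) := toB_eq_some.mp hxy.symm
    have := σ.injective (h1.trans h2.symm)
    simpa using this
  · intro x y hx hxy
    obtain ⟨a, ha⟩ := Option.isSome_iff_exists.mp hx
    rw [ha] at hxy
    have h1 : σ (.inl (.inr x)) = .inl (.inl a) := toA_eq_some.mp ha
    have h2 : σ (.inl (.inr y)) = .inl (.inl a) := toA_eq_some.mp hxy.symm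
    have := σ.injective (h1.trans h2.symm)
    simpa using this

variable (φ : A → Option B) (ψ : B → Option A)

/-- non-crossing sources -/
def pD : (A ⊕ B) ⊕ R → Prop :=
  Sum.elim (Sum.elim (fun a => φ a = none) (fun b => ψ b = none)) (fun _ => True)

/-- non-crossing targets -/
def pC : (A ⊕ B) ⊕ R → Prop :=
  Sum.elim (Sum.elim (fun a => ∀ b, ψ b ≠ some a) (fun b => ∀ a, φ a ≠ some b)) (fun _ => True)

instance pD.dec : DecidablePred (pD (R := R) φ ψ)
  | .inl (.inl a) => inferInstanceAs (Decidable (φ a = none))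
  | .inl (.inr b) => inferInstanceAs (Decidable (ψ b = none))
  | .inr _ => inferInstanceAs (Decidable True)

instance pC.dec : DecidablePred (pC (R := R) φ ψ)
  | .inl (.inl a) => inferInstanceAs (Decidable (∀ b, ψ b ≠ some a))
  | .inl (.inr b) => inferInstanceAs (Decidable (∀ a, φ a ≠ some b))
  | .inr _ => inferInstanceAs (Decidable True)

variable (c : R → ι)

lemma pD_iff (σ : Equiv.Perm ((A ⊕ B) ⊕ R))
    (hder : ∀ x, k2 c (σ x) ≠ k2 c x)
    (h1 : ∀ a, toB (σ (.inl (.inl a))) = φ a)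
    (h2 : ∀ b, toA (σ (.inl (.inr b))) = ψ b) :
    ∀ x, pD φ ψ x ↔ pC φ ψ (σ x) := by
  intro x
  rcases x with ((a | b) | r)
  · rcases hx : σ (.inl (.inl a)) with ((a' | b') | r')
    · exact absurd (show k2 c (σ (.inl (.inl a))) = k2 c (.inl (.inl a)) by rw [hx]; rfl)
        (hder _)
    · have hφ : φ a = some b' := by rw [← h1 a, hx]; rfl
      apply iff_of_false
      · simp [pD, hφ]
      · intro hc; exact hc a hφ
    · have hφ : φ a = none := by rw [← h1 a, hx]; rfl
      apply iff_of_true hφ trivial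
  · rcases hx : σ (.inl (.inr b)) with ((a' | b') | r')
    · have hψ : ψ b = some a' := by rw [← h2 b, hx]; rfl
      apply iff_of_false
      · simp [pD, hψ]
      · intro hc; exact hc b hψ
    · exact absurd (show k2 c (σ (.inl (.inr b))) = k2 c (.inl (.inr b)) by rw [hx]; rfl)
        (hder _)
    · have hψ : ψ b = none := by rw [← h2 b, hx]; rfl
      apply iff_of_true hψ trivial
  · rw [show pD φ ψ (.inr r) = True from rfl]
    rcases hx : σ (.inr r) with ((a' | b') | r')
    · apply iff_of_true trivial
      intro b hb
      have h3 : σ (.inl (.inr b)) = .inl (.inl a') := toA_eq_some.mp ((h2 b).trans hb)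
      have := σ.injective (h3.trans hx.symm)
      simp at this
    · apply iff_of_true trivial
      intro a ha
      have h3 : σ (.inl (.inl a)) = .inl (.inr b') := toB_eq_some.mp ((h1 a).trans ha)
      have := σ.injective (h3.trans hx.symm)
      simp at this
    · apply iff_of_true trivial trivial

lemma kk_prop (σ : Equiv.Perm ((A ⊕ B) ⊕ R))
    (hder : ∀ x, k2 c (σ x) ≠ k2 c x)
    (h1 : ∀ a, toB (σ (.inl (.inl a))) = φ a)
    (h2 : ∀ b, toA (σ (.inl (.inr b))) = ψ b) :
    ∀ x : {x : (A ⊕ B) ⊕ R // pD φ ψ x}, kk c (σ x.1) ≠ kk c x.1 := by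
  rintro ⟨((a | b) | r), hx⟩
  · rcases hv : σ (.inl (.inl a)) with ((a' | b') | r')
    · exact absurd (show k2 c (σ (.inl (.inl a))) = k2 c (.inl (.inl a)) by rw [hv]; rfl)
        (hder _)
    · have hφ : φ a = some b' := by rw [← h1 a, hv]; rfl
      exact absurd hφ (by simp [show φ a = none from hx])
    · simp [kk]
  · rcases hv : σ (.inl (.inr b)) with ((a' | b') | r')
    · have hψ : ψ b = some a' := by rw [← h2 b, hv]; rfl
      exact absurd hψ (by simp [show ψ b = none from hx])
    · exact absurd (show k2 c (σ (.inl (.inr b))) = k2 c (.inl (.inr b)) by rw [hv]; rfl)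
        (hder _)
    · simp [kk]
  · rcases hv : σ (.inr r) with ((a' | b') | r')
    · simp [kk]
    · simp [kk]
    · have : c r' ≠ c r := by
        have := hder (.inr r)
        rw [hv] at this
        simpa [k2] using this
      simpa [kk] using this

def glue (e : {x : (A ⊕ B) ⊕ R // pD φ ψ x} ≃ {x : (A ⊕ B) ⊕ R // pC φ ψ x}) :
    (A ⊕ B) ⊕ R → (A ⊕ B) ⊕ R := fun x =>
  match x with
  | .inl (.inl a) =>
      if h : φ a = none then (e ⟨.inl (.inl a), h⟩).1
      else .inl (.inr ((φ a).get (Option.ne_none_iff_isSome.mp h)))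
  | .inl (.inr b) =>
      if h : ψ b = none then (e ⟨.inl (.inr b), h⟩).1
      else .inl (.inl ((ψ b).get (Option.ne_none_iff_isSome.mp h)))
  | .inr r => (e ⟨.inr r, trivial⟩).1

variable {φ ψ} in
lemma glue_pD (e : {x : (A ⊕ B) ⊕ R // pD φ ψ x} ≃ {x : (A ⊕ B) ⊕ R // pC φ ψ x})
    (x : (A ⊕ B) ⊕ R) (h : pD φ ψ x) : glue φ ψ e x = (e ⟨x, h⟩).1 := by
  rcases x with ((a | b) | r)
  · exact dif_pos h
  · exact dif_pos h
  · rfl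

variable {φ ψ} in
lemma glue_inl_some (e : {x : (A ⊕ B) ⊕ R // pD φ ψ x} ≃ {x : (A ⊕ B) ⊕ R // pC φ ψ x})
    {a : A} {b : B} (h : φ a = some b) : glue φ ψ e (.inl (.inl a)) = .inl (.inr b) := by
  have h' : ¬ φ a = none := by simp [h]
  show (if h : φ a = none then _ else _) = _
  rw [dif_neg h']
  simp [h]

variable {φ ψ} in
lemma glue_inr_some (e : {x : (A ⊕ B) ⊕ R // pD φ ψ x} ≃ {x : (A ⊕ B) ⊕ R // pC φ ψ x})
    {b : B} {a : A} (h : ψ b = some a) : glue φ ψ e (.inl (.inr b)) = .inl (.inl a) := by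
  have h' : ¬ ψ b = none := by simp [h]
  show (if h : ψ b = none then _ else _) = _
  rw [dif_neg h']
  simp [h]

variable {φ ψ} in
lemma glue_not_pC (e : {x : (A ⊕ B) ⊕ R // pD φ ψ x} ≃ {x : (A ⊕ B) ⊕ R // pC φ ψ x})
    (x : (A ⊕ B) ⊕ R) (h : ¬ pD φ ψ x) : ¬ pC φ ψ (glue φ ψ e x) := by
  rcases x with ((a | b) | r)
  · have h' : ¬ φ a = none := h
    obtain ⟨b0, hb0⟩ := Option.ne_none_iff_exists'.mp h'
    rw [glue_inl_some e hb0]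
    intro hc
    exact hc a hb0
  · have h' : ¬ ψ b = none := h
    obtain ⟨a0, ha0⟩ := Option.ne_none_iff_exists'.mp h'
    rw [glue_inr_some e ha0]
    intro hc
    exact hc b ha0
  · exact absurd trivial h

variable {φ ψ} in
lemma glue_inj (hφ : pInj φ) (hψ : pInj ψ)
    (e : {x : (A ⊕ B) ⊕ R // pD φ ψ x} ≃ {x : (A ⊕ B) ⊕ R // pC φ ψ x}) :
    Function.Injective (glue φ ψ e) := by
  intro x y hxy
  by_cases hx : pD φ ψ x
  · by_cases hy : pD φ ψ y
    · rw [glue_pD e x hx, glue_pD e y hy] at hxy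
      have h3 := e.injective (Subtype.ext hxy)
      exact congrArg Subtype.val h3
    · exfalso
      apply glue_not_pC e y hy
      rw [← hxy, glue_pD e x hx]
      exact (e ⟨x, hx⟩).2
  · by_cases hy : pD φ ψ y
    · exfalso
      apply glue_not_pC e x hx
      rw [hxy, glue_pD e y hy]
      exact (e ⟨y, hy⟩).2
    · rcases x with ((a | b) | r)
      · obtain ⟨b0, hb0⟩ := Option.ne_none_iff_exists'.mp (hx : ¬ φ a = none)
        rcases y with ((a' | b') | r')
        · obtain ⟨b0', hb0'⟩ := Option.ne_none_iff_exists'.mp (hy : ¬ φ a' = none)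
          rw [glue_inl_some e hb0, glue_inl_some e hb0'] at hxy
          simp only [Sum.inl.injEq, Sum.inr.injEq] at hxy
          subst hxy
          have := hφ a a' (by simp [hb0]) (hb0.trans hb0'.symm)
          rw [this]
        · obtain ⟨a0', ha0'⟩ := Option.ne_none_iff_exists'.mp (hy : ¬ ψ b' = none)
          rw [glue_inl_some e hb0, glue_inr_some e ha0'] at hxy
          simp at hxy
        · exact absurd trivial hy
      · obtain ⟨a0, ha0⟩ := Option.ne_none_iff_exists'.mp (hx : ¬ ψ b = none)
        rcases y with ((a' | b') | r')
        · obtain ⟨b0', hb0'⟩ := Option.ne_none_iff_exists'.mp (hy : ¬ φ a' = none)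
          rw [glue_inr_some e ha0, glue_inl_some e hb0'] at hxy
          simp at hxy
        · obtain ⟨a0', ha0'⟩ := Option.ne_none_iff_exists'.mp (hy : ¬ ψ b' = none)
          rw [glue_inr_some e ha0, glue_inr_some e ha0'] at hxy
          simp only [Sum.inl.injEq] at hxy
          subst hxy
          have := hψ b b' (by simp [ha0]) (ha0.trans ha0'.symm)
          rw [this]
        · exact absurd trivial hy
      · exact absurd trivial hx

variable {c} in
lemma kk_ne_none_shape {v : (A ⊕ B) ⊕ R} (h : kk c v ≠ none) : ∃ r, v = .inr r := by
  rcases v with ((a | b) | r)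
  · exact absurd rfl h
  · exact absurd rfl h
  · exact ⟨r, rfl⟩

variable {φ ψ c} in
lemma glue_e_inr (e : {x : (A ⊕ B) ⊕ R // pD φ ψ x} ≃ {x : (A ⊕ B) ⊕ R // pC φ ψ x})
    (he : ∀ x, kk c (e x).1 ≠ kk c x.1)
    (x : (A ⊕ B) ⊕ R) (h : pD φ ψ x) (hk : kk c x = none) :
    ∃ r, glue φ ψ e x = .inr r := by
  rw [glue_pD e x h]
  apply kk_ne_none_shape (c := c)
  rw [← hk]
  exact he ⟨x, h⟩

variable {φ ψ c} in
lemma glue_der (hφ : pInj φ) (hψ : pInj ψ)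
    (e : {x : (A ⊕ B) ⊕ R // pD φ ψ x} ≃ {x : (A ⊕ B) ⊕ R // pC φ ψ x})
    (he : ∀ x, kk c (e x).1 ≠ kk c x.1) :
    ∀ x, k2 c (glue φ ψ e x) ≠ k2 c x := by
  intro x
  rcases x with ((a | b) | r)
  · rcases h : φ a with _ | b0
    · obtain ⟨r, hr⟩ := glue_e_inr e he (.inl (.inl a)) h rfl
      rw [hr]
      simp [k2]
    · rw [glue_inl_some e h]
      simp [k2]
  · rcases h : ψ b with _ | a0
    · obtain ⟨r, hr⟩ := glue_e_inr e he (.inl (.inr b)) h rfl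
      rw [hr]
      simp [k2]
    · rw [glue_inr_some e h]
      simp [k2]
  · rw [glue_pD e (.inr r) trivial]
    have hcne := he ⟨.inr r, trivial⟩
    rcases hv : (e ⟨.inr r, trivial⟩).1 with ((a' | b') | r')
    · simp [k2]
    · simp [k2]
    · rw [hv] at hcne
      have : c r' ≠ c r := by simpa [kk] using hcne
      simpa [k2] using this

variable {φ ψ c} in
lemma glue_data (hφ : pInj φ) (hψ : pInj ψ)
    (e : {x : (A ⊕ B) ⊕ R // pD φ ψ x} ≃ {x : (A ⊕ B) ⊕ R // pC φ ψ x})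
    (he : ∀ x, kk c (e x).1 ≠ kk c x.1) :
    (∀ a, toB (glue φ ψ e (.inl (.inl a))) = φ a)
      ∧ (∀ b, toA (glue φ ψ e (.inl (.inr b))) = ψ b) := by
  constructor
  · intro a
    rcases h : φ a with _ | b0
    · obtain ⟨r, hr⟩ := glue_e_inr e he (.inl (.inl a)) h rfl
      rw [hr]; rfl
    · rw [glue_inl_some e h]; rfl
  · intro b
    rcases h : ψ b with _ | a0
    · obtain ⟨r, hr⟩ := glue_e_inr e he (.inl (.inr b)) h rfl
      rw [hr]; rfl
    · rw [glue_inr_some e h]; rfl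

variable {φ ψ c} in
lemma fiber_card (hφ : pInj φ) (hψ : pInj ψ) :
    (Finset.univ.filter fun σ : Equiv.Perm ((A ⊕ B) ⊕ R) =>
        (∀ x, k2 c (σ x) ≠ k2 c x) ∧ dataF σ = (φ, ψ)).card
      = DD (fun x : {x : (A ⊕ B) ⊕ R // pD φ ψ x} => kk c x.1)
          (fun x : {x : (A ⊕ B) ⊕ R // pC φ ψ x} => kk c x.1) := by
  rw [← Fintype.card_subtype, DD]
  refine Fintype.card_congr ?_
  have hcomp : ∀ (σS : {σ : Equiv.Perm ((A ⊕ B) ⊕ R) //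
      (∀ x, k2 c (σ x) ≠ k2 c x) ∧ dataF σ = (φ, ψ)}),
      (∀ a, toB (σS.1 (.inl (.inl a))) = φ a) ∧ (∀ b, toA (σS.1 (.inl (.inr b))) = ψ b) :=
    fun σS => ⟨fun a => congrFun (congrArg Prod.fst σS.2.2) a,
      fun b => congrFun (congrArg Prod.snd σS.2.2) b⟩
  exact {
    toFun := fun σS =>
      ⟨Equiv.subtypeEquiv σS.1 (pD_iff φ ψ c σS.1 σS.2.1 (hcomp σS).1 (hcomp σS).2),
        kk_prop φ ψ c σS.1 σS.2.1 (hcomp σS).1 (hcomp σS).2⟩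
    invFun := fun eS =>
      ⟨Equiv.ofBijective (glue φ ψ eS.1)
          ((Finite.injective_iff_bijective).mp (glue_inj hφ hψ eS.1)),
        glue_der hφ hψ eS.1 eS.2, by
          have hd := glue_data hφ hψ eS.1 eS.2
          exact Prod.ext (funext hd.1) (funext hd.2)⟩
    left_inv := by
      intro σS
      apply Subtype.ext
      apply Equiv.ext
      intro x
      show glue φ ψ _ x = σS.1 x
      by_cases hx : pD φ ψ x
      · rw [glue_pD _ x hx]
        rfl
      · rcases x with ((a | b) | r)
        · obtain ⟨b0, hb0⟩ := Option.ne_none_iff_exists'.mp (hx : ¬ φ a = none)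
          rw [glue_inl_some _ hb0]
          exact (toB_eq_some.mp (((hcomp σS).1 a).trans hb0)).symm
        · obtain ⟨a0, ha0⟩ := Option.ne_none_iff_exists'.mp (hx : ¬ ψ b = none)
          rw [glue_inr_some _ ha0]
          exact (toA_eq_some.mp (((hcomp σS).2 b).trans ha0)).symm
        · exact absurd trivial hx
    right_inv := by
      intro eS
      apply Subtype.ext
      apply Equiv.ext
      intro x
      apply Subtype.ext
      show glue φ ψ eS.1 x.1 = (eS.1 x).1
      rw [glue_pD eS.1 x.1 x.2]
  }

/-- merged derangement count with first set of size `m` -/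
def Dm (c : R → ι) (m : ℕ) : ℕ := DD (k1 (R := R) c (M := Fin m)) (k1 (R := R) c (M := Fin m))

variable {φ ψ} in
lemma card_pD_AB (hφ : pInj φ) (hψ : pInj ψ) :
    Fintype.card {ab : A ⊕ B // pD (R := R) φ ψ (.inl ab)}
      = Fintype.card A + Fintype.card B - (suppC φ + suppC ψ) := by
  rw [Fintype.card_congr (Equiv.subtypeSum (p := fun ab : A ⊕ B => pD φ ψ (.inl ab)))]
  rw [Fintype.card_sum]
  rw [Fintype.card_congr (Equiv.subtypeEquivRight
    (fun a : A => show pD φ ψ (.inl (.inl a)) ↔ φ a = none from Iff.rfl)), card_none_eq]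
  rw [Fintype.card_congr (Equiv.subtypeEquivRight
    (fun b : B => show pD φ ψ (.inl (.inr b)) ↔ ψ b = none from Iff.rfl)), card_none_eq]
  have := suppC_le φ
  have := suppC_le ψ
  have := suppC_le_of_pinj φ hφ
  have := suppC_le_of_pinj ψ hψ
  omega

variable {φ ψ} in
lemma card_pC_AB (hφ : pInj φ) (hψ : pInj ψ) :
    Fintype.card {ab : A ⊕ B // pC (R := R) φ ψ (.inl ab)}
      = Fintype.card A + Fintype.card B - (suppC φ + suppC ψ) := by
  rw [Fintype.card_congr (Equiv.subtypeSum (p := fun ab : A ⊕ B => pC φ ψ (.inl ab)))]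
  rw [Fintype.card_sum]
  rw [Fintype.card_congr (Equiv.subtypeEquivRight
    (fun a : A => show pC φ ψ (.inl (.inl a)) ↔ ∀ b, ψ b ≠ some a from Iff.rfl)),
    card_not_image ψ hψ]
  rw [Fintype.card_congr (Equiv.subtypeEquivRight
    (fun b : B => show pC φ ψ (.inl (.inr b)) ↔ ∀ a, φ a ≠ some b from Iff.rfl)),
    card_not_image φ hφ]
  have := suppC_le φ
  have := suppC_le ψ
  have := suppC_le_of_pinj φ hφ
  have := suppC_le_of_pinj ψ hψ
  omega

variable {φ ψ} in
lemma DD_pD_pC (hφ : pInj φ) (hψ : pInj ψ) :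
    DD (fun x : {x : (A ⊕ B) ⊕ R // pD φ ψ x} => kk c x.1)
        (fun x : {x : (A ⊕ B) ⊕ R // pC φ ψ x} => kk c x.1)
      = Dm c (Fintype.card A + Fintype.card B - (suppC φ + suppC ψ)) := by
  refine DD_congr
    (Equiv.subtypeSum.trans (Equiv.sumCongr
      (Fintype.equivFinOfCardEq (card_pD_AB hφ hψ))
      (Equiv.subtypeUnivEquiv fun r => trivial)))
    (Equiv.subtypeSum.trans (Equiv.sumCongr
      (Fintype.equivFinOfCardEq (card_pC_AB hφ hψ))
      (Equiv.subtypeUnivEquiv fun r => trivial)))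
    id Function.injective_id ?_ ?_
  · rintro ⟨(ab | r), hx⟩ <;> rfl
  · rintro ⟨(ab | r), hx⟩ <;> rfl

lemma card_cross (l : ℕ) :
    (Finset.univ.filter fun d : (A → Option B) × (B → Option A) =>
        (pInj d.1 ∧ pInj d.2) ∧ suppC d.1 + suppC d.2 = l).card
      = fGD (Fintype.card A) (Fintype.card B) l := by
  rw [Finset.card_eq_sum_card_fiberwise (f := fun d => suppC d.1) (t := Finset.range (l+1))
      (by intro d hd; rw [Finset.mem_coe] at hd ⊢; simp only [Finset.mem_filter] at hd
          refine Finset.mem_range.mpr ?_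
          show suppC d.1 < l + 1
          omega)]
  unfold fGD
  refine Finset.sum_congr rfl ?_
  intro j hj
  have hj' : j ≤ l := Nat.lt_succ_iff.mp (Finset.mem_range.mp hj)
  rw [Finset.filter_filter]
  have hset : (Finset.univ.filter fun d : (A → Option B) × (B → Option A) =>
      ((pInj d.1 ∧ pInj d.2) ∧ suppC d.1 + suppC d.2 = l) ∧ suppC d.1 = j)
      = (Finset.univ.filter fun f : A → Option B => pInj f ∧ suppC f = j) ×ˢ
        (Finset.univ.filter fun g : B → Option A => pInj g ∧ suppC g = l - j) := by
    ext d
    simp only [Finset.mem_filter, Finset.mem_univ, true_and, Finset.mem_product]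
    constructor
    · rintro ⟨⟨⟨h1, h2⟩, h3⟩, h4⟩
      exact ⟨⟨h1, h4⟩, h2, by omega⟩
    · rintro ⟨⟨h1, h4⟩, ⟨h2, h5⟩⟩
      exact ⟨⟨⟨h1, h2⟩, by omega⟩, h4⟩
  rw [hset, Finset.card_product, card_pinj, card_pinj]
  ring

lemma main_abstract :
    DD (k2 (A := A) (B := B) c) (k2 (A := A) (B := B) c)
      = ∑ l ∈ Finset.range (Fintype.card A + Fintype.card B + 1),
          fGD (Fintype.card A) (Fintype.card B) l *
            Dm (R := R) (ι := ι) c (Fintype.card A + Fintype.card B - l) := by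
  rw [DD, Fintype.card_subtype]
  rw [Finset.card_eq_sum_card_fiberwise (f := dataF)
      (t := Finset.univ.filter fun d : (A → Option B) × (B → Option A) => pInj d.1 ∧ pInj d.2)
      (by intro σ hσ
          rw [Finset.mem_coe]
          simp only [Finset.mem_filter, Finset.mem_univ, true_and]
          exact pInj_dataF σ)]
  have step1 : ∀ d ∈ (Finset.univ.filter
      fun d : (A → Option B) × (B → Option A) => pInj d.1 ∧ pInj d.2),
      ((Finset.univ.filter fun σ : Equiv.Perm ((A ⊕ B) ⊕ R) =>
          ∀ x, k2 c (σ x) ≠ k2 c x).filter (fun σ => dataF σ = d)).card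
        = Dm (R := R) (ι := ι) c
            (Fintype.card A + Fintype.card B - (suppC d.1 + suppC d.2)) := by
    intro d hd
    simp only [Finset.mem_filter, Finset.mem_univ, true_and] at hd
    rw [Finset.filter_filter]
    have hfc := fiber_card (φ := d.1) (ψ := d.2) (c := c) hd.1 hd.2
    rw [show ((d.1, d.2) : (A → Option B) × (B → Option A)) = d from rfl] at hfc
    rw [hfc, DD_pD_pC c hd.1 hd.2]
  rw [Finset.sum_congr rfl step1]
  rw [← Finset.sum_fiberwise_of_maps_to'
      (f := fun l =>
        Dm (R := R) (ι := ι) c (Fintype.card A + Fintype.card B - l))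
      (g := fun d : (A → Option B) × (B → Option A) => suppC d.1 + suppC d.2)
      (t := Finset.range (Fintype.card A + Fintype.card B + 1))
      (by intro d hd
          have := suppC_le d.1
          have := suppC_le d.2
          refine Finset.mem_range.mpr ?_
          show suppC d.1 + suppC d.2 < Fintype.card A + Fintype.card B + 1
          omega)]
  refine Finset.sum_congr rfl ?_
  intro l hl
  rw [Finset.sum_const, smul_eq_mul, Finset.filter_filter, card_cross]

end Fiber

def sigmaFinSucc {m : ℕ} (β : Fin (m+1) → Type) :
    (Σ i, β i) ≃ (β 0 ⊕ Σ i : Fin m, β i.succ) where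
  toFun x := Fin.cases (motive := fun i => β i → β 0 ⊕ (Σ i : Fin m, β i.succ))
    Sum.inl (fun i v => Sum.inr ⟨i, v⟩) x.1 x.2
  invFun := Sum.elim (fun v => ⟨0, v⟩) (fun x => ⟨x.1.succ, x.2⟩)
  left_inv := by
    rintro ⟨i, v⟩
    revert v
    refine Fin.cases ?_ ?_ i <;> intros <;> simp
  right_inv := by
    rintro (v | ⟨i, v⟩) <;> simp

lemma sigmaFinSucc_zero {m : ℕ} (β : Fin (m+1) → Type) (v : β 0) :
    sigmaFinSucc β ⟨0, v⟩ = Sum.inl v := by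
  show Fin.cases (motive := fun i => β i → β 0 ⊕ (Σ i : Fin m, β i.succ))
    Sum.inl (fun i v => Sum.inr ⟨i, v⟩) 0 v = Sum.inl v
  rw [Fin.cases_zero]

lemma sigmaFinSucc_succ {m : ℕ} (β : Fin (m+1) → Type) (i : Fin m) (v : β i.succ) :
    sigmaFinSucc β ⟨i.succ, v⟩ = Sum.inr ⟨i, v⟩ := by
  show Fin.cases (motive := fun i => β i → β 0 ⊕ (Σ i : Fin m, β i.succ))
    Sum.inl (fun i v => Sum.inr ⟨i, v⟩) i.succ v = Sum.inr ⟨i, v⟩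
  rw [Fin.cases_succ]

def ρ2 (n : ℕ) : Fin (n+2) → Option (Option (Fin n)) :=
  Fin.cases none (fun i => Fin.cases (some none) (fun j => some (some j)) i)

lemma ρ2_zero (n : ℕ) : ρ2 n 0 = none := by
  unfold ρ2; rw [Fin.cases_zero]

lemma ρ2_succ (n : ℕ) (i : Fin (n+1)) :
    ρ2 n i.succ = Fin.cases (some none) (fun j => some (some j)) i := by
  unfold ρ2; rw [Fin.cases_succ]

lemma ρ2_succ_zero (n : ℕ) : ρ2 n (Fin.succ 0) = some none := by
  rw [ρ2_succ, Fin.cases_zero]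

lemma ρ2_succ_succ (n : ℕ) (j : Fin n) : ρ2 n j.succ.succ = some (some j) := by
  rw [ρ2_succ, Fin.cases_succ]

lemma ρ2_inj (n : ℕ) : Function.Injective (ρ2 n) := by
  intro x y h
  rcases Fin.eq_zero_or_eq_succ x with rfl | ⟨x', rfl⟩
  · rcases Fin.eq_zero_or_eq_succ y with rfl | ⟨y', rfl⟩
    · rfl
    · rcases Fin.eq_zero_or_eq_succ y' with rfl | ⟨y'', rfl⟩
      · rw [ρ2_zero, ρ2_succ_zero] at h; cases h
      · rw [ρ2_zero, ρ2_succ_succ] at h; cases h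
  · rcases Fin.eq_zero_or_eq_succ x' with rfl | ⟨x'', rfl⟩
    · rcases Fin.eq_zero_or_eq_succ y with rfl | ⟨y', rfl⟩
      · rw [ρ2_zero, ρ2_succ_zero] at h; cases h
      · rcases Fin.eq_zero_or_eq_succ y' with rfl | ⟨y'', rfl⟩
        · rfl
        · rw [ρ2_succ_zero, ρ2_succ_succ] at h; simp at h
    · rcases Fin.eq_zero_or_eq_succ y with rfl | ⟨y', rfl⟩
      · rw [ρ2_succ_succ, ρ2_zero] at h; cases h
      · rcases Fin.eq_zero_or_eq_succ y' with rfl | ⟨y'', rfl⟩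
        · rw [ρ2_succ_succ, ρ2_succ_zero] at h; simp at h
        · rw [ρ2_succ_succ, ρ2_succ_succ] at h
          simp only [Option.some.injEq] at h
          rw [h]

def ρ1 (n : ℕ) : Fin (n+1) → Option (Fin n) := Fin.cases none (fun j => some j)

lemma ρ1_zero (n : ℕ) : ρ1 n 0 = none := by
  unfold ρ1; rw [Fin.cases_zero]

lemma ρ1_succ (n : ℕ) (j : Fin n) : ρ1 n j.succ = some j := by
  unfold ρ1; rw [Fin.cases_succ]

lemma ρ1_inj (n : ℕ) : Function.Injective (ρ1 n) := by
  intro x y h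
  rcases Fin.eq_zero_or_eq_succ x with rfl | ⟨x', rfl⟩
  · rcases Fin.eq_zero_or_eq_succ y with rfl | ⟨y', rfl⟩
    · rfl
    · rw [ρ1_zero, ρ1_succ] at h; cases h
  · rcases Fin.eq_zero_or_eq_succ y with rfl | ⟨y', rfl⟩
    · rw [ρ1_zero, ρ1_succ] at h; cases h
    · rw [ρ1_succ, ρ1_succ] at h
      simp only [Option.some.injEq] at h
      rw [h]

lemma gdCount_eq_DD (n : ℕ) (t : Fin n → ℕ) :
    gdCount n t = DD (fun x : Σ i : Fin n, Fin (t i) => x.1)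
      (fun x : Σ i : Fin n, Fin (t i) => x.1) := by
  rw [gdCount, DD]

lemma gd2 (n : ℕ) (t : Fin (n+2) → ℕ) :
    gdCount (n+2) t
      = DD (k2 (A := Fin (t 0)) (B := Fin (t 1)) (R := Σ i : Fin n, Fin (t i.succ.succ))
            (Sigma.fst))
          (k2 (A := Fin (t 0)) (B := Fin (t 1)) (R := Σ i : Fin n, Fin (t i.succ.succ))
            (Sigma.fst)) := by
  rw [gdCount_eq_DD]
  have h01 : ((0 : Fin (n+1)).succ) = (1 : Fin (n+2)) := by ext; simp
  let F : (Σ i : Fin (n+1), Fin (t i.succ)) ≃ Fin (t 1) ⊕ (Σ i : Fin n, Fin (t i.succ.succ)) :=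
    (sigmaFinSucc (fun i : Fin (n+1) => Fin (t i.succ))).trans
      ((finCongr (congrArg t h01)).sumCongr
        (Equiv.refl (Σ i : Fin n, Fin (t i.succ.succ))))
  let E : (Σ i : Fin (n+2), Fin (t i)) ≃ (Fin (t 0) ⊕ Fin (t 1)) ⊕ (Σ i : Fin n, Fin (t i.succ.succ)) :=
    ((sigmaFinSucc (fun i : Fin (n+2) => Fin (t i))).trans
      ((Equiv.refl (Fin (t 0))).sumCongr F)).trans
      (Equiv.sumAssoc _ _ _).symm
  refine DD_congr E E (ρ2 n) (ρ2_inj n) ?_ ?_ <;>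
    (rintro ⟨i, v⟩
     rcases Fin.eq_zero_or_eq_succ i with rfl | ⟨j, rfl⟩
     · rw [ρ2_zero]
       show k2 _ (E ⟨0, v⟩) = none
       simp only [E, Equiv.trans_apply, sigmaFinSucc_zero]
       rfl
     · rw [ρ2_succ]
       show k2 _ (E ⟨j.succ, v⟩) = _
       simp only [E, Equiv.trans_apply, sigmaFinSucc_succ]
       rcases Fin.eq_zero_or_eq_succ j with rfl | ⟨j', rfl⟩
       · rw [Fin.cases_zero]
         simp only [F, Equiv.sumCongr_apply, Equiv.trans_apply, sigmaFinSucc_zero]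
         rfl
       · rw [Fin.cases_succ]
         simp only [F, Equiv.sumCongr_apply, Equiv.trans_apply, sigmaFinSucc_succ]
         rfl)

lemma gd1 (n : ℕ) (t' : Fin (n+1) → ℕ) (rest : Fin n → ℕ) (m : ℕ)
    (h0 : t' 0 = m) (hs : ∀ i : Fin n, t' i.succ = rest i) :
    gdCount (n+1) t' = Dm (R := Σ i : Fin n, Fin (rest i)) (Sigma.fst) m := by
  rw [gdCount_eq_DD, Dm]
  let E : (Σ i : Fin (n+1), Fin (t' i)) ≃ Fin m ⊕ (Σ i : Fin n, Fin (rest i)) :=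
    (sigmaFinSucc (fun i : Fin (n+1) => Fin (t' i))).trans
      ((finCongr h0).sumCongr
        (Equiv.sigmaCongrRight (fun i : Fin n => finCongr (hs i))))
  refine DD_congr E E (ρ1 n) (ρ1_inj n) ?_ ?_ <;>
    (rintro ⟨i, v⟩
     rcases Fin.eq_zero_or_eq_succ i with rfl | ⟨j, rfl⟩
     · rw [ρ1_zero]
       show k1 _ (E ⟨0, v⟩) = none
       simp only [E, Equiv.trans_apply, sigmaFinSucc_zero]
       rfl
     · rw [ρ1_succ]
       show k1 _ (E ⟨j.succ, v⟩) = _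
       simp only [E, Equiv.trans_apply, sigmaFinSucc_succ]
       rfl)

theorem gd_merge_two_sets (n : ℕ) (t : Fin (n + 2) → ℕ) :
    gdCount (n + 2) t =
      ∑ l ∈ Finset.range (t 0 + t 1 + 1),
        fGD (t 0) (t 1) l *
          gdCount (n + 1) (Fin.cons (t 0 + t 1 - l) (fun i : Fin n => t i.succ.succ)) := by
  rw [gd2, main_abstract]
  simp only [Fintype.card_fin]
  refine Finset.sum_congr rfl ?_
  intro l hl
  rw [gd1 n (Fin.cons (t 0 + t 1 - l) (fun i : Fin n => t i.succ.succ))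
      (fun i : Fin n => t i.succ.succ) (t 0 + t 1 - l) (by simp) (by intro i; simp)]
end

section
/- The number of generalized derangements with three sets satisfies P(t₁,t₂,t₃) = t₁!·t₂!·t₃!·Σ_{l₁=0}^{t₁+t₂−t₃} C(t₂,l₁)·C(t₃,t₁−l₁)·C(t₁,t₃−t₂+l₁); equivalently, P'(t₁,t₂,t₃) = Σ_{l₁} C(t₂,l₁)·C(t₃,t₁−l₁)·C(t₁,t₃−t₂+l₁). -/
/-- Binomial coefficient with an integer lower index, zero when the index is negative. -/
def chooseZ (a : ℕ) (b : ℤ) : ℕ := if 0 ≤ b then a.choose b.toNat else 0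

open Finset

section StepA

variable {n : ℕ}

lemma card_filter_sigma_s7 {β : Fin n → Type*} [∀ i, Fintype (β i)] [∀ i, DecidableEq (β i)]
    (p : (Σ i, β i) → Prop) [DecidablePred p] :
    (univ.filter p).card = ∑ i, (univ.filter fun k : β i => p ⟨i,k⟩).card := by
  rw [← Finset.card_sigma]; congr 1; ext ⟨i,k⟩; simp

variable (t : Fin n → ℕ)

abbrev GD := {σ : Equiv.Perm (Σ i : Fin n, Fin (t i)) // ∀ x, (σ x).1 ≠ x.1}
abbrev AFL := {w : (Σ i : Fin n, Fin (t i)) → Fin n //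
    (∀ j, (Finset.univ.filter fun x => w x = j).card = t j) ∧ ∀ x, w x ≠ x.1}

lemma card_fst_fiber (j : Fin n) :
    (univ.filter fun x : Σ i, Fin (t i) => x.1 = j).card = t j := by
  rw [card_filter_sigma_s7]
  have h : ∀ i : Fin n,
      (univ.filter fun _ : Fin (t i) => i = j).card = if i = j then t i else 0 := by
    intro i
    by_cases h : i = j <;> simp [h, Finset.filter_const]
  simp only [h]
  simp

def Fword : GD t → AFL t := fun σ =>
  ⟨fun x => (σ.1 x).1, ⟨fun j => by
    rw [← card_fst_fiber t j]
    apply Finset.card_bij (fun x _ => σ.1 x)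
    · intro a ha; simp at ha ⊢; exact ha
    · intro a _ b _ h; exact σ.1.injective h
    · intro y hy
      refine ⟨σ.1.symm y, ?_, by simp⟩
      simp at hy ⊢
      exact hy,
   fun x => σ.2 x⟩⟩

def fiberEquiv (w : AFL t) :
    {σ : GD t // Fword t σ = w} ≃
      {σ : Equiv.Perm (Σ i : Fin n, Fin (t i)) // ∀ x, (σ x).1 = w.1 x} where
  toFun p := ⟨p.1.1, fun x => congrFun (congrArg Subtype.val p.2) x⟩
  invFun p := ⟨⟨p.1, fun x => by rw [p.2]; exact w.2.2 x⟩, Subtype.ext (funext p.2)⟩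
  left_inv p := Subtype.ext (Subtype.ext rfl)
  right_inv p := Subtype.ext rfl

def sigmaFstFiber (β : Fin n → Type*) (j : Fin n) : {y : Σ i, β i // y.1 = j} ≃ β j where
  toFun y := y.2 ▸ y.1.2
  invFun b := ⟨⟨j, b⟩, rfl⟩
  left_inv := by rintro ⟨⟨i, b⟩, rfl⟩; rfl
  right_inv b := rfl

def fiberEquiv2 (w : AFL t) :
    {σ : Equiv.Perm (Σ i : Fin n, Fin (t i)) // ∀ x, (σ x).1 = w.1 x} ≃
      (Π j, ({x : Σ i : Fin n, Fin (t i) // w.1 x = j} ≃ Fin (t j))) where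
  toFun σ j := ((Equiv.subtypeEquiv σ.1 (fun x => by rw [σ.2 x])).trans (sigmaFstFiber _ j))
  invFun b := ⟨(Equiv.sigmaFiberEquiv w.1).symm.trans (Equiv.sigmaCongrRight b), fun x => rfl⟩
  left_inv σ := by
    apply Subtype.ext
    apply Equiv.ext
    intro x
    exact congrArg Subtype.val
      ((sigmaFstFiber (fun i => Fin (t i)) (w.1 x)).symm_apply_apply ⟨σ.1 x, σ.2 x⟩)
  right_inv b := by
    funext j
    apply Equiv.ext
    rintro ⟨x, hx⟩
    cases hx
    rfl

lemma card_fiber_s7 {t : Fin n → ℕ} (w : AFL t) :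
    Fintype.card {σ : GD t // Fword t σ = w} = ∏ j, (t j).factorial := by
  rw [Fintype.card_congr ((fiberEquiv t w).trans (fiberEquiv2 t w)), Fintype.card_pi]
  congr 1
  funext j
  have h1 : Fintype.card {x : Σ i : Fin n, Fin (t i) // w.1 x = j} = t j := by
    rw [Fintype.card_subtype]
    exact w.2.1 j
  have h2 : Fintype.card {x : Σ i : Fin n, Fin (t i) // w.1 x = j}
      = Fintype.card (Fin (t j)) := by simp [h1]
  rw [Fintype.card_equiv (Fintype.equivOfCardEq h2), h1]

lemma gd_eq_prod_mul_afl (n : ℕ) (t : Fin n → ℕ) :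
    gdCount n t = (∏ j, (t j).factorial) * aflCount n t := by
  have h : gdCount n t = Fintype.card (GD t) := rfl
  rw [h, Fintype.card_congr (Equiv.sigmaFiberEquiv (Fword t)).symm, Fintype.card_sigma]
  simp only [card_fiber_s7]
  rw [Finset.sum_const, smul_eq_mul, mul_comm]
  rfl

end StepA

section StepB

variable (t₁ t₂ t₃ : ℕ)

abbrev S3 (t₁ t₂ t₃ : ℕ) := Σ i : Fin 3, Fin (![t₁,t₂,t₃] i)

def toTriple (w : S3 t₁ t₂ t₃ → Fin 3) :
    Finset (Fin t₁) × Finset (Fin t₂) × Finset (Fin t₃) :=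
  (univ.filter fun k : Fin t₁ => w ⟨0,k⟩ = 1,
   univ.filter fun k : Fin t₂ => w ⟨1,k⟩ = 0,
   univ.filter fun k : Fin t₃ => w ⟨2,k⟩ = 0)

def ofTriple (p : Finset (Fin t₁) × Finset (Fin t₂) × Finset (Fin t₃)) :
    S3 t₁ t₂ t₃ → Fin 3 := fun x =>
  match x with
  | ⟨⟨0,_⟩,k⟩ => if @id (Fin t₁) k ∈ p.1 then 1 else 2
  | ⟨⟨1,_⟩,k⟩ => if @id (Fin t₂) k ∈ p.2.1 then 0 else 2
  | ⟨⟨2,_⟩,k⟩ => if @id (Fin t₃) k ∈ p.2.2 then 0 else 1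

def E : {w : S3 t₁ t₂ t₃ → Fin 3 // ∀ x, w x ≠ x.1} ≃
    (Finset (Fin t₁) × Finset (Fin t₂) × Finset (Fin t₃)) where
  toFun w := toTriple t₁ t₂ t₃ w.1
  invFun p := ⟨ofTriple t₁ t₂ t₃ p, by
    rintro ⟨⟨(_|_|_|i),hi⟩,k⟩
    · change Fin t₁ at k; dsimp only [ofTriple]; split_ifs <;>
        (intro h; exact absurd (congrArg Fin.val h) (by simp))
    · change Fin t₂ at k; dsimp only [ofTriple]; split_ifs <;>
        (intro h; exact absurd (congrArg Fin.val h) (by simp))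
    · change Fin t₃ at k; dsimp only [ofTriple]; split_ifs <;>
        (intro h; exact absurd (congrArg Fin.val h) (by simp))
    · exact absurd hi (by omega)⟩
  left_inv w := by
    obtain ⟨w, hw⟩ := w
    apply Subtype.ext
    funext x
    have h2 : ∀ a : Fin 3, a ≠ 0 → a ≠ 1 → a = 2 := by decide
    have h1 : ∀ a : Fin 3, a ≠ 1 → a ≠ 0 → a = 2 := by decide
    have h0 : ∀ a : Fin 3, a ≠ 2 → a ≠ 0 → a = 1 := by decide
    rcases x with ⟨⟨(_|_|_|i),hi⟩,k⟩
    · change Fin t₁ at k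
      show (if k ∈ univ.filter (fun k : Fin t₁ => w ⟨0,k⟩ = 1) then (1:Fin 3) else 2) = _
      simp only [mem_filter, mem_univ, true_and]
      split_ifs with h
      · exact h.symm
      · exact (h2 _ (hw ⟨⟨0,hi⟩,k⟩) h).symm
    · change Fin t₂ at k
      show (if k ∈ univ.filter (fun k : Fin t₂ => w ⟨1,k⟩ = 0) then (0:Fin 3) else 2) = _
      simp only [mem_filter, mem_univ, true_and]
      split_ifs with h
      · exact h.symm
      · exact (h1 _ (hw ⟨⟨1,hi⟩,k⟩) h).symm
    · change Fin t₃ at k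
      show (if k ∈ univ.filter (fun k : Fin t₃ => w ⟨2,k⟩ = 0) then (0:Fin 3) else 1) = _
      simp only [mem_filter, mem_univ, true_and]
      split_ifs with h
      · exact h.symm
      · exact (h0 _ (hw ⟨⟨2,hi⟩,k⟩) h).symm
    · exact absurd hi (by omega)
  right_inv p := by
    obtain ⟨A, B, C⟩ := p
    refine Prod.ext ?_ (Prod.ext ?_ ?_)
    · ext k
      show k ∈ univ.filter (fun k : Fin t₁ => (if k ∈ A then (1:Fin 3) else 2) = 1) ↔ k ∈ A
      by_cases h : k ∈ A <;> simp [h]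
    · ext k
      show k ∈ univ.filter (fun k : Fin t₂ => (if k ∈ B then (0:Fin 3) else 2) = 0) ↔ k ∈ B
      by_cases h : k ∈ B <;> simp [h]
    · ext k
      show k ∈ univ.filter (fun k : Fin t₃ => (if k ∈ C then (0:Fin 3) else 1) = 0) ↔ k ∈ C
      by_cases h : k ∈ C <;> simp [h]

lemma counts_iff (w : S3 t₁ t₂ t₃ → Fin 3) (hw : ∀ x, w x ≠ x.1) :
    (∀ j, (univ.filter fun x => w x = j).card = ![t₁,t₂,t₃] j) ↔
    ((univ.filter fun k : Fin t₂ => w ⟨1,k⟩ = 0).card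
        + (univ.filter fun k : Fin t₃ => w ⟨2,k⟩ = 0).card = t₁ ∧
      (univ.filter fun k : Fin t₁ => w ⟨0,k⟩ = 1).card + t₃
        = t₂ + (univ.filter fun k : Fin t₃ => w ⟨2,k⟩ = 0).card) := by
  have k0 : ∀ j : Fin 3, (univ.filter fun x : S3 t₁ t₂ t₃ => w x = j).card
      = (univ.filter fun k : Fin t₁ => w ⟨0,k⟩ = j).card
      + (univ.filter fun k : Fin t₂ => w ⟨1,k⟩ = j).card
      + (univ.filter fun k : Fin t₃ => w ⟨2,k⟩ = j).card := by
    intro j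
    rw [card_filter_sigma_s7, Fin.sum_univ_three]
    rfl
  have fact0 : ∀ a : Fin 3, a ≠ 0 → (a = 1 ↔ ¬ a = 2) := by decide
  have fact1 : ∀ a : Fin 3, a ≠ 1 → (a = 0 ↔ ¬ a = 2) := by decide
  have fact2 : ∀ a : Fin 3, a ≠ 2 → (a = 0 ↔ ¬ a = 1) := by decide
  have z0 : (univ.filter fun k : Fin t₁ => w ⟨0,k⟩ = 0).card = 0 := by
    rw [Finset.card_eq_zero, Finset.filter_eq_empty_iff]
    intro k _; exact hw ⟨0,k⟩
  have z1 : (univ.filter fun k : Fin t₂ => w ⟨1,k⟩ = 1).card = 0 := by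
    rw [Finset.card_eq_zero, Finset.filter_eq_empty_iff]
    intro k _; exact hw ⟨1,k⟩
  have z2 : (univ.filter fun k : Fin t₃ => w ⟨2,k⟩ = 2).card = 0 := by
    rw [Finset.card_eq_zero, Finset.filter_eq_empty_iff]
    intro k _; exact hw ⟨2,k⟩
  have comp0 : (univ.filter fun k : Fin t₁ => w ⟨0,k⟩ = 1).card
      + (univ.filter fun k : Fin t₁ => w ⟨0,k⟩ = 2).card = t₁ := by
    have e : (univ.filter fun k : Fin t₁ => w ⟨0,k⟩ = 1)
        = (univ.filter fun k : Fin t₁ => ¬ w ⟨0,k⟩ = 2) := by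
      apply Finset.filter_congr
      intro k _
      exact fact0 _ (hw ⟨0,k⟩)
    rw [e, add_comm]
    simpa using Finset.card_filter_add_card_filter_not
      (s := (univ : Finset (Fin t₁))) (p := fun k => w ⟨0,k⟩ = 2)
  have comp1 : (univ.filter fun k : Fin t₂ => w ⟨1,k⟩ = 0).card
      + (univ.filter fun k : Fin t₂ => w ⟨1,k⟩ = 2).card = t₂ := by
    have e : (univ.filter fun k : Fin t₂ => w ⟨1,k⟩ = 0)
        = (univ.filter fun k : Fin t₂ => ¬ w ⟨1,k⟩ = 2) := by
      apply Finset.filter_congr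
      intro k _
      exact fact1 _ (hw ⟨1,k⟩)
    rw [e, add_comm]
    simpa using Finset.card_filter_add_card_filter_not
      (s := (univ : Finset (Fin t₂))) (p := fun k => w ⟨1,k⟩ = 2)
  have comp2 : (univ.filter fun k : Fin t₃ => w ⟨2,k⟩ = 0).card
      + (univ.filter fun k : Fin t₃ => w ⟨2,k⟩ = 1).card = t₃ := by
    have e : (univ.filter fun k : Fin t₃ => w ⟨2,k⟩ = 0)
        = (univ.filter fun k : Fin t₃ => ¬ w ⟨2,k⟩ = 1) := by
      apply Finset.filter_congr
      intro k _
      exact fact2 _ (hw ⟨2,k⟩)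
    rw [e, add_comm]
    simpa using Finset.card_filter_add_card_filter_not
      (s := (univ : Finset (Fin t₃))) (p := fun k => w ⟨2,k⟩ = 1)
  constructor
  · intro h
    have h0 := h 0; have h1 := h 1; have h2 := h 2
    rw [k0] at h0 h1 h2
    simp only [Matrix.cons_val_zero, Matrix.cons_val_one, Matrix.head_cons,
      Matrix.cons_val_two, Matrix.tail_cons] at h0 h1 h2
    omega
  · rintro ⟨h1, h2⟩ j
    have hj : j = 0 ∨ j = 1 ∨ j = 2 := by fin_cases j <;> simp
    rcases hj with rfl | rfl | rfl <;> rw [k0] <;>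
      simp only [Matrix.cons_val_zero, Matrix.cons_val_one, Matrix.head_cons,
        Matrix.cons_val_two, Matrix.tail_cons] <;> omega

lemma chooseZ_eq_zero_of_lt {m : ℕ} {b : ℤ} (h : (m:ℤ) < b) : chooseZ m b = 0 := by
  unfold chooseZ
  rw [if_pos (by omega)]
  exact Nat.choose_eq_zero_of_lt (by omega)

lemma chooseZ_symm (m : ℕ) (b : ℤ) : chooseZ m ((m:ℤ) - b) = chooseZ m b := by
  unfold chooseZ
  by_cases h0 : 0 ≤ b
  · by_cases h1 : b ≤ (m:ℤ)
    · rw [if_pos (by omega), if_pos h0]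
      have e : ((m:ℤ)-b).toNat = m - b.toNat := by omega
      rw [e]
      exact Nat.choose_symm (by omega)
    · rw [if_neg (by omega), if_pos h0]
      exact (Nat.choose_eq_zero_of_lt (by omega)).symm
  · rw [if_pos (by omega), if_neg h0]
    exact Nat.choose_eq_zero_of_lt (by omega)

lemma card_filter_card_eq (m k : ℕ) :
    (univ.filter fun A : Finset (Fin m) => A.card = k).card = m.choose k := by
  have e : univ.filter (fun A : Finset (Fin m) => A.card = k) = Finset.powersetCard k univ := by
    ext A; simp [Finset.mem_powersetCard]
  rw [e, Finset.card_powersetCard, Finset.card_univ, Fintype.card_fin]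

lemma card_filter_card_add (m a b : ℕ) :
    (univ.filter fun A : Finset (Fin m) => A.card + a = b).card = chooseZ m ((b:ℤ) - a) := by
  by_cases h : a ≤ b
  · have e : (univ.filter fun A : Finset (Fin m) => A.card + a = b)
        = univ.filter fun A : Finset (Fin m) => A.card = b - a :=
      Finset.filter_congr fun A _ => by omega
    rw [e, card_filter_card_eq]
    unfold chooseZ
    rw [if_pos (by omega)]
    congr 1
    omega
  · have e : (univ.filter fun A : Finset (Fin m) => A.card + a = b) = ∅ :=
      Finset.filter_eq_empty_iff.mpr fun A _ => by omega
    rw [e, Finset.card_empty]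
    unfold chooseZ
    rw [if_neg (by omega)]

lemma triple_count :
    (univ.filter fun p : Finset (Fin t₁) × Finset (Fin t₂) × Finset (Fin t₃) =>
        p.2.1.card + p.2.2.card = t₁ ∧ p.1.card + t₃ = t₂ + p.2.2.card).card
    = ∑ l₁ ∈ Finset.range (t₂+1),
        t₂.choose l₁ * chooseZ t₃ ((t₁:ℤ) - l₁) * chooseZ t₁ ((t₃:ℤ) - t₂ + l₁) := by
  rw [Finset.card_eq_sum_card_fiberwise (f := fun p => p.2.1.card)
    (t := Finset.range (t₂+1)) (fun p _ => by
      simp only [Finset.mem_coe, Finset.mem_range]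
      have : p.2.1.card ≤ t₂ := by simpa using Finset.card_le_univ p.2.1
      omega)]
  apply Finset.sum_congr rfl
  intro l₁ _
  rw [Finset.filter_filter]
  have e : (univ.filter fun p : Finset (Fin t₁) × Finset (Fin t₂) × Finset (Fin t₃) =>
        (p.2.1.card + p.2.2.card = t₁ ∧ p.1.card + t₃ = t₂ + p.2.2.card) ∧ p.2.1.card = l₁)
      = univ.filter fun p => (p.1.card + (t₃ + l₁) = t₂ + t₁)
          ∧ (p.2.1.card = l₁ ∧ p.2.2.card + l₁ = t₁) :=
    Finset.filter_congr fun p _ => by omega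
  rw [e, ← Finset.univ_product_univ,
    Finset.filter_product (fun A : Finset (Fin t₁) => A.card + (t₃ + l₁) = t₂ + t₁)
      (fun r : Finset (Fin t₂) × Finset (Fin t₃) => r.1.card = l₁ ∧ r.2.card + l₁ = t₁),
    Finset.card_product, ← Finset.univ_product_univ,
    Finset.filter_product (fun B : Finset (Fin t₂) => B.card = l₁)
      (fun C : Finset (Fin t₃) => C.card + l₁ = t₁),
    Finset.card_product,
    card_filter_card_add, card_filter_card_eq, card_filter_card_add]
  have e2 : chooseZ t₁ ((t₂ + t₁ : ℕ) - (t₃ + l₁ : ℕ) : ℤ) = chooseZ t₁ ((t₃:ℤ) - t₂ + l₁) := by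
    rw [show ((t₂ + t₁ : ℕ) - (t₃ + l₁ : ℕ) : ℤ) = (t₁:ℤ) - ((t₃:ℤ) - t₂ + l₁) by push_cast; ring]
    exact chooseZ_symm t₁ _
  rw [e2]
  ring

lemma sum_range_switch :
    (∑ l₁ ∈ Finset.range (t₂+1),
        t₂.choose l₁ * chooseZ t₃ ((t₁:ℤ) - l₁) * chooseZ t₁ ((t₃:ℤ) - t₂ + l₁))
    = ∑ l₁ ∈ Finset.range (t₁ + t₂ - t₃ + 1),
        t₂.choose l₁ * chooseZ t₃ ((t₁:ℤ) - l₁) * chooseZ t₁ ((t₃:ℤ) - t₂ + l₁) := by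
  have h1 : (∑ l₁ ∈ Finset.range (t₂+1),
      t₂.choose l₁ * chooseZ t₃ ((t₁:ℤ) - l₁) * chooseZ t₁ ((t₃:ℤ) - t₂ + l₁))
      = ∑ l₁ ∈ Finset.range (t₁+t₂+2),
      t₂.choose l₁ * chooseZ t₃ ((t₁:ℤ) - l₁) * chooseZ t₁ ((t₃:ℤ) - t₂ + l₁) := by
    apply Finset.sum_subset (Finset.range_subset_range.mpr (by omega))
    intro x _ hx
    simp only [Finset.mem_range] at hx
    rw [Nat.choose_eq_zero_of_lt (by omega), zero_mul, zero_mul]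
  have h2 : (∑ l₁ ∈ Finset.range (t₁+t₂-t₃+1),
      t₂.choose l₁ * chooseZ t₃ ((t₁:ℤ) - l₁) * chooseZ t₁ ((t₃:ℤ) - t₂ + l₁))
      = ∑ l₁ ∈ Finset.range (t₁+t₂+2),
      t₂.choose l₁ * chooseZ t₃ ((t₁:ℤ) - l₁) * chooseZ t₁ ((t₃:ℤ) - t₂ + l₁) := by
    apply Finset.sum_subset (Finset.range_subset_range.mpr (by omega))
    intro x _ hx
    simp only [Finset.mem_range] at hx
    rw [show chooseZ t₁ ((t₃:ℤ) - t₂ + x) = 0 from chooseZ_eq_zero_of_lt (by omega), mul_zero]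
  rw [h1, ← h2]

lemma afl_three : aflCount 3 ![t₁,t₂,t₃]
    = ∑ l₁ ∈ Finset.range (t₁ + t₂ - t₃ + 1),
        t₂.choose l₁ * chooseZ t₃ ((t₁:ℤ) - l₁) * chooseZ t₁ ((t₃:ℤ) - t₂ + l₁) := by
  have swap : {w : S3 t₁ t₂ t₃ → Fin 3 //
      (∀ j, (univ.filter fun x => w x = j).card = ![t₁,t₂,t₃] j) ∧ ∀ x, w x ≠ x.1}
      ≃ {v : {w : S3 t₁ t₂ t₃ → Fin 3 // ∀ x, w x ≠ x.1} //
          ∀ j, (univ.filter fun x => v.1 x = j).card = ![t₁,t₂,t₃] j} :=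
    { toFun := fun w => ⟨⟨w.1, w.2.2⟩, w.2.1⟩
      invFun := fun v => ⟨v.1.1, v.2, v.1.2⟩
      left_inv := fun w => rfl
      right_inv := fun v => rfl }
  have c1 : aflCount 3 ![t₁,t₂,t₃] = Fintype.card
      {p : Finset (Fin t₁) × Finset (Fin t₂) × Finset (Fin t₃) //
        p.2.1.card + p.2.2.card = t₁ ∧ p.1.card + t₃ = t₂ + p.2.2.card} :=
    Fintype.card_congr (swap.trans (Equiv.subtypeEquiv (E t₁ t₂ t₃)
      (fun v => counts_iff t₁ t₂ t₃ v.1 v.2)))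
  rw [c1, Fintype.card_subtype, triple_count, sum_range_switch]

end StepB

theorem gd_three_sets (t₁ t₂ t₃ : ℕ) :
    gdCount 3 ![t₁, t₂, t₃] =
        Nat.factorial t₁ * Nat.factorial t₂ * Nat.factorial t₃ *
          ∑ l₁ ∈ Finset.range (t₁ + t₂ - t₃ + 1),
            t₂.choose l₁ * chooseZ t₃ ((t₁ : ℤ) - l₁) * chooseZ t₁ ((t₃ : ℤ) - t₂ + l₁) ∧
      aflCount 3 ![t₁, t₂, t₃] =
        ∑ l₁ ∈ Finset.range (t₁ + t₂ - t₃ + 1),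
          t₂.choose l₁ * chooseZ t₃ ((t₁ : ℤ) - l₁) * chooseZ t₁ ((t₃ : ℤ) - t₂ + l₁) := by
  constructor
  · rw [gd_eq_prod_mul_afl 3 ![t₁,t₂,t₃], afl_three t₁ t₂ t₃, Fin.prod_univ_three]
    simp only [Matrix.cons_val_zero, Matrix.cons_val_one, Matrix.head_cons,
      Matrix.cons_val_two, Matrix.tail_cons]
  · exact afl_three t₁ t₂ t₃
end

section
/- Define f(t₁,t₂,l) = Σ_{l₁=0}^{l} C(t₁,l₁)C(t₂,l₁)l₁!·C(t₁,l−l₁)C(t₂,l−l₁)(l−l₁)!. If t₁ ≥ t₂ ≥ 1, then f(t₁,t₂,l) ≥ f(t₁+1,t₂−1,l) for every l ≥ 0. -/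
lemma key_choose (t₁ t₂ a : ℕ) (h₁ : t₂ ≤ t₁) (h₂ : 1 ≤ t₂) :
    (t₁ + 1).choose a * (t₂ - 1).choose a ≤ t₁.choose a * t₂.choose a := by
  rcases le_or_gt a (t₂ - 1) with ha | ha
  · have hat2 : a ≤ t₂ := le_trans ha (Nat.sub_le _ _)
    have hat1 : a ≤ t₁ := le_trans hat2 h₁
    have h1 : t₁.choose a * (t₁ + 1) = (t₁ + 1).choose a * (t₁ + 1 - a) :=
      Nat.choose_mul_succ_eq t₁ a
    have h2 : (t₂ - 1).choose a * t₂ = t₂.choose a * (t₂ - a) := by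
      have := Nat.choose_mul_succ_eq (t₂ - 1) a
      rwa [Nat.sub_add_cancel h₂] at this
    have hpos : 0 < (t₁ + 1 - a) * t₂ := by
      have : 0 < t₁ + 1 - a := by omega
      exact Nat.mul_pos this h₂
    apply Nat.le_of_mul_le_mul_right _ hpos
    have hcoef : (t₁ + 1) * (t₂ - a) ≤ (t₁ + 1 - a) * t₂ := by
      zify [hat2, (show a ≤ t₁ + 1 by omega)]
      nlinarith
    calc (t₁ + 1).choose a * (t₂ - 1).choose a * ((t₁ + 1 - a) * t₂)
        = ((t₁ + 1).choose a * (t₁ + 1 - a)) * ((t₂ - 1).choose a * t₂) := by ring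
      _ = (t₁.choose a * (t₁ + 1)) * (t₂.choose a * (t₂ - a)) := by rw [← h1, ← h2]
      _ = (t₁.choose a * t₂.choose a) * ((t₁ + 1) * (t₂ - a)) := by ring
      _ ≤ (t₁.choose a * t₂.choose a) * ((t₁ + 1 - a) * t₂) :=
          Nat.mul_le_mul_left _ hcoef
  · have : (t₂ - 1).choose a = 0 := Nat.choose_eq_zero_of_lt ha
    simp [this]

theorem f_antitone (t₁ t₂ l : ℕ) (h₁ : t₂ ≤ t₁) (h₂ : 1 ≤ t₂) :
    fGD (t₁ + 1) (t₂ - 1) l ≤ fGD t₁ t₂ l := by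
  unfold fGD
  apply Finset.sum_le_sum
  intro l₁ _
  have k1 := key_choose t₁ t₂ l₁ h₁ h₂
  have k2 := key_choose t₁ t₂ (l - l₁) h₁ h₂
  calc (t₁ + 1).choose l₁ * (t₂ - 1).choose l₁ * l₁.factorial * (t₁ + 1).choose (l - l₁) *
        (t₂ - 1).choose (l - l₁) * (l - l₁).factorial
      = ((t₁ + 1).choose l₁ * (t₂ - 1).choose l₁) *
          ((t₁ + 1).choose (l - l₁) * (t₂ - 1).choose (l - l₁)) *
          (l₁.factorial * (l - l₁).factorial) := by ring
    _ ≤ (t₁.choose l₁ * t₂.choose l₁) * (t₁.choose (l - l₁) * t₂.choose (l - l₁)) *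
          (l₁.factorial * (l - l₁).factorial) :=
        Nat.mul_le_mul (Nat.mul_le_mul k1 k2) le_rfl
    _ = t₁.choose l₁ * t₂.choose l₁ * l₁.factorial * t₁.choose (l - l₁) *
          t₂.choose (l - l₁) * (l - l₁).factorial := by ring
end

section
/- If t₁ ≥ t₂ ≥ 1, then P(t₁,t₂,t₃,…,tₙ) ≥ P(t₁+1,t₂−1,t₃,…,tₙ). -/
namespace GdT

open Finset

variable {X Y : Type} [Fintype X] [Fintype Y] [DecidableEq X] [DecidableEq Y]

/-- Number of label-avoiding bijections. -/
def M (f : X → ℕ) (g : Y → ℕ) : ℕ := Fintype.card {σ : X ≃ Y // ∀ x, g (σ x) ≠ f x}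

/-- Count of elements with label `j`. -/
def cc (f : X → ℕ) (j : ℕ) : ℕ := (univ.filter (fun x => f x = j)).card

/-- Restriction of a labelling to the complement of a point. -/
def res (f : X → ℕ) (p : X) : {x // x ≠ p} → ℕ := fun z => f z.1

set_option linter.unusedSectionVars false in
@[simp] lemma res_apply (f : X → ℕ) (p : X) (z : {x // x ≠ p}) : res f p z = f z.1 := rfl

lemma M_symm (f : X → ℕ) (g : Y → ℕ) : M f g = M g f := by
  refine Fintype.card_congr ⟨fun σ => ⟨σ.1.symm, fun y => ?_⟩, fun σ => ⟨σ.1.symm, fun x => ?_⟩,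
    fun σ => ?_, fun σ => ?_⟩
  · have := σ.2 (σ.1.symm y); simpa using this.symm
  · have := σ.2 (σ.1.symm x); simpa using this.symm
  · apply Subtype.ext; apply Equiv.ext; intro x; simp
  · apply Subtype.ext; apply Equiv.ext; intro x; simp

lemma M_congr_left {X' : Type} [Fintype X'] [DecidableEq X'] (e : X' ≃ X)
    (f' : X' → ℕ) (f : X → ℕ) (g : Y → ℕ) (h : ∀ x', f' x' = f (e x')) :
    M f' g = M f g := by
  refine Fintype.card_congr ⟨fun σ => ⟨e.symm.trans σ.1, fun x => ?_⟩,
    fun σ => ⟨e.trans σ.1, fun x' => ?_⟩, fun σ => ?_, fun σ => ?_⟩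
  · have := σ.2 (e.symm x); rwa [h, e.apply_symm_apply] at this
  · rw [h]; exact σ.2 (e x')
  · apply Subtype.ext; apply Equiv.ext; intro x; simp
  · apply Subtype.ext; apply Equiv.ext; intro x; simp

lemma M_congr_right {Y' : Type} [Fintype Y'] [DecidableEq Y'] (e : Y' ≃ Y)
    (f : X → ℕ) (g' : Y' → ℕ) (g : Y → ℕ) (h : ∀ y', g' y' = g (e y')) :
    M f g' = M f g := by
  refine Fintype.card_congr ⟨fun σ => ⟨σ.1.trans e, fun x => ?_⟩,
    fun σ => ⟨σ.1.trans e.symm, fun x => ?_⟩, fun σ => ?_, fun σ => ?_⟩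
  · have := σ.2 x
    simp only [Equiv.trans_apply]
    rw [← h]
    exact this
  · have := σ.2 x
    simp only [Equiv.trans_apply]
    rw [h, e.apply_symm_apply]
    exact this
  · apply Subtype.ext; apply Equiv.ext; intro x; simp
  · apply Subtype.ext; apply Equiv.ext; intro x; simp

/-- Extend an equivalence of punctured types to the full types. -/
def extendEquiv (p : X) (q : Y) (τ : {x // x ≠ p} ≃ {y // y ≠ q}) : X ≃ Y where
  toFun x := if h : x = p then q else (τ ⟨x, h⟩).1
  invFun y := if h : y = q then p else (τ.symm ⟨y, h⟩).1
  left_inv x := by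
    by_cases h : x = p
    · subst h; simp
    · simp only [dif_neg h]
      rw [dif_neg (τ ⟨x, h⟩).2]
      simp
  right_inv y := by
    by_cases h : y = q
    · subst h; simp
    · simp only [dif_neg h]
      rw [dif_neg (τ.symm ⟨y, h⟩).2]
      simp

@[simp] lemma extendEquiv_self (p : X) (q : Y) (τ : {x // x ≠ p} ≃ {y // y ≠ q}) :
    extendEquiv p q τ p = q := dif_pos rfl

lemma extendEquiv_ne (p : X) (q : Y) (τ : {x // x ≠ p} ≃ {y // y ≠ q}) {x : X} (h : x ≠ p) :
    extendEquiv p q τ x = (τ ⟨x, h⟩).1 := dif_neg h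

/-- Decompose a label-avoiding bijection with prescribed value at `p`. -/
def sliceEquiv (f : X → ℕ) (g : Y → ℕ) (p : X) (q : Y) (hq : g q ≠ f p) :
    {σ : X ≃ Y // (∀ x, g (σ x) ≠ f x) ∧ σ p = q} ≃
    {τ : {x // x ≠ p} ≃ {y // y ≠ q} // ∀ z, res g q (τ z) ≠ res f p z} where
  toFun σ := ⟨σ.1.subtypeEquiv (fun x => by
      rw [not_iff_not, ← Equiv.apply_eq_iff_eq σ.1 (x := x) (y := p), σ.2.2]), by
    intro z
    simp only [res_apply, Equiv.subtypeEquiv_apply]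
    exact σ.2.1 z.1⟩
  invFun τ := ⟨extendEquiv p q τ.1, by
    refine ⟨fun x => ?_, extendEquiv_self p q τ.1⟩
    by_cases h : x = p
    · subst h; rw [extendEquiv_self]; exact hq
    · rw [extendEquiv_ne p q τ.1 h]; exact τ.2 ⟨x, h⟩⟩
  left_inv σ := by
    apply Subtype.ext; apply Equiv.ext; intro x
    by_cases h : x = p
    · subst h; simp [σ.2.2]
    · rw [extendEquiv_ne _ _ _ h]; simp
  right_inv τ := by
    apply Subtype.ext; apply Equiv.ext; intro z
    apply Subtype.ext
    simp only [Equiv.subtypeEquiv_apply]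
    rw [extendEquiv_ne _ _ _ z.2]

/-- The slicing recurrence. -/
lemma M_slice (f : X → ℕ) (g : Y → ℕ) (p : X) :
    M f g = ∑ q ∈ univ.filter (fun q => g q ≠ f p),
      M (res f p) (res g q) := by
  rw [M, Fintype.card_subtype]
  rw [Finset.card_eq_sum_card_fiberwise
    (f := fun σ : X ≃ Y => σ p) (t := univ.filter fun q => g q ≠ f p) ?hmem]
  case hmem =>
    intro σ hσ
    simp only [mem_coe, mem_filter, mem_univ, true_and] at hσ ⊢
    exact hσ p
  refine Finset.sum_congr rfl (fun q hq => ?_)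
  have hq' : g q ≠ f p := by simpa using (mem_filter.mp hq).2
  rw [Finset.filter_filter]
  rw [M, ← Fintype.card_subtype (p := fun σ : X ≃ Y => (∀ x, g (σ x) ≠ f x) ∧ σ p = q)]
  exact Fintype.card_congr (sliceEquiv f g p q hq')

set_option linter.unusedSectionVars false

/-- `M` only depends on the label of the removed target point. -/
lemma M_res_congr {Z : Type} [Fintype Z] [DecidableEq Z] (h : Z → ℕ) (g : Y → ℕ)
    {q q' : Y} (hg : g q = g q') : M h (res g q) = M h (res g q') := by
  refine M_congr_right (Y' := {y // y ≠ q}) (Y := {y // y ≠ q'})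
    ((Equiv.swap q q').subtypeEquiv (fun y => ?_)) h (res g q) (res g q') (fun z => ?_)
  · exact ((Equiv.swap q q').injective.ne_iff' (Equiv.swap_apply_left q q')).symm
  · obtain ⟨y, hy⟩ := z
    simp only [res_apply, Equiv.subtypeEquiv_apply]
    rcases eq_or_ne y q' with hz | hz
    · subst hz; rw [Equiv.swap_apply_right, hg]
    · rw [Equiv.swap_apply_of_ne_of_ne hy hz]

/-- Exchanging the order of removing two target points. -/
def resresEquiv {q0 q1 : Y} (hne : q0 ≠ q1) (hne' : q1 ≠ q0) :
    {z : {y // y ≠ q1} // z ≠ ⟨q0, hne⟩} ≃ {z : {y // y ≠ q0} // z ≠ ⟨q1, hne'⟩} where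
  toFun z := ⟨⟨z.1.1, fun h => z.2 (Subtype.ext h)⟩,
    fun h => z.1.2 (congrArg Subtype.val h)⟩
  invFun z := ⟨⟨z.1.1, fun h => z.2 (Subtype.ext h)⟩,
    fun h => z.1.2 (congrArg Subtype.val h)⟩
  left_inv z := by apply Subtype.ext; apply Subtype.ext; rfl
  right_inv z := by apply Subtype.ext; apply Subtype.ext; rfl

lemma cc_res_ne (f : X → ℕ) (p : X) {j : ℕ} (h : f p ≠ j) : cc (res f p) j = cc f j := by
  rw [cc, cc]
  refine Finset.card_bij (fun z _ => z.1) (fun z hz => ?_) (fun a ha b hb hab => ?_)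
    (fun x hx => ?_)
  · simp only [mem_filter, mem_univ, true_and] at hz ⊢; exact hz
  · exact Subtype.ext hab
  · simp only [mem_filter, mem_univ, true_and] at hx
    have hxp : x ≠ p := fun hc => h (hc ▸ hx)
    exact ⟨⟨x, hxp⟩, mem_filter.mpr ⟨mem_univ _, hx⟩, rfl⟩

lemma cc_res_eq (f : X → ℕ) (p : X) {j : ℕ} (h : f p = j) : cc (res f p) j + 1 = cc f j := by
  have key : cc (res f p) j = ((univ.filter (fun x => f x = j)).erase p).card := by
    rw [cc]
    refine Finset.card_bij (fun z _ => z.1) (fun z hz => ?_) (fun a ha b hb hab => ?_)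
      (fun x hx => ?_)
    · simp only [mem_filter, mem_univ, true_and] at hz
      simp only [mem_erase, mem_filter, mem_univ, true_and]
      exact ⟨z.2, hz⟩
    · exact Subtype.ext hab
    · simp only [mem_erase, mem_filter, mem_univ, true_and] at hx
      exact ⟨⟨x, hx.1⟩, mem_filter.mpr ⟨mem_univ _, hx.2⟩, rfl⟩
  rw [key, cc, Finset.card_erase_add_one]
  simp [h]

lemma card_compl_ne (p : X) : Fintype.card {x // x ≠ p} + 1 = Fintype.card X := by
  rw [Fintype.card_subtype]
  rw [Finset.filter_ne']
  rw [Finset.card_erase_add_one (mem_univ p)]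
  rfl

lemma sum_filter_ne_split (g : Y → ℕ) (A : Y → ℕ) {a b : ℕ} (hba : b ≠ a) :
    ∑ q ∈ univ.filter (fun q => g q ≠ a), A q =
      (∑ q ∈ univ.filter (fun q => g q = b), A q) +
        ∑ q ∈ univ.filter (fun q => g q ≠ a ∧ g q ≠ b), A q := by
  rw [← Finset.sum_filter_add_sum_filter_not (univ.filter (fun q => g q ≠ a))
    (fun q => g q = b) A, Finset.filter_filter, Finset.filter_filter]
  congr 1
  · congr 1
    ext q
    simp only [mem_filter, mem_univ, true_and]
    constructor
    · exact fun h => h.2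
    · intro h; exact ⟨by rw [h]; exact hba, h⟩

theorem master (N : ℕ) : ∀ (X Y : Type) [Fintype X] [Fintype Y] [DecidableEq X] [DecidableEq Y]
    (f : X → ℕ) (g : Y → ℕ) (p : X), Fintype.card X ≤ N → f p = 1 →
    cc f 1 ≤ cc f 0 → cc g 1 ≤ cc g 0 →
    M (Function.update f p 0) g ≤ M f g := by
  induction N with
  | zero =>
    intro X Y _ _ _ _ f g p hcard _ _ _
    have : 0 < Fintype.card X := Fintype.card_pos_iff.mpr ⟨p⟩
    omega
  | succ N ih =>
    intro X Y _ _ _ _ f g p hcard hp h2 h3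
    rw [M_slice f g p, M_slice (Function.update f p 0) g p]
    have hres : res (Function.update f p 0) p = res f p := by
      funext z; simp [res, Function.update_of_ne z.2]
    rw [hres, Function.update_self, hp]
    rw [sum_filter_ne_split g (fun q => M (res f p) (res g q)) one_ne_zero,
        sum_filter_ne_split g (fun q => M (res f p) (res g q)) zero_ne_one]
    have hcomm : univ.filter (fun q => g q ≠ 1 ∧ g q ≠ 0)
        = univ.filter (fun q => g q ≠ 0 ∧ g q ≠ 1) := by
      ext q; simp [and_comm]
    rw [hcomm]
    refine Nat.add_le_add_right ?_ _
    rcases (univ.filter (fun q => g q = 1)).eq_empty_or_nonempty with hemp | hne1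
    · rw [hemp, Finset.sum_empty]; exact Nat.zero_le _
    obtain ⟨q1, hq1⟩ := hne1
    have hgq1 : g q1 = 1 := by simpa using (mem_filter.mp hq1).2
    have hu1pos : 0 < cc g 1 := Finset.card_pos.mpr ⟨q1, hq1⟩
    have hu0pos : 0 < cc g 0 := lt_of_lt_of_le hu1pos h3
    obtain ⟨q0, hq0⟩ := Finset.card_pos.mp hu0pos
    have hgq0 : g q0 = 0 := by simpa using (mem_filter.mp hq0).2
    have hne : q0 ≠ q1 := fun hc => by rw [hc, hgq1] at hgq0; exact one_ne_zero hgq0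
    have hne' : q1 ≠ q0 := hne.symm
    have hconst1 : ∀ q ∈ univ.filter (fun q => g q = 1),
        M (res f p) (res g q) = M (res f p) (res g q1) := by
      intro q hq
      have : g q = 1 := by simpa using (mem_filter.mp hq).2
      exact M_res_congr (res f p) g (this.trans hgq1.symm)
    have hconst0 : ∀ q ∈ univ.filter (fun q => g q = 0),
        M (res f p) (res g q) = M (res f p) (res g q0) := by
      intro q hq
      have : g q = 0 := by simpa using (mem_filter.mp hq).2
      exact M_res_congr (res f p) g (this.trans hgq0.symm)
    rw [Finset.sum_congr rfl hconst1, Finset.sum_congr rfl hconst0,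
        Finset.sum_const, Finset.sum_const, smul_eq_mul, smul_eq_mul]
    have key : M (res f p) (res g q1) ≤ M (res f p) (res g q0) := by
      have e1 : M (res f p) (res g q1)
          = ∑ s ∈ univ.filter (fun s : {x // x ≠ p} => res f p s ≠ 0),
              M (res (res g q0) ⟨q1, hne'⟩) (res (res f p) s) := by
        rw [M_symm, M_slice (res g q1) (res f p) ⟨q0, hne⟩]
        have : (res g q1) ⟨q0, hne⟩ = 0 := by simp [res, hgq0]
        rw [this]
        refine Finset.sum_congr rfl (fun s _ => ?_)
        exact M_congr_left (resresEquiv hne hne') _ _ _ (fun z => rfl)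
      have e0 : M (res f p) (res g q0)
          = ∑ s ∈ univ.filter (fun s : {x // x ≠ p} => res f p s ≠ 1),
              M (res (res g q0) ⟨q1, hne'⟩) (res (res f p) s) := by
        rw [M_symm, M_slice (res g q0) (res f p) ⟨q1, hne'⟩]
        have : (res g q0) ⟨q1, hne'⟩ = 1 := by simp [res, hgq1]
        rw [this]
      rw [e1, e0]
      rw [sum_filter_ne_split (res f p)
            (fun s => M (res (res g q0) ⟨q1, hne'⟩) (res (res f p) s)) one_ne_zero,
          sum_filter_ne_split (res f p)
            (fun s => M (res (res g q0) ⟨q1, hne'⟩) (res (res f p) s)) zero_ne_one]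
      have hcomm2 : univ.filter (fun s : {x // x ≠ p} => res f p s ≠ 1 ∧ res f p s ≠ 0)
          = univ.filter (fun s => res f p s ≠ 0 ∧ res f p s ≠ 1) := by
        ext s; simp only [mem_filter, mem_univ, true_and]; exact and_comm
      rw [hcomm2]
      refine Nat.add_le_add_right ?_ _
      rcases (univ.filter (fun s : {x // x ≠ p} => res f p s = 1)).eq_empty_or_nonempty
        with hemp2 | hne2
      · rw [hemp2, Finset.sum_empty]; exact Nat.zero_le _
      obtain ⟨s1, hs1⟩ := hne2
      have hfs1 : res f p s1 = 1 := by simpa using (mem_filter.mp hs1).2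
      have ha1 : cc (res f p) 1 + 1 = cc f 1 := cc_res_eq f p hp
      have ha0 : cc (res f p) 0 = cc f 0 := cc_res_ne f p (by rw [hp]; exact one_ne_zero)
      have ha10 : cc (res f p) 1 + 1 ≤ cc (res f p) 0 := by omega
      have hs0ex : 0 < cc (res f p) 0 := by omega
      obtain ⟨s0, hs0⟩ := Finset.card_pos.mp hs0ex
      have hfs0 : res f p s0 = 0 := by simpa using (mem_filter.mp hs0).2
      have hss : s1 ≠ s0 := fun hc => by rw [hc, hfs0] at hfs1; exact one_ne_zero hfs1.symm
      have hconst1' : ∀ s ∈ univ.filter (fun s : {x // x ≠ p} => res f p s = 1),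
          M (res (res g q0) ⟨q1, hne'⟩) (res (res f p) s)
            = M (res (res g q0) ⟨q1, hne'⟩) (res (res f p) s1) := by
        intro s hs
        have : res f p s = 1 := by simpa using (mem_filter.mp hs).2
        exact M_res_congr _ (res f p) (this.trans hfs1.symm)
      have hconst0' : ∀ s ∈ univ.filter (fun s : {x // x ≠ p} => res f p s = 0),
          M (res (res g q0) ⟨q1, hne'⟩) (res (res f p) s)
            = M (res (res g q0) ⟨q1, hne'⟩) (res (res f p) s0) := by
        intro s hs
        have : res f p s = 0 := by simpa using (mem_filter.mp hs).2
        exact M_res_congr _ (res f p) (this.trans hfs0.symm)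
      rw [Finset.sum_congr rfl hconst1', Finset.sum_congr rfl hconst0',
          Finset.sum_const, Finset.sum_const, smul_eq_mul, smul_eq_mul]
      have keyB : M (res (res g q0) ⟨q1, hne'⟩) (res (res f p) s1)
          ≤ M (res (res g q0) ⟨q1, hne'⟩) (res (res f p) s0) := by
        rw [M_symm (res (res g q0) ⟨q1, hne'⟩) (res (res f p) s1),
            M_symm (res (res g q0) ⟨q1, hne'⟩) (res (res f p) s0)]
        have hcvt : M (res (res f p) s1) (res (res g q0) ⟨q1, hne'⟩)
            = M (Function.update (res (res f p) s0) ⟨s1, hss⟩ 0)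
                (res (res g q0) ⟨q1, hne'⟩) := by
          have hpred : ∀ a : {x // x ≠ p}, a ≠ s1 ↔ Equiv.swap s0 s1 a ≠ s0 :=
            fun a => ((Equiv.swap s0 s1).injective.ne_iff'
              (Equiv.swap_apply_right s0 s1)).symm
          refine M_congr_left ((Equiv.swap s0 s1).subtypeEquiv hpred) _ _ _ (fun z => ?_)
          rcases eq_or_ne z.1 s0 with hz | hz
          · have he : ((Equiv.swap s0 s1).subtypeEquiv hpred z : {z : {x // x ≠ p} // z ≠ s0})
                = ⟨s1, hss⟩ := by
              apply Subtype.ext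
              simp only [Equiv.subtypeEquiv_apply]
              rw [hz, Equiv.swap_apply_left]
            rw [he, Function.update_self]
            simp only [res_apply]
            rw [← hfs0, hz]
            rfl
          · have hz1 : z.1 ≠ s1 := z.2
            have he : ((Equiv.swap s0 s1).subtypeEquiv hpred z : {z : {x // x ≠ p} // z ≠ s0})
                = ⟨z.1, hz⟩ := by
              apply Subtype.ext
              simp only [Equiv.subtypeEquiv_apply]
              exact Equiv.swap_apply_of_ne_of_ne hz hz1
            rw [he, Function.update_of_ne (by
              intro hc
              exact hz1 (congrArg Subtype.val hc))]
            rfl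
        rw [hcvt]
        refine ih _ _ (res (res f p) s0) (res (res g q0) ⟨q1, hne'⟩) ⟨s1, hss⟩ ?_ ?_ ?_ ?_
        · have c1 : Fintype.card {z : {x // x ≠ p} // z ≠ s0} + 1
              = Fintype.card {x // x ≠ p} := card_compl_ne s0
          have c2 : Fintype.card {x // x ≠ p} + 1 = Fintype.card X := card_compl_ne p
          omega
        · exact hfs1
        · have d1 : cc (res (res f p) s0) 1 = cc (res f p) 1 :=
            cc_res_ne (res f p) s0 (by rw [hfs0]; exact zero_ne_one)
          have d0 : cc (res (res f p) s0) 0 + 1 = cc (res f p) 0 :=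
            cc_res_eq (res f p) s0 hfs0
          omega
        · have t1 : cc (res g q0) 1 = cc g 1 :=
            cc_res_ne g q0 (by rw [hgq0]; exact zero_ne_one)
          have t0 : cc (res g q0) 0 + 1 = cc g 0 := cc_res_eq g q0 hgq0
          have w1 : cc (res (res g q0) ⟨q1, hne'⟩) 1 + 1 = cc (res g q0) 1 :=
            cc_res_eq (res g q0) ⟨q1, hne'⟩ (by simp [res, hgq1])
          have w0 : cc (res (res g q0) ⟨q1, hne'⟩) 0 = cc (res g q0) 0 :=
            cc_res_ne (res g q0) ⟨q1, hne'⟩ (by rw [res_apply, hgq1]; exact one_ne_zero)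
          omega
      refine Nat.mul_le_mul ?_ keyB
      show cc (res f p) 1 ≤ cc (res f p) 0
      omega
    exact Nat.mul_le_mul h3 key


/-- The multiset of labels. -/
def valmul (f : X → ℕ) : Multiset ℕ := Finset.univ.val.map f

lemma valmul_eq_sum (f : X → ℕ) : valmul f = ∑ x, ({f x} : Multiset ℕ) := by
  rw [valmul, Finset.sum_eq_multiset_sum]
  rw [show (fun x => ({f x} : Multiset ℕ)) = (fun a => ({a} : Multiset ℕ)) ∘ f from rfl]
  rw [← Multiset.map_map, Multiset.sum_map_singleton]

lemma valmul_res (f : X → ℕ) (p : X) : valmul (res f p) + {f p} = valmul f := by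
  rw [valmul_eq_sum, valmul_eq_sum]
  have h1 : ∑ z : {x // x ≠ p}, ({res f p z} : Multiset ℕ)
      = ∑ x ∈ univ.erase p, ({f x} : Multiset ℕ) := by
    rw [Finset.sum_subtype (p := fun x => x ≠ p) (univ.erase p)
      (fun x => by simp [Finset.mem_erase]) (fun x => ({f x} : Multiset ℕ))]
    rfl
  rw [h1, add_comm]
  exact Finset.add_sum_erase univ (fun x => ({f x} : Multiset ℕ)) (mem_univ p)

lemma valmul_update (f : X → ℕ) (p : X) (c : ℕ) :
    valmul (Function.update f p c) + {f p} = valmul f + {c} := by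
  rw [valmul_eq_sum, valmul_eq_sum]
  rw [← Finset.add_sum_erase univ (fun x => ({Function.update f p c x} : Multiset ℕ)) (mem_univ p),
      ← Finset.add_sum_erase univ (fun x => ({f x} : Multiset ℕ)) (mem_univ p)]
  have h1 : ∑ x ∈ univ.erase p, ({Function.update f p c x} : Multiset ℕ)
      = ∑ x ∈ univ.erase p, ({f x} : Multiset ℕ) := by
    refine Finset.sum_congr rfl (fun x hx => ?_)
    rw [Function.update_of_ne (Finset.mem_erase.mp hx).1]
  rw [h1, Function.update_self]
  abel

lemma mult_equiv (N : ℕ) : ∀ (X Y : Type) [Fintype X] [Fintype Y] [DecidableEq X]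
    [DecidableEq Y] (f : X → ℕ) (g : Y → ℕ), Fintype.card X ≤ N → valmul f = valmul g →
    ∃ e : X ≃ Y, ∀ x, f x = g (e x) := by
  induction N with
  | zero =>
    intro X Y _ _ _ _ f g hcard hvm
    have hx : IsEmpty X := by
      rw [← Fintype.card_eq_zero_iff]; omega
    have hvf : valmul f = 0 := by
      rw [valmul, Multiset.map_eq_zero]
      simp [Finset.univ_eq_empty]
    have hy : IsEmpty Y := by
      rw [← Fintype.card_eq_zero_iff]
      rw [hvf] at hvm
      have := congrArg Multiset.card hvm.symm
      simpa [valmul] using this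
    exact ⟨Equiv.equivOfIsEmpty X Y, fun x => (hx.false x).elim⟩
  | succ N ih =>
    intro X Y _ _ _ _ f g hcard hvm
    rcases isEmpty_or_nonempty X with hx | hx
    · have hvf : valmul f = 0 := by
        rw [valmul, Multiset.map_eq_zero]
        simp [Finset.univ_eq_empty]
      have hy : IsEmpty Y := by
        rw [← Fintype.card_eq_zero_iff]
        rw [hvf] at hvm
        have := congrArg Multiset.card hvm.symm
        simpa [valmul] using this
      haveI := hy
      exact ⟨Equiv.equivOfIsEmpty X Y, fun x => (hx.false x).elim⟩
    obtain ⟨x0⟩ := hx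
    have hmem : f x0 ∈ valmul g := by
      rw [← hvm, valmul]
      exact Multiset.mem_map_of_mem f (Finset.mem_val.mpr (mem_univ x0))
    obtain ⟨y0, hy0mem, hy0⟩ := Multiset.mem_map.mp hmem
    have hvres : valmul (res f x0) = valmul (res g y0) := by
      have a1 : valmul (res f x0) + {f x0} = valmul f := valmul_res f x0
      have a2 : valmul (res g y0) + {g y0} = valmul g := valmul_res g y0
      rw [hy0] at a2
      have : valmul (res f x0) + {f x0} = valmul (res g y0) + {f x0} := by
        rw [a1, a2, hvm]
      exact add_right_cancel this
    have hcard' : Fintype.card {x // x ≠ x0} ≤ N := by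
      have := card_compl_ne x0
      omega
    obtain ⟨e', he'⟩ := ih _ _ (res f x0) (res g y0) hcard' hvres
    refine ⟨extendEquiv x0 y0 e', fun x => ?_⟩
    by_cases h : x = x0
    · subst h; rw [extendEquiv_self, hy0]
    · rw [extendEquiv_ne _ _ _ h]
      exact he' ⟨x, h⟩

lemma valmul_sigma {k : ℕ} (s : Fin k → ℕ) :
    valmul (fun x : Σ i, Fin (s i) => (x.1 : ℕ))
      = ∑ i : Fin k, Multiset.replicate (s i) (i : ℕ) := by
  rw [valmul_eq_sum]
  rw [← Finset.univ_sigma_univ, Finset.sum_sigma]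
  refine Finset.sum_congr rfl (fun i _ => ?_)
  show (∑ _v : Fin (s i), ({(i : ℕ)} : Multiset ℕ)) = _
  rw [Finset.sum_const, Finset.card_univ, Fintype.card_fin, Multiset.nsmul_singleton]

lemma cc_sigma {k : ℕ} (s : Fin k → ℕ) (j : Fin k) :
    cc (fun x : Σ i, Fin (s i) => (x.1 : ℕ)) (j : ℕ) = s j := by
  rw [cc, ← Fintype.card_subtype]
  have e : {x : Σ i, Fin (s i) // (x.1 : ℕ) = (j : ℕ)} ≃ Fin (s j) :=
    { toFun := fun z => Fin.cast (congrArg s (Fin.val_injective z.2)) z.1.2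
      invFun := fun v => ⟨⟨j, v⟩, rfl⟩
      left_inv := by
        rintro ⟨⟨i, v⟩, h⟩
        have hij : i = j := Fin.val_injective h
        subst hij
        rfl
      right_inv := fun v => rfl }
  rw [Fintype.card_congr e, Fintype.card_fin]

lemma cc_update_new (f : X → ℕ) (p : X) {j : ℕ} (hfp : f p ≠ j) :
    cc (Function.update f p j) j = cc f j + 1 := by
  rw [cc, cc]
  have h : univ.filter (fun x => Function.update f p j x = j)
      = insert p (univ.filter (fun x => f x = j)) := by
    ext x
    simp only [mem_filter, mem_univ, true_and, mem_insert]
    by_cases hx : x = p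
    · subst hx; simp
    · simp [Function.update_of_ne hx, hx]
  rw [h, Finset.card_insert_of_notMem (by simp [hfp])]

lemma cc_update_old (f : X → ℕ) (p : X) {c j : ℕ} (hfp : f p = j) (hc : c ≠ j) :
    cc (Function.update f p c) j + 1 = cc f j := by
  have h : univ.filter (fun x => Function.update f p c x = j)
      = (univ.filter (fun x => f x = j)).erase p := by
    ext x
    simp only [mem_filter, mem_univ, true_and, mem_erase]
    by_cases hx : x = p
    · subst hx; simp [hc]
    · simp [Function.update_of_ne hx, hx]
  rw [cc, h, cc, Finset.card_erase_add_one (by simp [hfp])]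

lemma gd_eq_M (k : ℕ) (s : Fin k → ℕ) :
    gdCount k s
      = M (fun x : Σ i, Fin (s i) => (x.1 : ℕ)) (fun x : Σ i, Fin (s i) => (x.1 : ℕ)) :=
  Fintype.card_congr (Equiv.subtypeEquivRight (fun σ =>
    ⟨fun h x hc => h x (Fin.val_injective hc), fun h x hc => h x (congrArg Fin.val hc)⟩))

end GdT

open GdT in
theorem gd_transfer (n : ℕ) (t : Fin (n + 2) → ℕ) (h₁ : t 1 ≤ t 0) (h₂ : 1 ≤ t 1) :
    gdCount (n + 2) (Function.update (Function.update t 0 (t 0 + 1)) 1 (t 1 - 1)) ≤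
      gdCount (n + 2) t := by
  classical
  set t' : Fin (n + 2) → ℕ := Function.update (Function.update t 0 (t 0 + 1)) 1 (t 1 - 1)
    with ht'
  have hpf : t 1 - 1 < t 1 := by omega
  set F : (Σ i : Fin (n + 2), Fin (t i)) → ℕ := fun x => (x.1 : ℕ) with hF
  set F' : (Σ i : Fin (n + 2), Fin (t' i)) → ℕ := fun x => (x.1 : ℕ) with hF'
  set p : Σ i : Fin (n + 2), Fin (t i) := ⟨1, ⟨t 1 - 1, hpf⟩⟩ with hpdef
  set G : (Σ i : Fin (n + 2), Fin (t i)) → ℕ := Function.update F p 0 with hG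
  have hFp : F p = 1 := by
    simp only [hF, hpdef]
    exact Fin.val_one n
  have hcF0 : cc F 0 = t 0 := by
    rw [hF]
    have := cc_sigma t (0 : Fin (n + 2))
    rwa [Fin.val_zero] at this
  have hcF1 : cc F 1 = t 1 := by
    rw [hF]
    have := cc_sigma t (1 : Fin (n + 2))
    rwa [Fin.val_one] at this
  have hcG0 : cc G 0 = t 0 + 1 := by
    rw [hG, cc_update_new F p (by rw [hFp]; exact one_ne_zero), hcF0]
  have hcG1 : cc G 1 + 1 = t 1 := by
    rw [hG, cc_update_old F p hFp zero_ne_one, hcF1]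
  -- t'-evaluations
  have h01 : (0 : Fin (n + 2)) ≠ 1 := by
    intro hc
    have := congrArg Fin.val hc
    rw [Fin.val_zero, Fin.val_one] at this
    exact zero_ne_one this
  have ht'0 : t' 0 = t 0 + 1 := by
    rw [ht', Function.update_of_ne h01, Function.update_self]
  have ht'1 : t' 1 = t 1 - 1 := by
    rw [ht', Function.update_self]
  have ht'succ : ∀ i : Fin n, t' i.succ.succ = t i.succ.succ := by
    intro i
    have hs1 : (i.succ.succ : Fin (n + 2)) ≠ 1 := by
      intro hc
      rw [← Fin.succ_zero_eq_one] at hc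
      exact Fin.succ_ne_zero i (Fin.succ_injective _ hc)
    have hs0 : (i.succ.succ : Fin (n + 2)) ≠ 0 := Fin.succ_ne_zero _
    rw [ht', Function.update_of_ne hs1, Function.update_of_ne hs0]
  have hvm : valmul F' = valmul G := by
    have h3 : valmul G + {(1 : ℕ)} = valmul F + {(0 : ℕ)} := by
      have := valmul_update F p 0
      rw [hFp] at this
      rw [hG]
      exact this
    have h4 : valmul F' + {(1 : ℕ)} = valmul F + {(0 : ℕ)} := by
      rw [hF', hF, valmul_sigma t', valmul_sigma t]
      rw [Fin.sum_univ_succ, Fin.sum_univ_succ, Fin.sum_univ_succ, Fin.sum_univ_succ]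
      simp only [Fin.succ_zero_eq_one, Fin.val_zero, Fin.val_one]
      rw [ht'0, ht'1]
      have hR : ∑ i : Fin n, Multiset.replicate (t' i.succ.succ) ((i.succ.succ : Fin (n+2)) : ℕ)
          = ∑ i : Fin n, Multiset.replicate (t i.succ.succ) ((i.succ.succ : Fin (n+2)) : ℕ) := by
        refine Finset.sum_congr rfl (fun i _ => ?_)
        rw [ht'succ i]
      rw [hR]
      have e0 : Multiset.replicate (t 0 + 1) (0 : ℕ)
          = {(0 : ℕ)} + Multiset.replicate (t 0) 0 := by
        rw [Multiset.replicate_succ, Multiset.singleton_add]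
      have e1 : Multiset.replicate (t 1) (1 : ℕ)
          = {(1 : ℕ)} + Multiset.replicate (t 1 - 1) 1 := by
        obtain ⟨m, hm⟩ : ∃ m, t 1 = m + 1 := ⟨t 1 - 1, by omega⟩
        rw [hm, Nat.add_sub_cancel, Multiset.replicate_succ, Multiset.singleton_add]
      rw [e0, e1]
      abel
    exact add_right_cancel (h4.trans h3.symm)
  obtain ⟨e, he⟩ := mult_equiv (Fintype.card (Σ i : Fin (n + 2), Fin (t' i))) _ _ F' G
    le_rfl hvm
  have hgd' : gdCount (n + 2) t' = M G G := by
    rw [gd_eq_M (n + 2) t', ← hF']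
    rw [M_congr_left e F' G F' he]
    exact M_congr_right e G F' G he
  have step1 : M G G ≤ M F G := by
    have := master (Fintype.card (Σ i : Fin (n + 2), Fin (t i))) _ _ F G p le_rfl hFp
      (by omega) (by omega)
    rwa [← hG] at this
  have step2 : M G F ≤ M F F := by
    have := master (Fintype.card (Σ i : Fin (n + 2), Fin (t i))) _ _ F F p le_rfl hFp
      (by omega) (by omega)
    rwa [← hG] at this
  have final : M G G ≤ M F F :=
    le_trans step1 (le_trans (le_of_eq (M_symm F G)) step2)
  rw [hgd', gd_eq_M (n + 2) t, ← hF]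
  exact final
end

section
/- For every m ≥ 1, the maximal value of P(t₁,…,tₙ) over all choices of n and of nonnegative integers t₁,…,tₙ with t₁ + ⋯ + tₙ = m is d(m), the number of derangements of m elements, achieved when all tᵢ = 1. -/
lemma card_sigma_t (n : ℕ) (t : Fin n → ℕ) :
    Fintype.card (Σ i : Fin n, Fin (t i)) = ∑ i, t i := by
  simp [Fintype.card_sigma]

lemma card_derangements' (n : ℕ) (t : Fin n → ℕ) :
    Fintype.card (derangements (Σ i : Fin n, Fin (t i))) = numDerangements (∑ i, t i) := by
  rw [card_derangements_eq_numDerangements, card_sigma_t]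

theorem gd_max_is_derangements (m : ℕ) (hm : 1 ≤ m) :
    gdCount m (fun _ => 1) = numDerangements m ∧
      ∀ (n : ℕ) (t : Fin n → ℕ), (∑ i, t i) = m → gdCount n t ≤ numDerangements m := by
  constructor
  · have e : {σ : Equiv.Perm (Σ _ : Fin m, Fin 1) // ∀ x, (σ x).1 ≠ x.1} ≃
        derangements (Σ _ : Fin m, Fin 1) := by
      apply Equiv.subtypeEquivRight
      intro σ
      constructor
      · intro h x hx
        exact h x (by rw [hx])
      · intro h x hx
        exact h x (Sigma.ext hx (Subsingleton.helim rfl _ _))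
    rw [gdCount, Fintype.card_congr e, card_derangements']
    simp
  · intro n t ht
    rw [gdCount, ← ht, ← card_derangements' n t]
    apply Fintype.card_le_of_injective
      (fun σ => (⟨σ.1, fun x hx => σ.2 x (by rw [hx])⟩ : derangements _))
    intro a b hab
    simp only [Subtype.mk.injEq] at hab
    exact Subtype.ext (congrArg (fun d : derangements _ => d.1) hab)
end

section
/- If positive integers b₁,…,bₙ satisfy 2·bₖ ≤ b₁ + ⋯ + bₙ for every k, then P(t₁,…,tₙ) ≤ P(t₁+b₁, t₂+b₂, …, tₙ+bₙ). -/
lemma exists_block_derangement (n : ℕ) (b : Fin n → ℕ) (hn : 0 < n) (hb : ∀ k, 0 < b k)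
    (h : ∀ k, 2 * b k ≤ ∑ i, b i) :
    ∃ τ : Equiv.Perm (Σ i : Fin n, Fin (b i)), ∀ x, (τ x).1 ≠ x.1 := by
  classical
  set N := ∑ i, b i with hN
  set B : ℕ → ℕ := fun k => if hk : k < n then b ⟨k, hk⟩ else 0 with hB
  set off : Fin n → ℕ := fun i => ∑ k ∈ Finset.range i.val, B k with hoffdef
  have hNB : N = ∑ k ∈ Finset.range n, B k := by
    rw [hN, ← Fin.sum_univ_eq_sum_range]
    refine Finset.sum_congr rfl fun i _ => ?_
    simp [hB, i.isLt]
  have hmono : ∀ i i' : Fin n, i.val < i'.val → off i + b i ≤ off i' := by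
    intro i i' hii
    have : off i + b i = ∑ k ∈ Finset.range (i.val + 1), B k := by
      rw [Finset.sum_range_succ]
      simp [hoffdef, hB, i.isLt]
    rw [this]
    exact Finset.sum_le_sum_of_subset (Finset.range_subset_range.2 hii)
  have hoff : ∀ i : Fin n, off i + b i < N + 1 := by
    intro i
    have : off i + b i = ∑ k ∈ Finset.range (i.val + 1), B k := by
      rw [Finset.sum_range_succ]; simp [hoffdef, hB, i.isLt]
    rw [this, hNB]
    exact Nat.lt_succ_of_le (Finset.sum_le_sum_of_subset (Finset.range_subset_range.2 i.isLt))
  have hlt : ∀ x : Σ i : Fin n, Fin (b i), off x.1 + x.2.val < N := by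
    intro x
    have := hoff x.1
    have := x.2.isLt
    omega
  set e : (Σ i : Fin n, Fin (b i)) → Fin N := fun x => ⟨off x.1 + x.2.val, hlt x⟩ with he
  have hinj : Function.Injective e := by
    rintro ⟨i, j⟩ ⟨i', j'⟩ hEq
    have hval : off i + j.val = off i' + j'.val := congrArg Fin.val hEq
    have hii : i = i' := by
      by_contra hne
      rcases lt_or_gt_of_ne (fun hc : i.val = i'.val => hne (Fin.ext hc)) with hlt' | hlt'
      · have h1 := hmono i i' hlt'
        have := j.isLt
        omega
      · have h1 := hmono i' i hlt'
        have := j'.isLt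
        omega
    subst hii
    have : j = j' := Fin.ext (by omega)
    subst this; rfl
  have hcard : Fintype.card (Σ i : Fin n, Fin (b i)) = Fintype.card (Fin N) := by
    simp [Fintype.card_sigma, hN]
  have hbij : Function.Bijective e :=
    (Fintype.bijective_iff_injective_and_card e).2 ⟨hinj, hcard⟩
  set E : (Σ i : Fin n, Fin (b i)) ≃ Fin N := Equiv.ofBijective e hbij with hE
  obtain ⟨k₀, -, hk₀⟩ := Finset.exists_max_image Finset.univ b ⟨⟨0, hn⟩, Finset.mem_univ _⟩
  set m := b k₀ with hm
  have hmpos : 0 < m := hb k₀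
  have hmN : m < N := by have := h k₀; omega
  haveI : NeZero N := ⟨by omega⟩
  set m' : Fin N := ⟨m, hmN⟩ with hm'
  refine ⟨Equiv.permCongr E.symm (Equiv.addRight m'), ?_⟩
  intro x hfix
  set y := Equiv.permCongr E.symm (Equiv.addRight m') x with hy
  have hEy : E y = E x + m' := by
    simp [hy, Equiv.permCongr_apply]
  have hval : (E y).val = ((E x).val + m) % N := by
    rw [hEy]; simp [Fin.add_def, hm']
  -- bounds
  have hx1 : off x.1 ≤ (E x).val ∧ (E x).val < off x.1 + b x.1 := by
    constructor
    · simp [hE, Equiv.ofBijective_apply, he]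
    · have := x.2.isLt
      simp only [hE, Equiv.ofBijective_apply, he]
      omega
  have hyfst : y.1 = x.1 := hfix
  have hy1 : off x.1 ≤ (E y).val ∧ (E y).val < off x.1 + b x.1 := by
    constructor
    · have : off y.1 ≤ (E y).val := by simp [hE, Equiv.ofBijective_apply, he]
      rwa [hyfst] at this
    · have : (E y).val < off y.1 + b y.1 := by
        have := y.2.isLt
        simp only [hE, Equiv.ofBijective_apply, he]
        omega
      rwa [hyfst] at this
  have hbm : b x.1 ≤ m := hk₀ x.1 (Finset.mem_univ _)
  have hmbN : m + b x.1 ≤ N := by have := h k₀; omega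
  have huN : (E x).val < N := (E x).isLt
  rcases Nat.lt_or_ge ((E x).val + m) N with hc | hc
  · rw [Nat.mod_eq_of_lt hc] at hval
    omega
  · have h2N : (E x).val + m - N < N := by omega
    have : ((E x).val + m) % N = (E x).val + m - N := by
      rw [Nat.mod_eq_sub_mod hc, Nat.mod_eq_of_lt h2N]
    rw [this] at hval
    omega

theorem gd_add_polygon (n : ℕ) (t b : Fin n → ℕ) (hb : ∀ k, 0 < b k)
    (h : ∀ k, 2 * b k ≤ ∑ i, b i) :
    gdCount n t ≤ gdCount n (fun i => t i + b i) := by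
  classical
  rcases Nat.eq_zero_or_pos n with hn | hn
  · subst hn
    apply le_of_eq
    unfold gdCount
    have h1 : ∀ (u : Fin 0 → ℕ),
        Fintype.card {σ : Equiv.Perm (Σ i : Fin 0, Fin (u i)) // ∀ x, (σ x).1 ≠ x.1} = 1 := by
      intro u
      rw [Fintype.card_eq_one_iff]
      haveI : IsEmpty (Σ i : Fin 0, Fin (u i)) := ⟨fun x => x.1.elim0⟩
      refine ⟨⟨1, fun x => x.1.elim0⟩, fun σ => Subtype.ext (Subsingleton.elim _ _)⟩
    rw [h1, h1]
  obtain ⟨τ, hτ⟩ := exists_block_derangement n b hn hb h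
  set E : (Σ i : Fin n, Fin (t i + b i)) ≃ (Σ i : Fin n, Fin (t i)) ⊕ (Σ i : Fin n, Fin (b i)) :=
    (Equiv.sigmaCongrRight fun i => finSumFinEquiv.symm).trans
      (Equiv.sigmaSumDistrib _ _) with hE
  have hEfst : ∀ x : Σ i : Fin n, Fin (t i + b i),
      (E x).elim Sigma.fst Sigma.fst = x.1 := by
    rintro ⟨i, a⟩
    rcases hc : finSumFinEquiv.symm a with c | c <;>
      simp [hE, Equiv.sigmaSumDistrib, Equiv.sigmaCongrRight, hc]
  have hEsymm_fst : ∀ y : (Σ i : Fin n, Fin (t i)) ⊕ (Σ i : Fin n, Fin (b i)),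
      (E.symm y).1 = y.elim Sigma.fst Sigma.fst := by
    intro y
    have := hEfst (E.symm y)
    rw [E.apply_symm_apply] at this
    exact this.symm
  set F : {σ : Equiv.Perm (Σ i : Fin n, Fin (t i)) // ∀ x, (σ x).1 ≠ x.1} →
      {σ : Equiv.Perm (Σ i : Fin n, Fin (t i + b i)) // ∀ x, (σ x).1 ≠ x.1} :=
    fun σ => ⟨Equiv.permCongr E.symm (Equiv.sumCongr σ.1 τ), by
      intro x
      have happ : (Equiv.permCongr E.symm (Equiv.sumCongr σ.1 τ)) x =
          E.symm (Equiv.sumCongr σ.1 τ (E x)) := by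
        simp [Equiv.permCongr_apply]
      rw [happ]
      rcases hc : E x with c | c
      · have h1 : c.1 = x.1 := by have := hEfst x; rw [hc] at this; exact this
        rw [Equiv.sumCongr_apply, Sum.map_inl, hEsymm_fst]
        simpa [h1] using σ.2 c
      · have h1 : c.1 = x.1 := by have := hEfst x; rw [hc] at this; exact this
        rw [Equiv.sumCongr_apply, Sum.map_inr, hEsymm_fst]
        simpa [h1] using hτ c⟩ with hF
  have hFinj : Function.Injective F := by
    rintro ⟨σ, hσ⟩ ⟨σ', hσ'⟩ hEq
    have h1 : Equiv.permCongr E.symm (Equiv.sumCongr σ τ) =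
        Equiv.permCongr E.symm (Equiv.sumCongr σ' τ) := congrArg Subtype.val hEq
    have h2 : Equiv.sumCongr σ τ = Equiv.sumCongr σ' τ :=
      (Equiv.permCongr E.symm).injective h1
    have h3 : σ = σ' := by
      refine Equiv.ext fun z => ?_
      have h4 : Equiv.sumCongr σ τ (Sum.inl z) = Equiv.sumCongr σ' τ (Sum.inl z) := by rw [h2]
      simp only [Equiv.sumCongr_apply, Sum.map_inl, Sum.inl.injEq] at h4
      rw [h4]
    simp [h3]
  exact Fintype.card_le_of_injective F hFinj
end

section
/- If there exists an index i ≥ 2 with tᵢ > t₁, then P(t₁+1, t₂, …, tₙ) ≥ P(t₁, t₂, …, tₙ). -/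
open Equiv

variable {n : ℕ}

lemma sigma_eq_aux (t : Fin (n+1) → ℕ) (x : Σ i : Fin (n+1), Fin (t i)) (a : Fin (n+1))
    (h : x.1 = a) : x = ⟨a, Fin.cast (congrArg t h) x.2⟩ := by
  cases x; subst h; rfl

/-- The equivalence between `Option` of the old union and the new union. -/
def mye (t : Fin (n+1) → ℕ) :
    Option (Σ i : Fin (n+1), Fin (t i)) ≃
      (Σ i : Fin (n+1), Fin (Function.update t 0 (t 0 + 1) i)) where
  toFun o := o.elim ⟨0, Fin.cast (by simp) (Fin.last (t 0))⟩
    (fun x => ⟨x.1, Fin.castLE (by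
      by_cases h : x.1 = 0
      · rw [h]; simp
      · simp [Function.update_of_ne h]) x.2⟩)
  invFun y := if h : (y.2 : ℕ) < t y.1 then some ⟨y.1, ⟨y.2, h⟩⟩ else none
  left_inv o := by
    cases o with
    | none => simp
    | some x =>
      simp only [Option.elim]
      simp
  right_inv := by
    rintro ⟨i, j⟩
    by_cases h : (j : ℕ) < t i
    · simp only [dif_pos h, Option.elim]
      congr 1
    · simp only [dif_neg h, Option.elim]
      have hi : i = 0 := by
        by_contra hne
        exact h (by simpa [Function.update_of_ne hne] using j.isLt)
      subst hi
      have h1 : (j : ℕ) < t 0 + 1 := by simpa using j.isLt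
      have h2 : ¬ (j : ℕ) < t 0 := h
      congr 1
      apply Fin.ext
      simp
      omega

lemma mye_none_fst (t : Fin (n+1) → ℕ) : ((mye t) none).1 = 0 := rfl

lemma mye_some_fst (t : Fin (n+1) → ℕ) (x) : ((mye t) (some x)).1 = x.1 := rfl

lemma exists_z (t : Fin (n+1) → ℕ) (ht : ∃ i, i ≠ 0 ∧ t 0 < t i)
    (σ : Perm (Σ i : Fin (n+1), Fin (t i))) (hσ : ∀ x, (σ x).1 ≠ x.1) :
    ∃ z : Σ i : Fin (n+1), Fin (t i), z.1 ≠ 0 ∧ (σ z).1 ≠ 0 := by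
  obtain ⟨i, hi0, hti⟩ := ht
  by_contra hc
  push_neg at hc
  have key : ∀ j : Fin (t i), (σ ⟨i, j⟩).1 = 0 := fun j => hc _ hi0
  set g : Fin (t i) → Fin (t 0) := fun j => Fin.cast (congrArg t (key j)) (σ ⟨i, j⟩).2 with hgdef
  have hg : Function.Injective g := by
    intro j₁ j₂ hj
    have e1 : σ ⟨i, j₁⟩ = σ ⟨i, j₂⟩ := by
      rw [sigma_eq_aux t (σ ⟨i, j₁⟩) 0 (key j₁), sigma_eq_aux t (σ ⟨i, j₂⟩) 0 (key j₂)]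
      exact congrArg (Sigma.mk 0) hj
    have := σ.injective e1
    simpa using this
  have := Fintype.card_le_of_injective g hg
  simp at this
  omega

lemma good_aux (t : Fin (n+1) → ℕ) (σ : Perm (Σ i : Fin (n+1), Fin (t i)))
    (hσ : ∀ x, (σ x).1 ≠ x.1) (z : Σ i : Fin (n+1), Fin (t i))
    (hz1 : z.1 ≠ 0) (hz2 : (σ z).1 ≠ 0) :
    ∀ x, (((mye t).permCongr ((Equiv.optionCongr σ).trans
      (Equiv.swap none (some (σ z))))) x).1 ≠ x.1 := by
  intro x
  obtain ⟨y, rfl⟩ := (mye t).surjective x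
  rw [Equiv.permCongr_apply, Equiv.symm_apply_apply]
  cases y with
  | none =>
    simp only [Equiv.trans_apply, Equiv.optionCongr_apply, Option.map_none,
      Equiv.swap_apply_left]
    rw [mye_some_fst, mye_none_fst]
    exact hz2
  | some x =>
    simp only [Equiv.trans_apply, Equiv.optionCongr_apply, Option.map_some]
    by_cases hx : x = z
    · subst hx
      rw [Equiv.swap_apply_right, mye_none_fst, mye_some_fst]
      exact fun hh => hz1 hh.symm
    · rw [Equiv.swap_apply_of_ne_of_ne (by simp)
        (fun hh => hx (σ.injective (Option.some.inj hh))),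
        mye_some_fst, mye_some_fst]
      exact hσ x

lemma inj_aux (t : Fin (n+1) → ℕ) (σ₁ σ₂ : Perm (Σ i : Fin (n+1), Fin (t i)))
    (z₁ z₂ : Σ i : Fin (n+1), Fin (t i))
    (hp : (Equiv.optionCongr σ₁).trans (Equiv.swap none (some (σ₁ z₁)))
        = (Equiv.optionCongr σ₂).trans (Equiv.swap none (some (σ₂ z₂)))) : σ₁ = σ₂ := by
  have hA : σ₁ z₁ = σ₂ z₂ := by
    have h0 := congrArg (fun e => e none) hp
    simp only [Equiv.trans_apply, Equiv.optionCongr_apply, Option.map_none,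
      Equiv.swap_apply_left] at h0
    exact Option.some.inj h0
  have hz : z₁ = z₂ := by
    have h1 := congrArg (fun e => e (some z₁)) hp
    simp only [Equiv.trans_apply, Equiv.optionCongr_apply, Option.map_some,
      Equiv.swap_apply_right] at h1
    have h2 := congrArg (Equiv.swap none (some (σ₂ z₂))) h1
    rw [Equiv.swap_apply_left, Equiv.swap_apply_self] at h2
    exact σ₂.injective (Option.some.inj h2.symm)
  refine Equiv.ext fun x => ?_
  by_cases hx : x = z₁
  · subst hx
    rw [hA, hz]
  · have h3 := congrArg (fun e => e (some x)) hp
    simp only [Equiv.trans_apply, Equiv.optionCongr_apply, Option.map_some] at h3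
    rw [Equiv.swap_apply_of_ne_of_ne (by simp)
        (fun hh => hx (σ₁.injective (Option.some.inj hh))),
      Equiv.swap_apply_of_ne_of_ne (by simp)
        (fun hh => hx (hz ▸ σ₂.injective (Option.some.inj hh)))] at h3
    exact Option.some.inj h3

theorem gd_increase_small (n : ℕ) (t : Fin (n + 1) → ℕ) (h : ∃ i, i ≠ 0 ∧ t 0 < t i) :
    gdCount (n + 1) t ≤ gdCount (n + 1) (Function.update t 0 (t 0 + 1)) := by
  classical
  rw [gdCount, gdCount]
  refine Fintype.card_le_of_injective
    (fun s => ⟨(mye t).permCongr ((Equiv.optionCongr s.1).trans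
        (Equiv.swap none (some (s.1 (Classical.choose (exists_z t h s.1 s.2)))))),
      good_aux t s.1 s.2 _ (Classical.choose_spec (exists_z t h s.1 s.2)).1
        (Classical.choose_spec (exists_z t h s.1 s.2)).2⟩) ?_
  intro s₁ s₂ hs
  have h1 := congrArg Subtype.val hs
  simp only at h1
  exact Subtype.ext (inj_aux t s₁.1 s₂.1 _ _ (((mye t).permCongr).injective h1))
end

section
/- P'(t₁,t₂,…,tₙ) is odd if and only if, for every bit position x, the number of indices i such that the binary representation of tᵢ has a 1 in position x is even. -/
open Finset MvPolynomial
open scoped Classical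

namespace AFL


lemma testBit_add_disjoint : ∀ (x a b : ℕ),
    (∀ y, ¬(a.testBit y = true ∧ b.testBit y = true)) →
    (a + b).testBit x = (a.testBit x || b.testBit x) := by
  intro x
  induction x with
  | zero =>
    intro a b h
    have h0 := h 0
    simp only [Nat.testBit_zero, decide_eq_true_eq] at h0 ⊢
    rcases Nat.mod_two_eq_zero_or_one a with ha | ha <;>
      rcases Nat.mod_two_eq_zero_or_one b with hb | hb <;>
      simp [ha, hb, Nat.add_mod] <;> omega
  | succ x ih =>
    intro a b h
    have h0 := h 0
    simp only [Nat.testBit_zero, decide_eq_true_eq] at h0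
    have hd : (a + b) / 2 = a / 2 + b / 2 := by omega
    simp only [Nat.testBit_succ, hd]
    exact ih _ _ (fun y => by simpa [Nat.testBit_succ] using h (y + 1))

lemma sum_two_pow_testBit (s : Finset ℕ) : ∀ y : ℕ,
    ((∑ b ∈ s, 2 ^ b).testBit y = true ↔ y ∈ s) := by
  induction s using Finset.induction_on with
  | empty => simp
  | @insert a s ha ih =>
    intro y
    rw [Finset.sum_insert ha, testBit_add_disjoint _ _ _ ?_]
    · simp only [Nat.testBit_two_pow, Finset.mem_insert, Bool.or_eq_true, decide_eq_true_eq, ih]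
      aesop
    · intro z
      simp only [Nat.testBit_two_pow, decide_eq_true_eq, ih z, not_and]
      rintro rfl h2
      exact ha h2

lemma sum_ite_testBit_eq_self : ∀ K m, m < 2 ^ K →
    (∑ b ∈ Finset.range K, if m.testBit b then 2 ^ b else 0) = m := by
  intro K
  induction K with
  | zero => intro m h; simp; omega
  | succ K ih =>
    intro m h
    rw [Finset.sum_range_succ']
    have h1 : ∀ b, (if m.testBit (b + 1) then 2 ^ (b + 1) else 0)
        = 2 * (if (m / 2).testBit b then 2 ^ b else 0) := by
      intro b
      rw [Nat.testBit_succ]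
      split <;> ring
    have h' : m < 2 * 2 ^ K := by rw [pow_succ] at h; omega
    have h2 : m / 2 < 2 ^ K := by omega
    rw [Finset.sum_congr rfl (fun b _ => h1 b), ← Finset.mul_sum, ih (m / 2) h2,
      Nat.testBit_zero, pow_zero]
    rcases Nat.mod_two_eq_zero_or_one m with hm | hm <;> simp [hm] <;> omega

lemma sum_testBit_eq_self {K m : ℕ} (h : m < 2 ^ K) :
    ∑ b ∈ (Finset.range K).filter (fun b => m.testBit b), 2 ^ b = m := by
  rw [Finset.sum_filter]
  exact sum_ite_testBit_eq_self K m h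

lemma lucas_two_aux : ∀ (N a b : ℕ), a + b ≤ N →
    (Odd ((a + b).choose a) ↔ ∀ y, ¬(a.testBit y = true ∧ b.testBit y = true)) := by
  intro N
  induction N with
  | zero =>
    intro a b h
    obtain ⟨rfl, rfl⟩ : a = 0 ∧ b = 0 := by omega
    simp
  | succ N ih =>
    intro a b h
    by_cases h0 : a + b = 0
    · obtain ⟨rfl, rfl⟩ : a = 0 ∧ b = 0 := by omega
      simp
    have key := @Choose.choose_modEq_choose_mod_mul_choose_div_nat (a + b) a 2 ⟨Nat.prime_two⟩
    unfold Nat.ModEq at key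
    rw [Nat.odd_iff, key, ← Nat.odd_iff, Nat.odd_mul]
    have hsplit : (∀ y, ¬(a.testBit y = true ∧ b.testBit y = true)) ↔
        (¬(a.testBit 0 = true ∧ b.testBit 0 = true)) ∧
          (∀ y, ¬((a / 2).testBit y = true ∧ (b / 2).testBit y = true)) := by
      constructor
      · intro H
        exact ⟨H 0, fun y => by simpa [Nat.testBit_succ] using H (y + 1)⟩
      · rintro ⟨H0, H⟩ y
        cases y with
        | zero => exact H0
        | succ y => simpa [Nat.testBit_succ] using H y
    rw [hsplit]
    by_cases hab : a % 2 = 1 ∧ b % 2 = 1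
    · have h1 : (a + b) % 2 = 0 := by omega
      rw [h1, hab.1]
      simp [Nat.testBit_zero, hab.1, hab.2, Nat.choose_eq_zero_of_lt]
    · have h1 : ((a + b) % 2).choose (a % 2) = 1 := by
        rcases Nat.mod_two_eq_zero_or_one a with ha | ha <;>
          rcases Nat.mod_two_eq_zero_or_one b with hb | hb <;>
          · first
            | (exfalso; exact hab ⟨ha, hb⟩)
            | (have : (a + b) % 2 = a % 2 + b % 2 := by omega
               rw [this, ha, hb]
               rfl)
      have h2 : (a + b) / 2 = a / 2 + b / 2 := by omega
      rw [h1, h2, ih (a / 2) (b / 2) (by omega)]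
      have h3 : ¬(a.testBit 0 = true ∧ b.testBit 0 = true) := by
        simp only [Nat.testBit_zero, decide_eq_true_eq]
        exact hab
      constructor
      · rintro ⟨-, H⟩; exact ⟨h3, H⟩
      · rintro ⟨-, H⟩; exact ⟨odd_one, H⟩

lemma lucas_two (a b : ℕ) :
    Odd ((a + b).choose a) ↔ ∀ y, ¬(a.testBit y = true ∧ b.testBit y = true) :=
  lucas_two_aux (a + b) a b le_rfl

lemma multinomial_odd {α : Type*} [DecidableEq α] (s : Finset α) (f : α → ℕ) :
    ((Odd (Nat.multinomial s f) ↔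
        ∀ y, ((s.filter fun i => (f i).testBit y).card ≤ 1)) ∧
      ((∀ y, ((s.filter fun i => (f i).testBit y).card ≤ 1)) →
        ∀ y, ((∑ i ∈ s, f i).testBit y = true ↔ ∃ i ∈ s, (f i).testBit y = true))) := by
  induction s using Finset.induction_on with
  | empty => simp [Nat.multinomial_empty]
  | @insert a s ha ih =>
    obtain ⟨ih1, ih2⟩ := ih
    have hfilt : ∀ y, ((insert a s).filter fun i => (f i).testBit y) =
        (if (f a).testBit y then insert a (s.filter fun i => (f i).testBit y)
          else (s.filter fun i => (f i).testBit y)) := by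
      intro y
      split <;> rename_i hy <;> rw [Finset.filter_insert] <;> simp [hy]
    have hextract : (∀ y, (((insert a s).filter fun i => (f i).testBit y).card ≤ 1)) →
        ∀ y, ((s.filter fun i => (f i).testBit y).card ≤ 1) := by
      intro H y
      have := H y
      rw [hfilt y] at this
      split at this
      · rw [Finset.card_insert_of_notMem (by simp [ha])] at this; omega
      · exact this
    have hsum : ∀ (H : ∀ y, (((insert a s).filter fun i => (f i).testBit y).card ≤ 1)),
        (∀ y, ((∑ i ∈ insert a s, f i).testBit y
          = ((f a).testBit y || (∑ i ∈ s, f i).testBit y))) := by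
      intro H y
      have hcard := hextract H
      rw [Finset.sum_insert ha]
      refine testBit_add_disjoint y _ _ ?_
      intro z ⟨hz1, hz2⟩
      obtain ⟨i, hi, hbit⟩ := (ih2 hcard z).1 hz2
      have h4 := H z
      rw [hfilt z, if_pos hz1, Finset.card_insert_of_notMem (by simp [ha])] at h4
      have h5 : 0 < (s.filter fun i => (f i).testBit z).card :=
        Finset.card_pos.2 ⟨i, Finset.mem_filter.2 ⟨hi, hbit⟩⟩
      omega
    constructor
    · rw [Nat.multinomial_insert ha, Nat.odd_mul, lucas_two, ih1]
      constructor
      · rintro ⟨hd, hcard⟩ y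
        rw [hfilt y]
        split <;> rename_i hy
        · rw [Finset.card_insert_of_notMem (by simp [ha])]
          have : (s.filter fun i => (f i).testBit y).card = 0 := by
            rw [Finset.card_eq_zero, Finset.filter_eq_empty_iff]
            intro i hi hbit
            exact hd y ⟨hy, ((ih2 hcard) y).2 ⟨i, hi, hbit⟩⟩
          omega
        · exact hcard y
      · intro H
        have hcard := hextract H
        refine ⟨?_, hcard⟩
        rintro y ⟨hay, hsy⟩
        have hy := H y
        rw [hfilt y, if_pos hay, Finset.card_insert_of_notMem (by simp [ha])] at hy
        obtain ⟨i, hi, hbit⟩ := ((ih2 hcard) y).1 hsy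
        have h5 : 0 < (s.filter fun i => (f i).testBit y).card :=
          Finset.card_pos.2 ⟨i, Finset.mem_filter.2 ⟨hi, hbit⟩⟩
        omega
    · intro H y
      have hcard := hextract H
      rw [hsum H y]
      simp only [Bool.or_eq_true, ih2 hcard y, Finset.mem_insert]
      constructor
      · rintro (h | ⟨i, hi, hb⟩)
        · exact ⟨a, Or.inl rfl, h⟩
        · exact ⟨i, Or.inr hi, hb⟩
      · rintro ⟨i, (rfl | hi), hb⟩
        · exact Or.inl hb
        · exact Or.inr ⟨i, hi, hb⟩

lemma zmod2_add_self (k : ZMod 2) : k + k = 0 := by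
  have : (2 : ZMod 2) = 0 := by decide
  calc k + k = 2 * k := by ring
  _ = 0 := by rw [this, zero_mul]

lemma zmod2_cast_odd (m : ℕ) : (m : ZMod 2) = if Odd m then 1 else 0 := by
  rcases Nat.even_or_odd m with h | h
  · obtain ⟨k, rfl⟩ := h
    have h2 : ¬Odd (k + k) := by simp [Nat.odd_iff]; omega
    rw [if_neg h2]
    push_cast
    exact zmod2_add_self _
  · obtain ⟨k, rfl⟩ := h
    rw [if_pos (by exact ⟨k, rfl⟩)]
    push_cast
    have : (k : ZMod 2) * 2 = 0 := by
      have h2 : (2 : ZMod 2) = 0 := by decide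
      rw [h2, mul_zero]
    calc (2 : ZMod 2) * k + 1 = k * 2 + 1 := by ring
    _ = 1 := by rw [this, zero_add]

lemma zmod2_cast_eq_one_iff (m : ℕ) : (m : ZMod 2) = 1 ↔ Odd m := by
  rw [zmod2_cast_odd]
  split <;> rename_i h
  · simp [h]
  · simp only [h, iff_false]
    decide

lemma zmod2_one_add (d : ℕ) : ((1 : ZMod 2) + d) = if Even d then 1 else 0 := by
  rw [zmod2_cast_odd]
  rcases Nat.even_or_odd d with h | h
  · simp [h, Nat.not_odd_iff_even.2 h]
  · rw [if_neg (Nat.not_even_iff_odd.2 h), if_pos h]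
    decide

lemma sum_powerset_union {α M : Type*} [DecidableEq α] [AddCommMonoid M] :
    ∀ (s t : Finset α), Disjoint s t → ∀ (f : Finset α → M),
    ∑ A ∈ (s ∪ t).powerset, f A =
      ∑ a ∈ s.powerset, ∑ b ∈ t.powerset, f (a ∪ b) := by
  intro s
  induction s using Finset.induction_on with
  | empty => intro t _ f; simp
  | @insert x s hx ih =>
    intro t hdisj f
    have hxt : x ∉ t := Finset.disjoint_left.1 hdisj (Finset.mem_insert_self x s)
    have hst : Disjoint s t := (Finset.disjoint_insert_left (a := x)).1 hdisj |>.2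
    have hxst : x ∉ s ∪ t := by simp [hx, hxt]
    rw [Finset.insert_union, Finset.sum_powerset_insert hxst, ih t hst f,
      Finset.sum_powerset_insert hx]
    congr 1
    rw [ih t hst (fun A => f (insert x A))]
    refine Finset.sum_congr rfl fun a ha => Finset.sum_congr rfl fun b hb => ?_
    rw [Finset.insert_union]

lemma sum_card_le_one {α : Type*} [DecidableEq α] (s : Finset α) :
    (∑ A ∈ s.powerset, if A.card ≤ 1 then (1 : ZMod 2) else 0) = 1 + s.card := by
  induction s using Finset.induction_on with
  | empty =>
    rw [Finset.powerset_empty, Finset.sum_singleton]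
    simp
  | @insert a s ha ih =>
    rw [Finset.sum_powerset_insert ha, ih]
    have h1 : ∀ A ∈ s.powerset, (if (insert a A).card ≤ 1 then (1 : ZMod 2) else 0)
        = if A = ∅ then 1 else 0 := by
      intro A hA
      have haA : a ∉ A := fun h => ha (Finset.mem_powerset.1 hA h)
      rw [Finset.card_insert_of_notMem haA]
      by_cases hA0 : A = ∅
      · simp [hA0]
      · have : 0 < A.card := Finset.card_pos.2 (Finset.nonempty_of_ne_empty hA0)
        rw [if_neg (by omega), if_neg hA0]
    rw [Finset.sum_congr rfl h1, Finset.sum_ite_eq' s.powerset ∅ (fun _ => (1 : ZMod 2)),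
      if_pos (by simp), Finset.card_insert_of_notMem ha]
    push_cast
    ring

lemma coeff_S_pow {n : ℕ} (N : ℕ) (r : Fin n →₀ ℕ) :
    coeff r ((∑ j, X j : MvPolynomial (Fin n) (ZMod 2)) ^ N) =
      if (∑ i, r i) = N then ((Nat.multinomial Finset.univ r : ℕ) : ZMod 2) else 0 := by
  rw [Finset.sum_pow_eq_sum_piAntidiag, coeff_sum]
  have hterm : ∀ k : Fin n → ℕ,
      coeff r ((Nat.multinomial Finset.univ k : MvPolynomial (Fin n) (ZMod 2))
        * ∏ i, X i ^ k i) =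
      ((Nat.multinomial Finset.univ k : ℕ) : ZMod 2) * (if k = ⇑r then 1 else 0) := by
    intro k
    set u : Fin n →₀ ℕ := Finsupp.equivFunOnFinite.symm k with hu
    have hku : ∀ i, k i = u i := fun i => rfl
    have hprod : (∏ i, (X i : MvPolynomial (Fin n) (ZMod 2)) ^ k i) = monomial u 1 := by
      rw [← prod_X_pow_eq_monomial]
      refine (Finset.prod_subset (Finset.subset_univ u.support) ?_).symm
      intro i _ hi
      rw [hku i, Finsupp.notMem_support_iff.1 hi, pow_zero]
    have hcast : ((Nat.multinomial Finset.univ k : ℕ) : MvPolynomial (Fin n) (ZMod 2))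
        = C ((Nat.multinomial Finset.univ k : ℕ) : ZMod 2) := by
      push_cast
      rfl
    rw [hprod, hcast, coeff_C_mul, coeff_monomial]
    congr 1
    have : u = r ↔ k = ⇑r := by
      rw [hu, Equiv.symm_apply_eq]
      exact ⟨fun h => by rw [h]; rfl, fun h => by ext i; exact congrFun h i⟩
    by_cases h : u = r
    · rw [if_pos h, if_pos (this.1 h)]
    · rw [if_neg h, if_neg (fun hh => h (this.2 hh))]
  rw [Finset.sum_congr rfl (fun k _ => hterm k)]
  simp only [mul_ite, mul_one, mul_zero]
  rw [Finset.sum_ite_eq' (Finset.piAntidiag Finset.univ N) (⇑r)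
    (fun k => ((Nat.multinomial Finset.univ k : ℕ) : ZMod 2))]
  by_cases hmem : (⇑r : Fin n → ℕ) ∈ Finset.piAntidiag Finset.univ N
  · rw [if_pos hmem, if_pos]
    rw [Finset.mem_piAntidiag] at hmem
    exact hmem.1
  · rw [if_neg hmem, if_neg]
    rw [Finset.mem_piAntidiag] at hmem
    intro h
    exact hmem ⟨h, fun i _ => Finset.mem_univ i⟩

lemma count_inj_levels {n : ℕ} (L : Finset ℕ) :
    ∀ E : Finset (Fin n × ℕ), E ⊆ Finset.univ ×ˢ L →
    (∑ A ∈ E.powerset,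
        if (∀ y, ((Finset.univ.filter fun i => ((i, y) ∈ A)).card ≤ 1))
          then (1 : ZMod 2) else 0) =
      ∏ b ∈ L, (1 + ((E.filter fun p => p.2 = b).card : ZMod 2)) := by
  induction L using Finset.induction_on with
  | empty =>
    intro E hE
    have hE0 : E = ∅ := by
      rw [← Finset.subset_empty]
      intro p hp
      simpa using hE hp
    subst hE0
    rw [Finset.powerset_empty, Finset.sum_singleton, Finset.prod_empty, if_pos]
    intro y
    simp
  | @insert b0 L hb0 ih =>
    intro E hE
    set E1 := E.filter (fun p => p.2 = b0) with hE1def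
    set E0 := E.filter (fun p => ¬(p.2 = b0)) with hE0def
    have hA1mem : ∀ {A1 : Finset (Fin n × ℕ)}, A1 ∈ E0.powerset →
        ∀ {i y}, (i, y) ∈ A1 → y ≠ b0 := by
      intro A1 hA1 i y hmem
      have := Finset.mem_powerset.1 hA1 hmem
      rw [hE0def, Finset.mem_filter] at this
      exact this.2
    have hA2mem : ∀ {A2 : Finset (Fin n × ℕ)}, A2 ∈ E1.powerset →
        ∀ {p : Fin n × ℕ}, p ∈ A2 → p.2 = b0 := by
      intro A2 hA2 p hmem
      have := Finset.mem_powerset.1 hA2 hmem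
      rw [hE1def, Finset.mem_filter] at this
      exact this.2
    have hEsplit : E0 ∪ E1 = E := by
      rw [hE0def, hE1def, Finset.union_comm, Finset.filter_union_filter_not_eq]
    have hdisj : Disjoint E0 E1 := by
      rw [hE0def, hE1def, disjoint_comm]
      exact Finset.disjoint_filter_filter_not E E _
    rw [← hEsplit, sum_powerset_union E0 E1 hdisj]
    have hkey : ∀ A1 ∈ E0.powerset, ∀ A2 ∈ E1.powerset,
        (if (∀ y, ((Finset.univ.filter fun i => ((i, y) ∈ A1 ∪ A2)).card ≤ 1))
          then (1 : ZMod 2) else 0)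
        = (if (∀ y, ((Finset.univ.filter fun i => ((i, y) ∈ A1)).card ≤ 1))
            then (1 : ZMod 2) else 0) * (if A2.card ≤ 1 then 1 else 0) := by
      intro A1 hA1 A2 hA2
      have hcard2 : (Finset.univ.filter fun i => ((i, b0) ∈ A2)).card = A2.card := by
        refine Finset.card_bij (fun i _ => (i, b0)) ?_ ?_ ?_
        · intro i hi
          exact (Finset.mem_filter.1 hi).2
        · intro i1 h1 i2 h2 h
          exact congrArg Prod.fst h
        · intro p hp
          have hp2 := hA2mem hA2 hp
          have hpe : (p.1, b0) = p := Prod.ext rfl hp2.symm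
          exact ⟨p.1, Finset.mem_filter.2 ⟨Finset.mem_univ _, by rwa [hpe]⟩, hpe⟩
      have hfy : ∀ y, y ≠ b0 → (Finset.univ.filter fun i => ((i, y) ∈ A1 ∪ A2))
          = (Finset.univ.filter fun i => ((i, y) ∈ A1)) := by
        intro y hy
        refine Finset.filter_congr fun i _ => ?_
        rw [Finset.mem_union]
        constructor
        · rintro (h | h)
          · exact h
          · exact absurd (hA2mem hA2 h) hy
        · exact Or.inl
      have hfb0 : (Finset.univ.filter fun i => ((i, b0) ∈ A1 ∪ A2))
          = (Finset.univ.filter fun i => ((i, b0) ∈ A2)) := by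
        refine Finset.filter_congr fun i _ => ?_
        rw [Finset.mem_union]
        constructor
        · rintro (h | h)
          · exact absurd rfl (hA1mem hA1 h)
          · exact h
        · exact Or.inr
      have hiff : (∀ y, ((Finset.univ.filter fun i => ((i, y) ∈ A1 ∪ A2)).card ≤ 1))
          ↔ ((∀ y, ((Finset.univ.filter fun i => ((i, y) ∈ A1)).card ≤ 1)) ∧ A2.card ≤ 1) := by
        constructor
        · intro H
          refine ⟨fun y => ?_, ?_⟩
          · by_cases hy : y = b0
            · subst hy
              have : (Finset.univ.filter fun i => ((i, y) ∈ A1)) = ∅ := by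
                rw [Finset.filter_eq_empty_iff]
                intro i _ hmem
                exact hA1mem hA1 hmem rfl
              rw [this]
              simp
            · rw [← hfy y hy]
              exact H y
          · rw [← hcard2, ← hfb0]
            exact H b0
        · rintro ⟨H1, H2⟩ y
          by_cases hy : y = b0
          · subst hy
            rw [hfb0, hcard2]
            exact H2
          · rw [hfy y hy]
            exact H1 y
      rw [if_congr hiff rfl rfl]
      by_cases hP : (∀ y, ((Finset.univ.filter fun i => ((i, y) ∈ A1)).card ≤ 1)) <;>
        by_cases hQ : A2.card ≤ 1 <;>
        simp [hP, hQ]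
    rw [Finset.sum_congr rfl (fun A1 hA1 => Finset.sum_congr rfl (fun A2 hA2 =>
      hkey A1 hA1 A2 hA2))]
    have hinner : ∀ A1 ∈ E0.powerset,
        (∑ A2 ∈ E1.powerset,
          (if (∀ y, ((Finset.univ.filter fun i => ((i, y) ∈ A1)).card ≤ 1))
            then (1 : ZMod 2) else 0) * (if A2.card ≤ 1 then 1 else 0))
        = (if (∀ y, ((Finset.univ.filter fun i => ((i, y) ∈ A1)).card ≤ 1))
            then (1 : ZMod 2) else 0) * (1 + E1.card) := by
      intro A1 _
      rw [← Finset.mul_sum, sum_card_le_one E1]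
    rw [Finset.sum_congr rfl hinner, ← Finset.sum_mul]
    have hE0sub : E0 ⊆ Finset.univ ×ˢ L := by
      intro p hp
      rw [hE0def, Finset.mem_filter] at hp
      have := hE hp.1
      rw [Finset.mem_product, Finset.mem_insert] at this
      rw [Finset.mem_product]
      refine ⟨this.1, ?_⟩
      rcases this.2 with h | h
      · exact absurd h hp.2
      · exact h
    rw [ih E0 hE0sub, Finset.prod_insert hb0]
    have hfilt_eq : ∀ b ∈ L, (E0.filter fun p => p.2 = b) = (E.filter fun p => p.2 = b) := by
      intro b hbL
      rw [hE0def, Finset.filter_filter]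
      refine Finset.filter_congr fun p _ => ?_
      constructor
      · rintro ⟨_, h⟩; exact h
      · intro h
        refine ⟨?_, h⟩
        rw [h]
        rintro rfl
        exact hb0 hbL
    rw [Finset.prod_congr rfl (fun b hb => by rw [hfilt_eq b hb])]
    rw [hEsplit, hE1def]
    ring

lemma prod_X_monomial {σ τ : Type*} (E : Finset τ) (g : τ → σ) (e : τ → ℕ) :
    (∏ p ∈ E, (X (g p) : MvPolynomial σ (ZMod 2)) ^ e p) =
      monomial (∑ p ∈ E, Finsupp.single (g p) (e p)) 1 := by
  induction E using Finset.induction_on with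
  | empty => simp
  | @insert p E hp ih =>
    rw [Finset.prod_insert hp, Finset.sum_insert hp, ih, X_pow_eq_monomial, monomial_mul, one_mul]


end AFL

namespace AFL

variable {n : ℕ} (t : Fin n → ℕ)

lemma step1 : ((aflCount n t : ZMod 2)) =
    coeff (Finsupp.equivFunOnFinite.symm t)
      (∏ x : (Σ i : Fin n, Fin (t i)),
        (∑ j ∈ Finset.univ.erase x.1, (X j : MvPolynomial (Fin n) (ZMod 2)))) := by
  rw [Finset.prod_univ_sum, coeff_sum]
  have hterm : ∀ w : (Σ i : Fin n, Fin (t i)) → Fin n,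
      coeff (Finsupp.equivFunOnFinite.symm t) (∏ x, (X (w x) : MvPolynomial (Fin n) (ZMod 2)))
      = if (∑ x, Finsupp.single (w x) 1) = Finsupp.equivFunOnFinite.symm t
          then (1 : ZMod 2) else 0 := by
    intro w
    have := prod_X_monomial (Finset.univ : Finset (Σ i : Fin n, Fin (t i))) w (fun _ => 1)
    simp only [pow_one] at this
    rw [this, coeff_monomial]
  rw [Finset.sum_congr rfl (fun w _ => hterm w), Finset.sum_boole]
  have hcount : ∀ w : (Σ i : Fin n, Fin (t i)) → Fin n,
      ((∑ x, Finsupp.single (w x) 1) = Finsupp.equivFunOnFinite.symm t)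
        ↔ (∀ j, (Finset.univ.filter fun x => w x = j).card = t j) := by
    intro w
    rw [Finsupp.ext_iff]
    apply forall_congr'
    intro j
    rw [Finsupp.finset_sum_apply]
    simp only [Finsupp.single_apply]
    have hs : (∑ x : (Σ i : Fin n, Fin (t i)), if w x = j then (1 : ℕ) else 0)
        = (Finset.univ.filter fun x => w x = j).card := by
      rw [Finset.sum_boole]
      simp
    rw [hs]
    have ht : (Finsupp.equivFunOnFinite.symm t) j = t j := rfl
    rw [ht]
  congr 1
  rw [aflCount, Fintype.card_subtype]
  apply congrArg
  ext w
  simp only [Finset.mem_filter, Fintype.mem_piFinset, Finset.mem_erase, Finset.mem_univ,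
    and_true, true_and, hcount w]
  tauto

lemma X_add_self (i : Fin n) : (X i : MvPolynomial (Fin n) (ZMod 2)) + X i = 0 := by
  rw [← two_smul (ZMod 2) (X i : MvPolynomial (Fin n) (ZMod 2))]
  have : (2 : ZMod 2) = 0 := by decide
  rw [this, zero_smul]

lemma erase_sum_eq (i : Fin n) :
    (∑ j ∈ Finset.univ.erase i, (X j : MvPolynomial (Fin n) (ZMod 2)))
      = (∑ j, X j) + X i := by
  rw [← Finset.sum_erase_add Finset.univ _ (Finset.mem_univ i), add_assoc,
    X_add_self, add_zero]

lemma step2 : (∏ x : (Σ i : Fin n, Fin (t i)), (∑ j ∈ Finset.univ.erase x.1,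
      (X j : MvPolynomial (Fin n) (ZMod 2))))
    = ∏ i, ((∑ j, X j) + X i) ^ (t i) := by
  rw [Finset.prod_congr rfl (fun x _ => erase_sum_eq x.1), ← Finset.univ_sigma_univ,
    Finset.prod_sigma]
  refine Finset.prod_congr rfl fun i _ => ?_
  show (∏ _s : Fin (t i), ((∑ j, (X j : MvPolynomial (Fin n) (ZMod 2))) + X i)) = _
  rw [Finset.prod_const, Finset.card_univ, Fintype.card_fin]

lemma step3 (K : ℕ) (htK : ∀ i, t i < 2 ^ K) :
    (∏ i, (((∑ j, X j) + X i : MvPolynomial (Fin n) (ZMod 2)) ^ (t i)))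
    = ∏ p ∈ (Finset.univ ×ˢ Finset.range K).filter (fun p => (t p.1).testBit p.2),
        ((∑ j, X j) ^ (2 ^ p.2) + (X p.1) ^ (2 ^ p.2)) := by
  rw [Finset.prod_filter, Finset.prod_product]
  refine Finset.prod_congr rfl fun i _ => ?_
  conv_lhs => rw [← sum_testBit_eq_self (htK i)]
  rw [← Finset.prod_pow_eq_pow_sum, Finset.prod_filter]
  refine Finset.prod_congr rfl fun b _ => ?_
  split
  · exact add_pow_char_pow _ _ 2 b
  · rfl

lemma sum_single_apply (A : Finset (Fin n × ℕ)) (j : Fin n) :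
    (∑ p ∈ A, Finsupp.single p.1 (2 ^ p.2)) j
      = ∑ b ∈ (A.filter fun p => p.1 = j).image Prod.snd, 2 ^ b := by
  rw [Finsupp.finset_sum_apply, Finset.sum_image ?inj]
  case inj =>
    rintro p hp q hq h
    exact Prod.ext ((Finset.mem_filter.1 hp).2.trans ((Finset.mem_filter.1 hq).2).symm) h
  rw [← Finset.sum_filter_add_sum_filter_not A (fun p => p.1 = j)]
  have h0 : ∀ p ∈ A.filter (fun p => ¬p.1 = j), (Finsupp.single p.1 (2 ^ p.2)) j = 0 := by
    intro p hp
    rw [Finsupp.single_apply, if_neg (Finset.mem_filter.1 hp).2]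
  have h1 : ∀ p ∈ A.filter (fun p => p.1 = j), (Finsupp.single p.1 (2 ^ p.2)) j = 2 ^ p.2 := by
    intro p hp
    rw [Finsupp.single_apply, if_pos (Finset.mem_filter.1 hp).2]
  rw [Finset.sum_congr rfl h0, Finset.sum_congr rfl h1, Finset.sum_const_zero, add_zero]

lemma testBit_sum_single (A : Finset (Fin n × ℕ)) (j : Fin n) (y : ℕ) :
    (((∑ p ∈ A, Finsupp.single p.1 (2 ^ p.2)) j).testBit y = true) ↔ (j, y) ∈ A := by
  rw [sum_single_apply, sum_two_pow_testBit, Finset.mem_image]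
  constructor
  · rintro ⟨p, hp, rfl⟩
    obtain ⟨hpA, hp1⟩ := Finset.mem_filter.1 hp
    have hpe : (j, p.2) = p := Prod.ext hp1.symm rfl
    rwa [hpe]
  · intro h
    exact ⟨(j, y), Finset.mem_filter.2 ⟨h, rfl⟩, rfl⟩

lemma sum_single_total (A : Finset (Fin n × ℕ)) :
    (∑ i, (∑ p ∈ A, Finsupp.single p.1 (2 ^ p.2)) i) = ∑ p ∈ A, 2 ^ p.2 := by
  have h : ∀ i, (∑ p ∈ A, Finsupp.single p.1 (2 ^ p.2)) i
      = ∑ p ∈ A, (Finsupp.single p.1 (2 ^ p.2)) i := fun i => Finsupp.finset_sum_apply _ _ _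
  rw [Finset.sum_congr rfl (fun i _ => h i), Finset.sum_comm]
  refine Finset.sum_congr rfl fun p _ => ?_
  simp only [Finsupp.single_apply]
  rw [Finset.sum_ite_eq Finset.univ p.1 (fun _ => 2 ^ p.2), if_pos (Finset.mem_univ _)]

lemma TD (K : ℕ) (htK : ∀ i, t i < 2 ^ K) :
    Finsupp.equivFunOnFinite.symm t
      = ∑ p ∈ (Finset.univ ×ˢ Finset.range K).filter (fun p => (t p.1).testBit p.2),
          Finsupp.single p.1 (2 ^ p.2) := by
  ext j
  rw [sum_single_apply]
  have himg : (((Finset.univ ×ˢ Finset.range K).filter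
        (fun p => (t p.1).testBit p.2)).filter fun p => p.1 = j).image Prod.snd
      = (Finset.range K).filter (fun b => (t j).testBit b) := by
    ext b
    simp only [Finset.mem_image, Finset.mem_filter, Finset.mem_product, Finset.mem_univ,
      true_and, Finset.mem_range]
    constructor
    · rintro ⟨p, ⟨⟨hpK, hpt⟩, hp1⟩, rfl⟩
      rw [hp1] at hpt
      exact ⟨hpK, hpt⟩
    · rintro ⟨hbK, hbt⟩
      exact ⟨(j, b), ⟨⟨hbK, hbt⟩, rfl⟩, rfl⟩
  rw [himg, sum_testBit_eq_self (htK j)]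
  rfl

lemma Dfilter_card (K : ℕ) (b : ℕ) :
    (((Finset.univ ×ˢ Finset.range K).filter (fun p => (t p.1).testBit p.2)).filter
        fun p => p.2 = b).card
      = if b ∈ Finset.range K then (Finset.univ.filter fun i => (t i).testBit b).card else 0 := by
  split <;> rename_i hb
  · rw [show (((Finset.univ ×ˢ Finset.range K).filter (fun p => (t p.1).testBit p.2)).filter
        fun p => p.2 = b) = (Finset.univ.filter fun i => (t i).testBit b).image (fun i => (i, b))
        from ?_]
    · exact Finset.card_image_of_injective _ (fun i1 i2 h => congrArg Prod.fst h)
    ext p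
    simp only [Finset.mem_filter, Finset.mem_product, Finset.mem_univ, true_and,
      Finset.mem_range, Finset.mem_image]
    constructor
    · rintro ⟨⟨hpK, hpt⟩, rfl⟩
      exact ⟨p.1, hpt, Prod.ext rfl rfl⟩
    · rintro ⟨i, hit, rfl⟩
      exact ⟨⟨Finset.mem_range.1 hb, hit⟩, rfl⟩
  · rw [Finset.card_eq_zero, Finset.filter_eq_empty_iff]
    intro p hp hpb
    rw [Finset.mem_filter, Finset.mem_product, Finset.mem_range] at hp
    rw [hpb] at hp
    exact hb (Finset.mem_range.2 hp.1.2)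

lemma step4 (K : ℕ) (htK : ∀ i, t i < 2 ^ K) :
    coeff (Finsupp.equivFunOnFinite.symm t)
      (∏ p ∈ (Finset.univ ×ˢ Finset.range K).filter (fun p => (t p.1).testBit p.2),
        ((∑ j, X j : MvPolynomial (Fin n) (ZMod 2)) ^ (2 ^ p.2) + (X p.1) ^ (2 ^ p.2)))
    = ∏ b ∈ Finset.range K,
        (1 + ((Finset.univ.filter fun i => (t i).testBit b).card : ZMod 2)) := by
  set D := (Finset.univ ×ˢ Finset.range K).filter (fun p => (t p.1).testBit p.2) with hD
  rw [Finset.prod_add, coeff_sum]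
  have hA : ∀ A ∈ D.powerset,
      coeff (Finsupp.equivFunOnFinite.symm t)
        ((∏ p ∈ A, (∑ j, X j : MvPolynomial (Fin n) (ZMod 2)) ^ (2 ^ p.2)) *
          ∏ p ∈ D \ A, (X p.1) ^ (2 ^ p.2))
      = if (∀ y, ((Finset.univ.filter fun i => ((i, y) ∈ A)).card ≤ 1))
          then (1 : ZMod 2) else 0 := by
    intro A hA
    have hAD : A ⊆ D := Finset.mem_powerset.1 hA
    set rA : Fin n →₀ ℕ := ∑ p ∈ A, Finsupp.single p.1 (2 ^ p.2) with hrA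
    set u : Fin n →₀ ℕ := ∑ p ∈ D \ A, Finsupp.single p.1 (2 ^ p.2) with hu
    have hsplit : rA + u = Finsupp.equivFunOnFinite.symm t := by
      rw [hrA, hu, add_comm, Finset.sum_sdiff hAD, TD t K htK]
    rw [prod_X_monomial (D \ A) Prod.fst (fun p => 2 ^ p.2), coeff_mul_monomial']
    rw [if_pos (by rw [← hsplit]; exact le_add_self)]
    rw [show Finsupp.equivFunOnFinite.symm t - u = rA from by rw [← hsplit, add_tsub_cancel_right]]
    rw [mul_one, Finset.prod_pow_eq_pow_sum, coeff_S_pow,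
      if_pos (sum_single_total A), zmod2_cast_odd]
    refine if_congr ?_ rfl rfl
    rw [(multinomial_odd Finset.univ (⇑rA)).1]
    refine forall_congr' fun y => ?_
    have : (Finset.univ.filter fun i => ((rA i).testBit y))
        = (Finset.univ.filter fun i => ((i, y) ∈ A)) := by
      refine Finset.filter_congr fun i _ => ?_
      rw [hrA]
      constructor
      · intro h
        exact (testBit_sum_single A i y).1 h
      · intro h
        exact (testBit_sum_single A i y).2 h
    rw [this]
  rw [Finset.sum_congr rfl hA, count_inj_levels (Finset.range K) D ?hsub]
  case hsub => exact Finset.filter_subset _ _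
  refine Finset.prod_congr rfl fun b hb => ?_
  rw [Dfilter_card t K b, if_pos hb]

end AFL

theorem afl_odd_iff (n : ℕ) (t : Fin n → ℕ) :
    Odd (aflCount n t) ↔
      ∀ x : ℕ, Even ((Finset.univ.filter fun i => (t i).testBit x).card) := by
  set K := Finset.univ.sup t + 1 with hK
  have htK : ∀ i, t i < 2 ^ K :=
    fun i => lt_of_le_of_lt (Finset.le_sup (Finset.mem_univ i))
      (lt_of_lt_of_le Nat.lt_two_pow_self (Nat.pow_le_pow_right (by norm_num) (Nat.le_succ _)))
  have hmain := AFL.step1 t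
  rw [AFL.step2, AFL.step3 t K htK, AFL.step4 t K htK] at hmain
  rw [← AFL.zmod2_cast_eq_one_iff, hmain,
    Finset.prod_congr rfl (fun b _ => AFL.zmod2_one_add _), Finset.prod_boole]
  split <;> rename_i h
  · constructor
    · intro _ x
      by_cases hx : x < K
      · exact h x (Finset.mem_range.2 hx)
      · have hempty : (Finset.univ.filter fun i => (t i).testBit x) = ∅ := by
          rw [Finset.filter_eq_empty_iff]
          intro i _
          rw [Nat.testBit_eq_false_of_lt
            (lt_of_lt_of_le (htK i) (Nat.pow_le_pow_right (by norm_num) (by omega)))]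
          simp
        rw [hempty]
        simp
    · intro _
      rfl
  · constructor
    · intro h1
      exact absurd h1 (by decide)
    · intro hall
      exact absurd (fun b _ => hall b) h
end
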